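/- arXiv:2404.16791 — 7 statements merged into one kernel-verified Lean document; each statement's English description precedes it below -/
import Mathlib

section
/- If A is a matrix in U(R_min^max, C_min^max) all of whose entries are 0 or 1, then A is an extreme point of U(R_min^max, C_min^max); i.e., if A = (1/2)(E + F) with E, F in U(R_min^max, C_min^max), then E = F = A. -/
/-- The transportation polytope `U(R_min^max, C_min^max)`: n×m real matrices with entries
in `[0,1]`, row sums in `[r i, R i]` and column sums in `[c j, C j]`. -/
def transportU (n m : ℕ) (r R : Fin n → ℕ) (c C : Fin m → ℕ) :
    Set (Matrix (Fin n) (Fin m) ℝ) :=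
  {A | (∀ i j, 0 ≤ A i j ∧ A i j ≤ 1) ∧
       (∀ i, (r i : ℝ) ≤ ∑ j, A i j ∧ ∑ j, A i j ≤ (R i : ℝ)) ∧
       (∀ j, (c j : ℝ) ≤ ∑ i, A i j ∧ ∑ i, A i j ≤ (C j : ℝ))}

theorem zeroOne_extreme_transportU (n m : ℕ) (hn : 0 < n) (hm : 0 < m)
    (r R : Fin n → ℕ) (c C : Fin m → ℕ)
    (hrR : ∀ i, r i ≤ R i) (hcC : ∀ j, c j ≤ C j)
    (A : Matrix (Fin n) (Fin m) ℝ) (hA : A ∈ transportU n m r R c C)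
    (h01 : ∀ i j, A i j = 0 ∨ A i j = 1)
    (E F : Matrix (Fin n) (Fin m) ℝ)
    (hE : E ∈ transportU n m r R c C) (hF : F ∈ transportU n m r R c C)
    (hmid : A = (1 / 2 : ℝ) • (E + F)) :
    E = A ∧ F = A := by
  obtain ⟨hEb, -, -⟩ := hE
  obtain ⟨hFb, -, -⟩ := hF
  have key : ∀ i j, E i j = A i j ∧ F i j = A i j := by
    intro i j
    have hm' : A i j = (1 / 2 : ℝ) * (E i j + F i j) := by
      rw [hmid]; simp [Matrix.add_apply]
    obtain ⟨hE0, hE1⟩ := hEb i j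
    obtain ⟨hF0, hF1⟩ := hFb i j
    rcases h01 i j with h | h <;> rw [h] at hm' ⊢ <;> constructor <;> linarith
  constructor <;> ext i j
  · exact (key i j).1
  · exact (key i j).2
end

section
/- If A is a matrix in U^k(R_min^max, C_min^max) all of whose entries are 0 or 1, then A is an extreme point of U^k(R_min^max, C_min^max). -/
theorem zeroOne_extreme_transportUk (n m k : ℕ) (hn : 0 < n) (hm : 0 < m) (hk : 0 < k)
    (r R : Fin n → ℕ) (c C : Fin m → ℕ)
    (hrR : ∀ i, r i ≤ R i) (hcC : ∀ j, c j ≤ C j)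
    (A : Matrix (Fin n) (Fin m) ℝ)
    (hA : A ∈ {B ∈ transportU n m r R c C | ∑ i, ∑ j, B i j = (k : ℝ)})
    (h01 : ∀ i j, A i j = 0 ∨ A i j = 1)
    (E F : Matrix (Fin n) (Fin m) ℝ)
    (hE : E ∈ {B ∈ transportU n m r R c C | ∑ i, ∑ j, B i j = (k : ℝ)})
    (hF : F ∈ {B ∈ transportU n m r R c C | ∑ i, ∑ j, B i j = (k : ℝ)})
    (hmid : A = (1 / 2 : ℝ) • (E + F)) :
    E = A ∧ F = A := by
  obtain ⟨⟨hE01, -, -⟩, -⟩ := hE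
  obtain ⟨⟨hF01, -, -⟩, -⟩ := hF
  have key : ∀ i j, E i j = A i j ∧ F i j = A i j := by
    intro i j
    have hmij : A i j = (1 / 2 : ℝ) * (E i j + F i j) := by
      rw [hmid]; simp [Matrix.smul_apply, Matrix.add_apply]
    obtain ⟨hE0, hE1⟩ := hE01 i j
    obtain ⟨hF0, hF1⟩ := hF01 i j
    rcases h01 i j with h | h <;> rw [h] at hmij ⊢ <;> constructor <;> linarith
  constructor <;> ext i j
  · exact (key i j).1
  · exact (key i j).2
end

section
/- Every extreme point of U(R_min^max, C_min^max) is a 0-1 matrix, i.e., belongs to P(R_min^max, C_min^max). -/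
open Finset

/-- helper: positive function on a fintype admits a uniform positive lower bound -/
lemma aux_exists_pos_le {α : Type*} [Fintype α] (g : α → ℝ) (hg : ∀ a, 0 < g a) :
    ∃ ε : ℝ, 0 < ε ∧ ∀ a, ε ≤ g a := by
  cases isEmpty_or_nonempty α with
  | inl h => exact ⟨1, one_pos, fun a => (h.false a).elim⟩
  | inr h =>
    refine ⟨Finset.univ.inf' Finset.univ_nonempty g, ?_, fun a => Finset.inf'_le g (Finset.mem_univ a)⟩
    rw [Finset.lt_inf'_iff]
    exact fun b _ => hg b

/-- helper: sum of 0/1 valued function is a natural number cast -/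
lemma aux_sum_zero_one {ι : Type*} (s : Finset ι) (f : ι → ℝ)
    (h : ∀ j ∈ s, f j = 0 ∨ f j = 1) :
    ∃ k : ℕ, ∑ j ∈ s, f j = (k : ℝ) := by
  refine ⟨(s.filter (fun j => f j = 1)).card, ?_⟩
  rw [Finset.card_filter]
  push_cast
  refine Finset.sum_congr rfl fun j hj => ?_
  rcases h j hj with h0 | h1
  · have : ¬ f j = 1 := by rw [h0]; norm_num
    simp [h0, this]
  · simp [h1]

/-- helper: a row with integer sum containing one fractional entry contains another -/
lemma aux_frac_pair {ι : Type*} [Fintype ι] [DecidableEq ι] (f : ι → ℝ)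
    (h01 : ∀ j, 0 ≤ f j ∧ f j ≤ 1) (z : ℤ) (hz : ∑ j, f j = (z : ℝ))
    (j₀ : ι) (h0 : f j₀ ≠ 0) (h1 : f j₀ ≠ 1) :
    ∃ j₁, j₁ ≠ j₀ ∧ f j₁ ≠ 0 ∧ f j₁ ≠ 1 := by
  by_contra hcon
  push_neg at hcon
  obtain ⟨k, hk⟩ := aux_sum_zero_one (Finset.univ.erase j₀) f (by
    intro j hj
    have hj' := Finset.ne_of_mem_erase hj
    by_cases hfj : f j = 0
    · exact Or.inl hfj
    · exact Or.inr (hcon j hj' hfj))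
  have hsum : f j₀ + ∑ j ∈ Finset.univ.erase j₀, f j = ∑ j, f j :=
    Finset.add_sum_erase _ f (Finset.mem_univ j₀)
  have hfj₀ : f j₀ = ((z - k : ℤ) : ℝ) := by push_cast; rw [hk] at hsum; linarith [hsum, hz]
  have hpos : 0 < f j₀ := lt_of_le_of_ne (h01 j₀).1 (Ne.symm h0)
  have hlt : f j₀ < 1 := lt_of_le_of_ne (h01 j₀).2 h1
  rw [hfj₀] at hpos hlt
  have : (0:ℤ) < z - k := by exact_mod_cast hpos
  have : (z - k : ℤ) < 1 := by exact_mod_cast hlt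
  omega

lemma aux_pert_bound {lo a hi d ε : ℝ} (h1 : lo ≤ a) (h2 : a ≤ hi) (hε : 0 < ε)
    (hg : ε ≤ (if d = 0 then 1 else min ((a - lo) / |d|) ((hi - a) / |d|))) :
    lo ≤ a + ε * d ∧ a + ε * d ≤ hi ∧ lo ≤ a - ε * d ∧ a - ε * d ≤ hi := by
  by_cases hd : d = 0
  · subst hd; simp [h1, h2]
  · rw [if_neg hd] at hg
    have habs : 0 < |d| := abs_pos.2 hd
    have hle := le_min_iff.mp hg
    have h3 : ε * |d| ≤ a - lo := (le_div_iff₀ habs).mp hle.1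
    have h4 : ε * |d| ≤ hi - a := (le_div_iff₀ habs).mp hle.2
    have h5 : |ε * d| = ε * |d| := by rw [abs_mul, abs_of_pos hε]
    have h6 := le_abs_self (ε * d)
    have h7 := neg_abs_le (ε * d)
    rw [h5] at h6 h7
    exact ⟨by linarith, by linarith, by linarith, by linarith⟩


lemma aux_subtype_sum {α : Type*} [Fintype α] (F : Finset α) (x : {p // p ∈ F} → ℝ)
    (g : α → ℝ) (hg0 : ∀ p ∉ F, g p = 0) (hgx : ∀ e : {p // p ∈ F}, g (e : α) = x e)
    (P : α → Prop) [DecidablePred P] :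
    ∑ e : {p // p ∈ F}, (if P (e : α) then x e else 0) = ∑ p ∈ Finset.univ.filter P, g p := by
  calc ∑ e : {p // p ∈ F}, (if P (e : α) then x e else 0)
      = ∑ e : {p // p ∈ F}, (if P (e : α) then g (e : α) else 0) := by
        refine Finset.sum_congr rfl fun e _ => ?_
        rw [hgx e]
    _ = ∑ p ∈ F, (if P p then g p else 0) :=
        Finset.sum_coe_sort F (fun p => if P p then g p else 0)
    _ = ∑ p, (if P p then g p else 0) := by
        refine Finset.sum_subset (Finset.subset_univ F) fun p _ hp => ?_
        rw [hg0 p hp]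
        split_ifs <;> rfl
    _ = ∑ p ∈ Finset.univ.filter P, g p := by
        rw [Finset.sum_filter]

set_option maxHeartbeats 2000000 in
lemma aux_exists_perturb {n m : ℕ} (r R : Fin n → ℕ) (c C : Fin m → ℕ)
    (A : Matrix (Fin n) (Fin m) ℝ)
    (h01 : ∀ i j, 0 ≤ A i j ∧ A i j ≤ 1)
    (i₀ : Fin n) (j₀ : Fin m) (hfrac0 : A i₀ j₀ ≠ 0) (hfrac1 : A i₀ j₀ ≠ 1) :
    ∃ D : Matrix (Fin n) (Fin m) ℝ, D ≠ 0 ∧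
      (∀ i j, D i j ≠ 0 → A i j ≠ 0 ∧ A i j ≠ 1) ∧
      (∀ i, (∑ j, A i j = (r i : ℝ) ∨ ∑ j, A i j = (R i : ℝ)) → ∑ j, D i j = 0) ∧
      (∀ j, (∑ i, A i j = (c j : ℝ) ∨ ∑ i, A i j = (C j : ℝ)) → ∑ i, D i j = 0) := by
  classical
  set F : Finset (Fin n × Fin m) :=
    Finset.univ.filter (fun p => A p.1 p.2 ≠ 0 ∧ A p.1 p.2 ≠ 1) with hFdef
  have hmemF : ∀ p : Fin n × Fin m, p ∈ F ↔ (A p.1 p.2 ≠ 0 ∧ A p.1 p.2 ≠ 1) := by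
    intro p; simp [hFdef]
  set TR : Finset (Fin n) :=
    Finset.univ.filter (fun i =>
      (∑ j, A i j = (r i : ℝ) ∨ ∑ j, A i j = (R i : ℝ)) ∧ ∃ j, (i, j) ∈ F) with hTRdef
  set TC : Finset (Fin m) :=
    Finset.univ.filter (fun j =>
      (∑ i, A i j = (c j : ℝ) ∨ ∑ i, A i j = (C j : ℝ)) ∧ ∃ i, (i, j) ∈ F) with hTCdef
  -- degree bounds
  have hdegR : ∀ i ∈ TR, 2 ≤ (F.filter (fun p => p.1 = i)).card := by
    intro i hi
    rw [hTRdef, Finset.mem_filter] at hi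
    obtain ⟨-, htight, j₁, hj₁⟩ := hi
    rw [hmemF] at hj₁
    have hz : ∃ z : ℤ, ∑ j, A i j = (z : ℝ) := by
      rcases htight with h | h
      · exact ⟨r i, by rw [h]; push_cast; ring⟩
      · exact ⟨R i, by rw [h]; push_cast; ring⟩
    obtain ⟨z, hz⟩ := hz
    obtain ⟨j₂, hne, hj₂0, hj₂1⟩ := aux_frac_pair (A i) (h01 i) z hz j₁ hj₁.1 hj₁.2
    rw [show (2:ℕ) = 1 + 1 from rfl, Nat.add_one_le_iff, Finset.one_lt_card]
    refine ⟨(i, j₁), ?_, (i, j₂), ?_, ?_⟩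
    · rw [Finset.mem_filter]; exact ⟨(hmemF _).2 hj₁, rfl⟩
    · rw [Finset.mem_filter]; exact ⟨(hmemF _).2 ⟨hj₂0, hj₂1⟩, rfl⟩
    · simp [Prod.ext_iff]; intro h; exact (hne h.symm).elim
  have hdegC : ∀ j ∈ TC, 2 ≤ (F.filter (fun p => p.2 = j)).card := by
    intro j hj
    rw [hTCdef, Finset.mem_filter] at hj
    obtain ⟨-, htight, i₁, hi₁⟩ := hj
    rw [hmemF] at hi₁
    have hz : ∃ z : ℤ, ∑ i, A i j = (z : ℝ) := by
      rcases htight with h | h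
      · exact ⟨c j, by rw [h]; push_cast; ring⟩
      · exact ⟨C j, by rw [h]; push_cast; ring⟩
    obtain ⟨z, hz⟩ := hz
    obtain ⟨i₂, hne, hi₂0, hi₂1⟩ := aux_frac_pair (fun i => A i j)
      (fun i => h01 i j) z hz i₁ hi₁.1 hi₁.2
    rw [show (2:ℕ) = 1 + 1 from rfl, Nat.add_one_le_iff, Finset.one_lt_card]
    refine ⟨(i₁, j), ?_, (i₂, j), ?_, ?_⟩
    · rw [Finset.mem_filter]; exact ⟨(hmemF _).2 hi₁, rfl⟩
    · rw [Finset.mem_filter]; exact ⟨(hmemF _).2 ⟨hi₂0, hi₂1⟩, rfl⟩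
    · simp [Prod.ext_iff]; intro h; exact (hne h.symm).elim
  -- double counting
  have hswapR : ∑ p ∈ F, (if p.1 ∈ TR then (1:ℕ) else 0) =
      ∑ i ∈ TR, (F.filter (fun p => p.1 = i)).card := by
    simp_rw [Finset.card_filter]
    rw [Finset.sum_comm]
    refine Finset.sum_congr rfl fun p _ => ?_
    rw [Finset.sum_ite_eq TR p.1 (fun _ => 1)]
  have hswapC : ∑ p ∈ F, (if p.2 ∈ TC then (1:ℕ) else 0) =
      ∑ j ∈ TC, (F.filter (fun p => p.2 = j)).card := by
    simp_rw [Finset.card_filter]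
    rw [Finset.sum_comm]
    refine Finset.sum_congr rfl fun p _ => ?_
    rw [Finset.sum_ite_eq TC p.2 (fun _ => 1)]
  have hcount : 2 * (TR.card + TC.card) ≤
      ∑ p ∈ F, ((if p.1 ∈ TR then 1 else 0) + (if p.2 ∈ TC then 1 else 0) : ℕ) := by
    rw [Finset.sum_add_distrib, hswapR, hswapC]
    have h1 : 2 * TR.card ≤ ∑ i ∈ TR, (F.filter (fun p => p.1 = i)).card := by
      calc 2 * TR.card = ∑ _i ∈ TR, 2 := by rw [Finset.sum_const, smul_eq_mul, mul_comm]
      _ ≤ _ := Finset.sum_le_sum hdegR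
    have h2 : 2 * TC.card ≤ ∑ j ∈ TC, (F.filter (fun p => p.2 = j)).card := by
      calc 2 * TC.card = ∑ _j ∈ TC, 2 := by rw [Finset.sum_const, smul_eq_mul, mul_comm]
      _ ≤ _ := Finset.sum_le_sum hdegC
    omega
  -- existence of kernel vector
  have hTle : TR.card + TC.card ≤ F.card := by
    have hub : ∑ p ∈ F, ((if p.1 ∈ TR then 1 else 0) + (if p.2 ∈ TC then 1 else 0) : ℕ) ≤
        ∑ _p ∈ F, 2 := by
      refine Finset.sum_le_sum fun p _ => ?_
      split_ifs <;> omega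
    rw [Finset.sum_const, smul_eq_mul] at hub
    omega
  set M : Matrix ({i // i ∈ TR} ⊕ {j // j ∈ TC}) {p // p ∈ F} ℝ :=
    fun v e => Sum.elim (fun i : {i // i ∈ TR} => if (e : Fin n × Fin m).1 = (i : Fin n) then (1:ℝ) else 0)
      (fun j : {j // j ∈ TC} => if (e : Fin n × Fin m).2 = (j : Fin m) then (1:ℝ) else 0) v with hMdef
  have hMker : ∃ x : {p // p ∈ F} → ℝ, x ≠ 0 ∧ M.mulVec x = 0 := by
    by_cases hall : ∀ p ∈ F, p.1 ∈ TR ∧ p.2 ∈ TC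
    · -- all endpoints tight: use the sign covector
      have hi₀F : (i₀, j₀) ∈ F := (hmemF _).2 ⟨hfrac0, hfrac1⟩
      have hi₀TR : i₀ ∈ TR := (hall _ hi₀F).1
      set N : Matrix Unit ({i // i ∈ TR} ⊕ {j // j ∈ TC}) ℝ :=
        fun _ v => Sum.elim (fun _ => (1:ℝ)) (fun _ => (-1:ℝ)) v with hNdef
      have hNM : N * M = 0 := by
        ext u e
        rw [Matrix.mul_apply, Fintype.sum_sum_type]
        simp only [hNdef, hMdef, Sum.elim_inl, Sum.elim_inr, one_mul, neg_mul,
          Matrix.zero_apply]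
        have e1 : ∑ i : {i // i ∈ TR}, (if (e : Fin n × Fin m).1 = ↑i then (1:ℝ) else 0) = 1 := by
          rw [Finset.sum_coe_sort TR (fun i => if (e : Fin n × Fin m).1 = i then (1:ℝ) else 0),
            Finset.sum_ite_eq TR _ (fun _ => (1:ℝ)), if_pos (hall _ e.2).1]
        have e2 : ∑ j : {j // j ∈ TC}, (if (e : Fin n × Fin m).2 = ↑j then (1:ℝ) else 0) = 1 := by
          rw [Finset.sum_coe_sort TC (fun j => if (e : Fin n × Fin m).2 = j then (1:ℝ) else 0),
            Finset.sum_ite_eq TC _ (fun _ => (1:ℝ)), if_pos (hall _ e.2).2]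
        rw [Finset.sum_neg_distrib, e1, e2]
        norm_num
      set L := N.mulVecLin with hLdef
      have himg : ∀ x, M.mulVecLin x ∈ LinearMap.ker L := by
        intro x
        rw [LinearMap.mem_ker]
        show N.mulVec (M.mulVec x) = 0
        rw [Matrix.mulVec_mulVec, hNM, Matrix.zero_mulVec]
      have hwit : ∃ w, L w ≠ 0 := by
        refine ⟨Sum.elim (fun _ => (1:ℝ)) (fun _ => (0:ℝ)), fun hw => ?_⟩
        have := congrFun hw ()
        rw [hLdef] at this
        simp only [Matrix.mulVecLin_apply] at this
        rw [Matrix.mulVec, dotProduct, Fintype.sum_sum_type] at this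
        simp only [hNdef, Sum.elim_inl, Sum.elim_inr, one_mul, mul_zero, mul_one,
          Finset.sum_const, Finset.sum_const_zero, add_zero, Pi.zero_apply,
          smul_zero, nsmul_eq_mul] at this
        have hcard : 0 < Fintype.card {i // i ∈ TR} := by
          rw [Fintype.card_coe]
          exact Finset.card_pos.mpr ⟨i₀, hi₀TR⟩
        rw [Finset.card_univ] at this
        have hcast : (0:ℝ) < (Fintype.card {i // i ∈ TR} : ℝ) := by exact_mod_cast hcard
        rw [this] at hcast
        exact lt_irrefl _ hcast
      have hklt : Module.finrank ℝ (LinearMap.ker L) <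
          Module.finrank ℝ (({i // i ∈ TR} ⊕ {j // j ∈ TC}) → ℝ) := by
        refine Submodule.finrank_lt ?_
        intro htop
        obtain ⟨w, hw⟩ := hwit
        exact hw (LinearMap.mem_ker.mp (htop ▸ Submodule.mem_top : w ∈ LinearMap.ker L))
      have hnotinj : ¬ Function.Injective
          ((M.mulVecLin).codRestrict (LinearMap.ker L) himg) := by
        intro hinj
        have hle := LinearMap.finrank_le_finrank_of_injective hinj
        rw [Module.finrank_fintype_fun_eq_card, Fintype.card_coe] at hle
        rw [Module.finrank_fintype_fun_eq_card, Fintype.card_sum, Fintype.card_coe,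
          Fintype.card_coe] at hklt
        omega
      rw [Function.not_injective_iff] at hnotinj
      obtain ⟨a, b, hab, hne⟩ := hnotinj
      refine ⟨a - b, sub_ne_zero.mpr hne, ?_⟩
      have : M.mulVecLin a = M.mulVecLin b := congrArg Subtype.val hab
      show M.mulVecLin (a - b) = 0
      rw [map_sub, this, sub_self]
    · -- some slack endpoint: strict dimension count
      push_neg at hall
      obtain ⟨p₀, hp₀F, hp₀⟩ := hall
      have hlt : TR.card + TC.card < F.card := by
        have hstrict : ∑ p ∈ F, ((if p.1 ∈ TR then 1 else 0) + (if p.2 ∈ TC then 1 else 0) : ℕ) <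
            ∑ _p ∈ F, 2 := by
          refine Finset.sum_lt_sum (fun p _ => by split_ifs <;> omega) ⟨p₀, hp₀F, ?_⟩
          by_cases h1 : p₀.1 ∈ TR
          · rw [if_pos h1, if_neg (hp₀ h1)]; omega
          · rw [if_neg h1]; split_ifs <;> omega
        rw [Finset.sum_const, smul_eq_mul] at hstrict
        omega
      have hnotinj : ¬ Function.Injective M.mulVecLin := by
        intro hinj
        have hle := LinearMap.finrank_le_finrank_of_injective hinj
        rw [Module.finrank_fintype_fun_eq_card, Fintype.card_coe,
          Module.finrank_fintype_fun_eq_card, Fintype.card_sum, Fintype.card_coe,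
          Fintype.card_coe] at hle
        omega
      rw [Function.not_injective_iff] at hnotinj
      obtain ⟨a, b, hab, hne⟩ := hnotinj
      refine ⟨a - b, sub_ne_zero.mpr hne, ?_⟩
      show M.mulVecLin (a - b) = 0
      rw [map_sub, hab, sub_self]
  have hker : ∃ x : {p // p ∈ F} → ℝ, x ≠ 0 ∧
      (∀ i ∈ TR, ∑ e : {p // p ∈ F}, (if (e : Fin n × Fin m).1 = i then x e else 0) = 0) ∧
      (∀ j ∈ TC, ∑ e : {p // p ∈ F}, (if (e : Fin n × Fin m).2 = j then x e else 0) = 0) := by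
    obtain ⟨x, hx0, hMx⟩ := hMker
    refine ⟨x, hx0, ?_, ?_⟩
    · intro i hi
      have := congrFun hMx (Sum.inl ⟨i, hi⟩)
      rw [Matrix.mulVec, dotProduct] at this
      simp only [hMdef, Sum.elim_inl, Pi.zero_apply, ite_mul, one_mul, zero_mul] at this
      exact this
    · intro j hj
      have := congrFun hMx (Sum.inr ⟨j, hj⟩)
      rw [Matrix.mulVec, dotProduct] at this
      simp only [hMdef, Sum.elim_inr, Pi.zero_apply, ite_mul, one_mul, zero_mul] at this
      exact this
  obtain ⟨x, hx0, hxR, hxC⟩ := hker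
  set D : Matrix (Fin n) (Fin m) ℝ :=
    fun i j => if h : (i, j) ∈ F then x ⟨(i, j), h⟩ else 0 with hDdef
  have hDF : ∀ p : Fin n × Fin m, (hp : p ∈ F) → D p.1 p.2 = x ⟨p, hp⟩ := by
    intro p hp; rw [hDdef]; simp only []; rw [dif_pos hp]
  have hDnF : ∀ p : Fin n × Fin m, p ∉ F → D p.1 p.2 = 0 := by
    intro p hp; rw [hDdef]; simp only []; rw [dif_neg hp]
  have hg0 : ∀ p : Fin n × Fin m, p ∉ F → D p.1 p.2 = 0 := hDnF
  have hgx : ∀ e : {p // p ∈ F}, D (e : Fin n × Fin m).1 (e : Fin n × Fin m).2 = x e :=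
    fun e => hDF _ e.2
  have hrowsum : ∀ i ∈ TR, ∑ j, D i j = 0 := by
    intro i hi
    have h1 := hxR i hi
    rw [aux_subtype_sum F x (fun p => D p.1 p.2) hg0 hgx (fun p => p.1 = i)] at h1
    rw [← h1]
    refine Finset.sum_nbij' (fun j => (i, j)) (fun p => p.2) ?_ ?_ ?_ ?_ ?_ <;>
      simp +contextual [Finset.mem_filter, Prod.ext_iff, eq_comm]
  have hcolsum : ∀ j ∈ TC, ∑ i, D i j = 0 := by
    intro j hj
    have h1 := hxC j hj
    rw [aux_subtype_sum F x (fun p => D p.1 p.2) hg0 hgx (fun p => p.2 = j)] at h1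
    rw [← h1]
    refine Finset.sum_nbij' (fun i => (i, j)) (fun p => p.1) ?_ ?_ ?_ ?_ ?_ <;>
      simp +contextual [Finset.mem_filter, Prod.ext_iff, eq_comm]
  refine ⟨D, ?_, ?_, ?_, ?_⟩
  · intro hD0
    obtain ⟨e, he⟩ := Function.ne_iff.mp hx0
    apply he
    have : D (e : Fin n × Fin m).1 (e : Fin n × Fin m).2 = 0 := by rw [hD0]; rfl
    rwa [hDF _ e.2] at this
  · intro i j hDij
    by_contra hc
    rw [not_and_or, not_ne_iff, not_ne_iff] at hc
    have : (i, j) ∉ F := by rw [hmemF]; tauto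
    exact hDij (hDnF (i, j) this)
  · intro i htight
    by_cases hi : i ∈ TR
    · exact hrowsum i hi
    · have hnofrac : ∀ j, (i, j) ∉ F := by
        intro j hj
        exact hi (by rw [hTRdef, Finset.mem_filter]; exact ⟨Finset.mem_univ i, htight, j, hj⟩)
      exact Finset.sum_eq_zero fun j _ => hDnF (i, j) (hnofrac j)
  · intro j htight
    by_cases hj : j ∈ TC
    · exact hcolsum j hj
    · have hnofrac : ∀ i, (i, j) ∉ F := by
        intro i hij
        exact hj (by rw [hTCdef, Finset.mem_filter]; exact ⟨Finset.mem_univ j, htight, i, hij⟩)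
      exact Finset.sum_eq_zero fun i _ => hDnF (i, j) (hnofrac i)

theorem extremePoint_transportU_zeroOne (n m : ℕ) (hn : 0 < n) (hm : 0 < m)
    (r R : Fin n → ℕ) (c C : Fin m → ℕ)
    (hrR : ∀ i, r i ≤ R i) (hcC : ∀ j, c j ≤ C j)
    (A : Matrix (Fin n) (Fin m) ℝ)
    (hA : A ∈ Set.extremePoints ℝ (transportU n m r R c C)) :
    ∀ i j, A i j = 0 ∨ A i j = 1 := by
  classical
  intro i j
  by_contra hc
  push_neg at hc
  obtain ⟨hc0, hc1⟩ := hc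
  obtain ⟨hAU, hext⟩ := hA
  obtain ⟨h01, hrow, hcol⟩ := hAU
  obtain ⟨D, hD0, hsupp, hrowD, hcolD⟩ := aux_exists_perturb r R c C A h01 i j hc0 hc1
  have hg : ∀ v : (Fin n × Fin m) ⊕ (Fin n ⊕ Fin m), 0 <
      (Sum.elim
        (fun p => if D p.1 p.2 = 0 then 1 else
          min ((A p.1 p.2 - 0) / |D p.1 p.2|) ((1 - A p.1 p.2) / |D p.1 p.2|))
        (Sum.elim
          (fun i' => if (∑ j', D i' j') = 0 then 1 else
            min (((∑ j', A i' j') - (r i' : ℝ)) / |∑ j', D i' j'|)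
              (((R i' : ℝ) - ∑ j', A i' j') / |∑ j', D i' j'|))
          (fun j' => if (∑ i', D i' j') = 0 then 1 else
            min (((∑ i', A i' j') - (c j' : ℝ)) / |∑ i', D i' j'|)
              (((C j' : ℝ) - ∑ i', A i' j') / |∑ i', D i' j'|))) v) := by
    rintro (p | i' | j')
    · simp only [Sum.elim_inl]
      by_cases hd : D p.1 p.2 = 0
      · rw [if_pos hd]; norm_num
      · rw [if_neg hd]
        obtain ⟨ha0, ha1⟩ := hsupp p.1 p.2 hd
        have h1 : 0 < A p.1 p.2 := lt_of_le_of_ne (h01 p.1 p.2).1 (Ne.symm ha0)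
        have h2 : A p.1 p.2 < 1 := lt_of_le_of_ne (h01 p.1 p.2).2 ha1
        have habs : 0 < |D p.1 p.2| := abs_pos.2 hd
        apply lt_min <;> apply div_pos <;> linarith
    · simp only [Sum.elim_inr, Sum.elim_inl]
      by_cases hd : (∑ j', D i' j') = 0
      · rw [if_pos hd]; norm_num
      · rw [if_neg hd]
        have hnt : ¬(∑ j', A i' j' = (r i' : ℝ) ∨ ∑ j', A i' j' = (R i' : ℝ)) :=
          fun h => hd (hrowD i' h)
        push_neg at hnt
        have h1 : (r i' : ℝ) < ∑ j', A i' j' :=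
          lt_of_le_of_ne (hrow i').1 (Ne.symm hnt.1)
        have h2 : (∑ j', A i' j') < (R i' : ℝ) := lt_of_le_of_ne (hrow i').2 hnt.2
        have habs : 0 < |∑ j', D i' j'| := abs_pos.2 hd
        apply lt_min <;> apply div_pos <;> linarith
    · simp only [Sum.elim_inr]
      by_cases hd : (∑ i', D i' j') = 0
      · rw [if_pos hd]; norm_num
      · rw [if_neg hd]
        have hnt : ¬(∑ i', A i' j' = (c j' : ℝ) ∨ ∑ i', A i' j' = (C j' : ℝ)) :=
          fun h => hd (hcolD j' h)
        push_neg at hnt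
        have h1 : (c j' : ℝ) < ∑ i', A i' j' :=
          lt_of_le_of_ne (hcol j').1 (Ne.symm hnt.1)
        have h2 : (∑ i', A i' j') < (C j' : ℝ) := lt_of_le_of_ne (hcol j').2 hnt.2
        have habs : 0 < |∑ i', D i' j'| := abs_pos.2 hd
        apply lt_min <;> apply div_pos <;> linarith
  obtain ⟨ε, hε, hεle⟩ := aux_exists_pos_le _ hg
  have hbE : ∀ (i' : Fin n) (j' : Fin m),
      0 ≤ A i' j' + ε * D i' j' ∧ A i' j' + ε * D i' j' ≤ 1 ∧
      0 ≤ A i' j' - ε * D i' j' ∧ A i' j' - ε * D i' j' ≤ 1 := by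
    intro i' j'
    have h := hεle (Sum.inl (i', j'))
    simp only [Sum.elim_inl] at h
    have := aux_pert_bound (lo := 0) (hi := 1) (h01 i' j').1 (h01 i' j').2 hε h
    simpa using this
  have hbR : ∀ i' : Fin n,
      (r i' : ℝ) ≤ (∑ j', A i' j') + ε * ∑ j', D i' j' ∧
      (∑ j', A i' j') + ε * ∑ j', D i' j' ≤ (R i' : ℝ) ∧
      (r i' : ℝ) ≤ (∑ j', A i' j') - ε * ∑ j', D i' j' ∧
      (∑ j', A i' j') - ε * ∑ j', D i' j' ≤ (R i' : ℝ) := by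
    intro i'
    have h := hεle (Sum.inr (Sum.inl i'))
    simp only [Sum.elim_inr, Sum.elim_inl] at h
    exact aux_pert_bound (hrow i').1 (hrow i').2 hε h
  have hbC : ∀ j' : Fin m,
      (c j' : ℝ) ≤ (∑ i', A i' j') + ε * ∑ i', D i' j' ∧
      (∑ i', A i' j') + ε * ∑ i', D i' j' ≤ (C j' : ℝ) ∧
      (c j' : ℝ) ≤ (∑ i', A i' j') - ε * ∑ i', D i' j' ∧
      (∑ i', A i' j') - ε * ∑ i', D i' j' ≤ (C j' : ℝ) := by
    intro j'
    have h := hεle (Sum.inr (Sum.inr j'))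
    simp only [Sum.elim_inr] at h
    exact aux_pert_bound (hcol j').1 (hcol j').2 hε h
  have hsump : ∀ i', ∑ j', (A + ε • D) i' j' = (∑ j', A i' j') + ε * ∑ j', D i' j' := by
    intro i'
    simp [Matrix.add_apply, Matrix.smul_apply, smul_eq_mul, Finset.sum_add_distrib,
      Finset.mul_sum]
  have hsumm : ∀ i', ∑ j', (A - ε • D) i' j' = (∑ j', A i' j') - ε * ∑ j', D i' j' := by
    intro i'
    simp [Matrix.sub_apply, Matrix.smul_apply, smul_eq_mul, Finset.sum_sub_distrib,
      Finset.mul_sum]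
  have hsumpc : ∀ j', ∑ i', (A + ε • D) i' j' = (∑ i', A i' j') + ε * ∑ i', D i' j' := by
    intro j'
    simp [Matrix.add_apply, Matrix.smul_apply, smul_eq_mul, Finset.sum_add_distrib,
      Finset.mul_sum]
  have hsummc : ∀ j', ∑ i', (A - ε • D) i' j' = (∑ i', A i' j') - ε * ∑ i', D i' j' := by
    intro j'
    simp [Matrix.sub_apply, Matrix.smul_apply, smul_eq_mul, Finset.sum_sub_distrib,
      Finset.mul_sum]
  have hBp : A + ε • D ∈ transportU n m r R c C := by
    refine ⟨?_, ?_, ?_⟩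
    · intro i' j'
      rw [Matrix.add_apply, Matrix.smul_apply, smul_eq_mul]
      exact ⟨(hbE i' j').1, (hbE i' j').2.1⟩
    · intro i'
      rw [hsump i']
      exact ⟨(hbR i').1, (hbR i').2.1⟩
    · intro j'
      rw [hsumpc j']
      exact ⟨(hbC j').1, (hbC j').2.1⟩
  have hBm : A - ε • D ∈ transportU n m r R c C := by
    refine ⟨?_, ?_, ?_⟩
    · intro i' j'
      rw [Matrix.sub_apply, Matrix.smul_apply, smul_eq_mul]
      exact ⟨(hbE i' j').2.2.1, (hbE i' j').2.2.2⟩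
    · intro i'
      rw [hsumm i']
      exact ⟨(hbR i').2.2.1, (hbR i').2.2.2⟩
    · intro j'
      rw [hsummc j']
      exact ⟨(hbC j').2.2.1, (hbC j').2.2.2⟩
  have hseg : A ∈ openSegment ℝ (A - ε • D) (A + ε • D) := by
    refine ⟨1/2, 1/2, by norm_num, by norm_num, by norm_num, ?_⟩
    module
  have hm1 := hext hBm hBp hseg
  have : ε • D = 0 := by
    have := sub_eq_self.mp hm1
    exact this
  rcases smul_eq_zero.mp this with h | h
  · exact (ne_of_gt hε) h
  · exact hD0 h
end

section
/- U(R_min^max, C_min^max) is the convex hull of the set P(R_min^max, C_min^max) of its 0-1 matrices. -/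
open Finset

def IsFrac (x : ℝ) : Prop := ∀ z : ℤ, x ≠ (z : ℝ)

lemma isFrac_pos_lt_one {x : ℝ} (h0 : 0 ≤ x) (h1 : x ≤ 1) (hf : IsFrac x) :
    0 < x ∧ x < 1 := by
  constructor
  · rcases lt_or_eq_of_le h0 with h | h
    · exact h
    · exact absurd h.symm (by simpa using hf 0)
  · rcases lt_or_eq_of_le h1 with h | h
    · exact h
    · exact absurd h (by simpa using hf 1)

lemma isFrac_lt_of_nat_le {x : ℝ} {k : ℕ} (h : (k : ℝ) ≤ x) (hf : IsFrac x) :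
    (k : ℝ) < x := by
  rcases lt_or_eq_of_le h with h | h
  · exact h
  · exact absurd h.symm (by simpa using hf k)

lemma isFrac_gt_of_le_nat {x : ℝ} {k : ℕ} (h : x ≤ (k : ℝ)) (hf : IsFrac x) :
    x < (k : ℝ) := by
  rcases lt_or_eq_of_le h with h | h
  · exact h
  · exact absurd h (by simpa using hf k)

lemma not_isFrac_nat (k : ℕ) : ¬ IsFrac ((k : ℝ)) := fun h => h k (by push_cast; ring)

lemma not_isFrac_zero : ¬ IsFrac (0 : ℝ) := by simpa using not_isFrac_nat 0
lemma not_isFrac_one : ¬ IsFrac (1 : ℝ) := by simpa using not_isFrac_nat 1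


lemma not_isFrac_sum {ι : Type*} (s : Finset ι) (f : ι → ℝ)
    (h : ∀ i ∈ s, ¬ IsFrac (f i)) : ¬ IsFrac (∑ i ∈ s, f i) := by
  classical
  induction s using Finset.induction_on with
  | empty => intro hf; exact hf 0 (by simp)
  | @insert a s hx ih =>
    intro hf
    have ha := h a (by simp)
    have hs := ih (fun i hi => h i (by simp [hi]))
    simp only [IsFrac, not_forall, not_not] at ha hs
    obtain ⟨za, hza⟩ := ha
    obtain ⟨zs, hzs⟩ := hs
    exact hf (za + zs) (by rw [Finset.sum_insert hx, hza, hzs]; push_cast; ring)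

lemma isFrac_add_int {x : ℝ} {z : ℤ} (h : IsFrac x) : IsFrac (x + z) :=
  fun w hw => h (w - z) (by push_cast; linarith)

/-- If `f j` is fractional but the total sum is not, some other coordinate is fractional. -/
lemma exists_other_frac {ι : Type*} [Fintype ι] [DecidableEq ι] (f : ι → ℝ) (j : ι)
    (hf : IsFrac (f j)) (hs : ¬ IsFrac (∑ j', f j')) : ∃ j', j' ≠ j ∧ IsFrac (f j') := by
  by_contra hc
  push_neg at hc
  have h1 : ¬ IsFrac (∑ j' ∈ univ.erase j, f j') :=
    not_isFrac_sum _ _ (fun i hi => hc i (Finset.ne_of_mem_erase hi))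
  simp only [IsFrac, not_forall, not_not] at h1
  obtain ⟨z, hz⟩ := h1
  apply hs
  rw [← Finset.add_sum_erase _ f (mem_univ j), hz]
  exact isFrac_add_int hf

lemma exists_ne_zero_kernel {α β : Type*} [Fintype α] [Fintype β]
    (L : (α → ℝ) →ₗ[ℝ] (β → ℝ)) (h : Fintype.card β < Fintype.card α) :
    ∃ g : α → ℝ, g ≠ 0 ∧ L g = 0 := by
  have hni : ¬ Function.Injective L := by
    intro hinj
    have := LinearMap.finrank_le_finrank_of_injective hinj
    rw [Module.finrank_pi, Module.finrank_pi] at this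
    omega
  rw [Function.not_injective_iff] at hni
  obtain ⟨x, y, hxy, hne⟩ := hni
  exact ⟨x - y, sub_ne_zero.mpr hne, by rw [map_sub, hxy, sub_self]⟩

variable {n m : ℕ}

def rowSumL (i : Fin n) : Matrix (Fin n) (Fin m) ℝ →ₗ[ℝ] ℝ where
  toFun M := ∑ j, M i j
  map_add' M N := by simp [Finset.sum_add_distrib]
  map_smul' a M := by simp [Finset.mul_sum]

def colSumL (j : Fin m) : Matrix (Fin n) (Fin m) ℝ →ₗ[ℝ] ℝ where
  toFun M := ∑ i, M i j
  map_add' M N := by simp [Finset.sum_add_distrib]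
  map_smul' a M := by simp [Finset.mul_sum]

noncomputable def extL (F : Finset (Fin n × Fin m)) :
    ((↥F → ℝ)) →ₗ[ℝ] Matrix (Fin n) (Fin m) ℝ where
  toFun g i j := if h : (i, j) ∈ F then g ⟨(i, j), h⟩ else 0
  map_add' g g' := by
    funext i j
    show (if h : (i, j) ∈ F then (g + g') ⟨(i, j), h⟩ else 0) =
      (if h : (i, j) ∈ F then g ⟨(i, j), h⟩ else 0) + (if h : (i, j) ∈ F then g' ⟨(i, j), h⟩ else 0)
    by_cases h : (i, j) ∈ F <;> simp [h, Matrix.add_apply]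
  map_smul' a g := by
    funext i j
    show (if h : (i, j) ∈ F then (a • g) ⟨(i, j), h⟩ else 0) =
      a * (if h : (i, j) ∈ F then g ⟨(i, j), h⟩ else 0)
    by_cases h : (i, j) ∈ F <;> simp [h, Matrix.smul_apply]

/-- From a cardinality gap, get a nonzero matrix supported in `F` whose row sums vanish on
`W1` and column sums vanish on `W2`. -/
lemma exists_D (F : Finset (Fin n × Fin m)) (W1 : Finset (Fin n)) (W2 : Finset (Fin m))
    (hcard : W1.card + W2.card < F.card) :
    ∃ D : Matrix (Fin n) (Fin m) ℝ, D ≠ 0 ∧ (∀ i j, D i j ≠ 0 → (i, j) ∈ F) ∧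
      (∀ i ∈ W1, ∑ j, D i j = 0) ∧ (∀ j ∈ W2, ∑ i, D i j = 0) := by
  classical
  set L : ((↥F → ℝ)) →ₗ[ℝ] ((↥W1 ⊕ ↥W2) → ℝ) :=
    LinearMap.pi (fun v => (Sum.elim (fun i : ↥W1 => rowSumL i.1)
      (fun j : ↥W2 => colSumL j.1) v) ∘ₗ extL F) with hL
  obtain ⟨g, hg0, hgker⟩ := exists_ne_zero_kernel L (by
    simp only [Fintype.card_sum, Fintype.card_coe]
    simpa using hcard)
  refine ⟨extL F g, ?_, ?_, ?_, ?_⟩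
  · intro h0
    apply hg0
    funext x
    have : extL F g x.1.1 x.1.2 = 0 := by rw [h0]; rfl
    simpa [extL, x.2] using (show (if h : (x.1.1, x.1.2) ∈ F then g ⟨(x.1.1, x.1.2), h⟩ else 0) = 0 from this)
  · intro i j hne
    by_contra hmem
    exact hne (by show (if h : (i, j) ∈ F then g ⟨(i, j), h⟩ else 0) = 0; rw [dif_neg hmem])
  · intro i hi
    have := congrFun hgker (Sum.inl ⟨i, hi⟩)
    simpa [hL, LinearMap.pi_apply, rowSumL] using this
  · intro j hj
    have := congrFun hgker (Sum.inr ⟨j, hj⟩)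
    simpa [hL, LinearMap.pi_apply, colSumL] using this

/-- Main combinatorial lemma: a matrix with a fractional entry admits a nonzero direction
supported on fractional entries, with vanishing row/column sums wherever the row/column
sum of `A` is integral. -/
lemma exists_direction (A : Matrix (Fin n) (Fin m) ℝ)
    (hne : ∃ p : Fin n × Fin m, IsFrac (A p.1 p.2)) :
    ∃ D : Matrix (Fin n) (Fin m) ℝ, D ≠ 0 ∧
      (∀ i j, D i j ≠ 0 → IsFrac (A i j)) ∧
      (∀ i, (∑ j, D i j) ≠ 0 → IsFrac (∑ j, A i j)) ∧
      (∀ j, (∑ i, D i j) ≠ 0 → IsFrac (∑ i, A i j)) := by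
  classical
  set F : Finset (Fin n × Fin m) := univ.filter (fun p => IsFrac (A p.1 p.2)) with hF
  have hmemF : ∀ p : Fin n × Fin m, p ∈ F ↔ IsFrac (A p.1 p.2) := by
    intro p; simp [hF]
  obtain ⟨p0, hp0⟩ := hne
  have hp0F : p0 ∈ F := (hmemF p0).2 hp0
  set Vr : Finset (Fin n) :=
    univ.filter (fun i => ¬ IsFrac (∑ j, A i j) ∧ ∃ j, (i, j) ∈ F) with hVr
  set Vc : Finset (Fin m) :=
    univ.filter (fun j => ¬ IsFrac (∑ i, A i j) ∧ ∃ i, (i, j) ∈ F) with hVc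
  -- degrees
  set degr : Fin n → ℕ := fun i => (F.filter (fun p => p.1 = i)).card with hdegr
  set degc : Fin m → ℕ := fun j => (F.filter (fun p => p.2 = j)).card with hdegc
  have hsumr : F.card = ∑ i, degr i :=
    card_eq_sum_card_fiberwise (fun p _ => mem_univ p.1)
  have hsumc : F.card = ∑ j, degc j :=
    card_eq_sum_card_fiberwise (fun p _ => mem_univ p.2)
  have hdeg2r : ∀ i ∈ Vr, 2 ≤ degr i := by
    intro i hi
    rw [hVr, mem_filter] at hi
    obtain ⟨-, hnf, j0, hj0⟩ := hi
    obtain ⟨j1, hj1ne, hj1f⟩ := exists_other_frac (fun j => A i j) j0 ((hmemF _).1 hj0) hnf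
    have h2 : 1 < (F.filter (fun p => p.1 = i)).card := Finset.one_lt_card.mpr
      ⟨(i, j0), by simp [hj0], (i, j1), by simp [(hmemF (i, j1)).2 hj1f], by simp [hj1ne.symm]⟩
    exact h2
  have hdeg2c : ∀ j ∈ Vc, 2 ≤ degc j := by
    intro j hj
    rw [hVc, mem_filter] at hj
    obtain ⟨-, hnf, i0, hi0⟩ := hj
    obtain ⟨i1, hi1ne, hi1f⟩ := exists_other_frac (fun i => A i j) i0 ((hmemF _).1 hi0) hnf
    have h2 : 1 < (F.filter (fun p => p.2 = j)).card := Finset.one_lt_card.mpr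
      ⟨(i0, j), by simp [hi0], (i1, j), by simp [(hmemF (i1, j)).2 hi1f], by simp [hi1ne.symm]⟩
    exact h2
  have hVr2 : 2 * Vr.card ≤ F.card := by
    rw [hsumr]
    calc 2 * Vr.card = Vr.card • 2 := by rw [smul_eq_mul]; ring
    _ ≤ ∑ i ∈ Vr, degr i := card_nsmul_le_sum Vr degr 2 hdeg2r
    _ ≤ ∑ i, degr i := sum_le_sum_of_subset (subset_univ Vr)
  have hVc2 : 2 * Vc.card ≤ F.card := by
    rw [hsumc]
    calc 2 * Vc.card = Vc.card • 2 := by rw [smul_eq_mul]; ring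
    _ ≤ ∑ j ∈ Vc, degc j := card_nsmul_le_sum Vc degc 2 hdeg2c
    _ ≤ ∑ j, degc j := sum_le_sum_of_subset (subset_univ Vc)
  -- support of D implies membership in Vr/Vc or zero row/col, shared helper
  by_cases hcase : ∀ p ∈ F, ¬ IsFrac (∑ j, A p.1 j) ∧ ¬ IsFrac (∑ i, A i p.2)
  · -- Case B : all incident rows and columns have integral sums
    set i0 := p0.1 with hi0def
    have hi0Vr : i0 ∈ Vr := by
      rw [hVr, mem_filter]
      exact ⟨mem_univ _, (hcase p0 hp0F).1, ⟨p0.2, by simpa using hp0F⟩⟩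
    have hFpos : 0 < F.card := card_pos.mpr ⟨p0, hp0F⟩
    have hcard : (Vr.erase i0).card + Vc.card < F.card := by
      rw [card_erase_of_mem hi0Vr]
      omega
    obtain ⟨D, hD0, hDsupp, hDrow, hDcol⟩ := exists_D F (Vr.erase i0) Vc hcard
    have hrow0 : ∀ i, i ≠ i0 → ∑ j, D i j = 0 := by
      intro i hine
      by_cases hinc : ∃ j, (i, j) ∈ F
      · apply hDrow
        rw [mem_erase]
        refine ⟨hine, ?_⟩
        rw [hVr, mem_filter]
        obtain ⟨j, hj⟩ := hinc
        exact ⟨mem_univ _, (hcase (i, j) hj).1, ⟨j, hj⟩⟩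
      · push_neg at hinc
        apply Finset.sum_eq_zero
        intro j _
        by_contra hz
        exact hinc j (hDsupp i j hz)
    have hcol0 : ∀ j, ∑ i, D i j = 0 := by
      intro j
      by_cases hinc : ∃ i, (i, j) ∈ F
      · apply hDcol
        rw [hVc, mem_filter]
        obtain ⟨i, hi⟩ := hinc
        exact ⟨mem_univ _, (hcase (i, j) hi).2, ⟨i, hi⟩⟩
      · push_neg at hinc
        apply Finset.sum_eq_zero
        intro i _
        by_contra hz
        exact hinc i (hDsupp i j hz)
    have hrowi0 : ∑ j, D i0 j = 0 := by
      have hdouble : ∑ i, ∑ j, D i j = ∑ j, ∑ i, D i j := Finset.sum_comm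
      rw [Finset.sum_eq_single_of_mem i0 (mem_univ i0)
        (fun i _ hne => hrow0 i hne)] at hdouble
      rw [hdouble]
      exact Finset.sum_eq_zero (fun j _ => hcol0 j)
    refine ⟨D, hD0, fun i j hz => (hmemF _).1 (hDsupp i j hz), ?_, ?_⟩
    · intro i hi
      exfalso
      by_cases h : i = i0
      · exact hi (h ▸ hrowi0)
      · exact hi (hrow0 i h)
    · intro j hj
      exact absurd (hcol0 j) hj
  · -- Case A : some fractional entry has a fractional row or column sum
    push_neg at hcase
    obtain ⟨q, hqF, hq0⟩ := hcase
    have hq : IsFrac (∑ j, A q.1 j) ∨ IsFrac (∑ i, A i q.2) := by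
      by_cases h : IsFrac (∑ j, A q.1 j)
      · exact Or.inl h
      · exact Or.inr (hq0 h)
    have hcard : Vr.card + Vc.card < F.card := by
      rcases hq with hqr | hqc
      · -- free incident row q.1
        have hq1Vr : q.1 ∉ Vr := by
          rw [hVr, mem_filter]
          push_neg
          intro _ h
          exact absurd hqr h
        have hdegq : 1 ≤ degr q.1 := by
          rw [hdegr]
          apply card_pos.mpr
          exact ⟨q, by simp [hqF]⟩
        have : 2 * Vr.card + 1 ≤ F.card := by
          rw [hsumr]
          calc 2 * Vr.card + 1 ≤ (∑ i ∈ Vr, degr i) + degr q.1 := by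
                have h1 : Vr.card • 2 ≤ ∑ i ∈ Vr, degr i := card_nsmul_le_sum Vr degr 2 hdeg2r
                simp only [smul_eq_mul] at h1
                omega
          _ = ∑ i ∈ insert q.1 Vr, degr i := by
                rw [Finset.sum_insert hq1Vr]; ring
          _ ≤ ∑ i, degr i := sum_le_sum_of_subset (subset_univ _)
        omega
      · have hq2Vc : q.2 ∉ Vc := by
          rw [hVc, mem_filter]
          push_neg
          intro _ h
          exact absurd hqc h
        have hdegq : 1 ≤ degc q.2 := by
          rw [hdegc]
          apply card_pos.mpr
          exact ⟨q, by simp [hqF]⟩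
        have : 2 * Vc.card + 1 ≤ F.card := by
          rw [hsumc]
          calc 2 * Vc.card + 1 ≤ (∑ j ∈ Vc, degc j) + degc q.2 := by
                have h1 : Vc.card • 2 ≤ ∑ j ∈ Vc, degc j := card_nsmul_le_sum Vc degc 2 hdeg2c
                simp only [smul_eq_mul] at h1
                omega
          _ = ∑ j ∈ insert q.2 Vc, degc j := by
                rw [Finset.sum_insert hq2Vc]; ring
          _ ≤ ∑ j, degc j := sum_le_sum_of_subset (subset_univ _)
        omega
    obtain ⟨D, hD0, hDsupp, hDrow, hDcol⟩ := exists_D F Vr Vc hcard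
    refine ⟨D, hD0, fun i j hz => (hmemF _).1 (hDsupp i j hz), ?_, ?_⟩
    · intro i hi
      by_contra hnf
      apply hi
      by_cases hinc : ∃ j, (i, j) ∈ F
      · exact hDrow i (by rw [hVr, mem_filter]; exact ⟨mem_univ _, hnf, hinc⟩)
      · push_neg at hinc
        exact Finset.sum_eq_zero (fun j _ => by
          by_contra hz; exact hinc j (hDsupp i j hz))
    · intro j hj
      by_contra hnf
      apply hj
      by_cases hinc : ∃ i, (i, j) ∈ F
      · exact hDcol j (by rw [hVc, mem_filter]; exact ⟨mem_univ _, hnf, hinc⟩)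
      · push_neg at hinc
        exact Finset.sum_eq_zero (fun i _ => by
          by_contra hz; exact hinc i (hDsupp i j hz))

/-- the number of fractional entries, row sums, and column sums -/
noncomputable def mu {n m : ℕ} (A : Matrix (Fin n) (Fin m) ℝ) : ℕ :=
  {p : Fin n × Fin m | IsFrac (A p.1 p.2)}.ncard
  + {i : Fin n | IsFrac (∑ j, A i j)}.ncard
  + {j : Fin m | IsFrac (∑ i, A i j)}.ncard

lemma step {n m : ℕ} (r R : Fin n → ℕ) (c C : Fin m → ℕ)
    (A : Matrix (Fin n) (Fin m) ℝ) (hA : A ∈ transportU n m r R c C)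
    (D : Matrix (Fin n) (Fin m) ℝ) (hD0 : D ≠ 0)
    (hsupp : ∀ i j, D i j ≠ 0 → IsFrac (A i j))
    (hrow : ∀ i, (∑ j, D i j) ≠ 0 → IsFrac (∑ j, A i j))
    (hcol : ∀ j, (∑ i, D i j) ≠ 0 → IsFrac (∑ i, A i j)) :
    ∃ t : ℝ, 0 < t ∧ (A + t • D) ∈ transportU n m r R c C ∧ mu (A + t • D) < mu A := by
  classical
  obtain ⟨hAe, hAr, hAc⟩ := hA
  -- a nonzero entry of D
  have hpex : ∃ p : Fin n × Fin m, D p.1 p.2 ≠ 0 := by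
    by_contra hc
    push_neg at hc
    exact hD0 (by funext i j; exact hc (i, j))
  obtain ⟨ps, hps⟩ := hpex
  -- entry bounds for fractional entries
  have hfrac01 : ∀ i j, D i j ≠ 0 → 0 < A i j ∧ A i j < 1 := fun i j h =>
    isFrac_pos_lt_one (hAe i j).1 (hAe i j).2 (hsupp i j h)
  have hrowlt : ∀ i, (∑ j, D i j) ≠ 0 → (r i : ℝ) < ∑ j, A i j ∧ ∑ j, A i j < (R i : ℝ) :=
    fun i h => ⟨isFrac_lt_of_nat_le (hAr i).1 (hrow i h),
      isFrac_gt_of_le_nat (hAr i).2 (hrow i h)⟩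
  have hcollt : ∀ j, (∑ i, D i j) ≠ 0 → (c j : ℝ) < ∑ i, A i j ∧ ∑ i, A i j < (C j : ℝ) :=
    fun j h => ⟨isFrac_lt_of_nat_le (hAc j).1 (hcol j h),
      isFrac_gt_of_le_nat (hAc j).2 (hcol j h)⟩
  set base : ℝ := if 0 < D ps.1 ps.2 then (1 - A ps.1 ps.2) / D ps.1 ps.2
      else A ps.1 ps.2 / (-(D ps.1 ps.2)) with hbasedef
  have hbasepos : 0 < base := by
    rcases lt_or_gt_of_ne hps with h | h
    · rw [hbasedef, if_neg (by linarith)]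
      exact div_pos (hfrac01 _ _ hps).1 (by linarith)
    · rw [hbasedef, if_pos h]
      exact div_pos (by linarith [(hfrac01 _ _ hps).2]) h
  set val : (Fin n × Fin m) ⊕ (Fin n ⊕ Fin m) → ℝ := fun x =>
    match x with
    | .inl p => if 0 < D p.1 p.2 then (1 - A p.1 p.2) / D p.1 p.2
        else if D p.1 p.2 < 0 then A p.1 p.2 / (-(D p.1 p.2)) else base
    | .inr (.inl i) => if 0 < ∑ j, D i j then ((R i : ℝ) - ∑ j, A i j) / (∑ j, D i j)
        else if (∑ j, D i j) < 0 then ((∑ j, A i j) - (r i : ℝ)) / (-(∑ j, D i j)) else base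
    | .inr (.inr j) => if 0 < ∑ i, D i j then ((C j : ℝ) - ∑ i, A i j) / (∑ i, D i j)
        else if (∑ i, D i j) < 0 then ((∑ i, A i j) - (c j : ℝ)) / (-(∑ i, D i j)) else base
    with hvaldef
  have hvalpos : ∀ x, 0 < val x := by
    intro x
    match x with
    | .inl p =>
      show (0:ℝ) < if 0 < D p.1 p.2 then _ else _
      split_ifs with h1 h2
      · exact div_pos (by linarith [(hfrac01 p.1 p.2 (ne_of_gt h1)).2]) h1
      · exact div_pos (hfrac01 p.1 p.2 (ne_of_lt h2)).1 (by linarith)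
      · exact hbasepos
    | .inr (.inl i) =>
      show (0:ℝ) < if 0 < ∑ j, D i j then _ else _
      split_ifs with h1 h2
      · exact div_pos (by linarith [(hrowlt i (ne_of_gt h1)).2]) h1
      · exact div_pos (by linarith [(hrowlt i (ne_of_lt h2)).1]) (by linarith)
      · exact hbasepos
    | .inr (.inr j) =>
      show (0:ℝ) < if 0 < ∑ i, D i j then _ else _
      split_ifs with h1 h2
      · exact div_pos (by linarith [(hcollt j (ne_of_gt h1)).2]) h1
      · exact div_pos (by linarith [(hcollt j (ne_of_lt h2)).1]) (by linarith)
      · exact hbasepos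
  set S : Finset ℝ := Finset.image val univ with hS
  have hSne : S.Nonempty :=
    ⟨val (Sum.inl ps), by rw [hS]; exact mem_image_of_mem val (mem_univ (Sum.inl ps))⟩
  set ε : ℝ := S.min' hSne with hεdef
  have hεle : ∀ x, ε ≤ val x := fun x =>
    min'_le _ _ (by rw [hS]; exact mem_image_of_mem val (mem_univ x))
  have hεpos : 0 < ε := by
    have hεS : ε ∈ S := S.min'_mem hSne
    rw [hS] at hεS
    obtain ⟨x, -, hx⟩ := mem_image.1 hεS
    exact hx ▸ hvalpos x
  set B : Matrix (Fin n) (Fin m) ℝ := A + ε • D with hBdef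
  have hBij : ∀ i j, B i j = A i j + ε * D i j := by
    intro i j; simp [hBdef, Matrix.add_apply, Matrix.smul_apply]
  have hBrow : ∀ i, ∑ j, B i j = (∑ j, A i j) + ε * ∑ j, D i j := by
    intro i; simp [hBij, Finset.sum_add_distrib, Finset.mul_sum]
  have hBcol : ∀ j, ∑ i, B i j = (∑ i, A i j) + ε * ∑ i, D i j := by
    intro j; simp [hBij, Finset.sum_add_distrib, Finset.mul_sum]
  -- membership
  have hBmem : B ∈ transportU n m r R c C := by
    refine ⟨fun i j => ?_, fun i => ?_, fun j => ?_⟩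
    · rw [hBij]
      rcases lt_trichotomy (D i j) 0 with h | h | h
      · constructor
        · have := hεle (Sum.inl (i, j))
          rw [hvaldef] at this
          simp only [if_neg (by linarith : ¬ 0 < D i j), if_pos h] at this
          rw [le_div_iff₀ (by linarith : (0:ℝ) < -(D i j))] at this
          nlinarith
        · nlinarith [(hAe i j).2]
      · simp [h, hAe i j]
      · constructor
        · nlinarith [(hAe i j).1]
        · have := hεle (Sum.inl (i, j))
          rw [hvaldef] at this
          simp only [if_pos h] at this
          rw [le_div_iff₀ h] at this
          nlinarith
    · rw [hBrow]
      rcases lt_trichotomy (∑ j, D i j) 0 with h | h | h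
      · constructor
        · have := hεle (Sum.inr (Sum.inl i))
          rw [hvaldef] at this
          simp only [if_neg (by linarith : ¬ 0 < ∑ j, D i j), if_pos h] at this
          rw [le_div_iff₀ (by linarith : (0:ℝ) < -(∑ j, D i j))] at this
          nlinarith
        · nlinarith [(hAr i).2]
      · simp [h, hAr i]
      · constructor
        · nlinarith [(hAr i).1]
        · have := hεle (Sum.inr (Sum.inl i))
          rw [hvaldef] at this
          simp only [if_pos h] at this
          rw [le_div_iff₀ h] at this
          nlinarith
    · rw [hBcol]
      rcases lt_trichotomy (∑ i, D i j) 0 with h | h | h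
      · constructor
        · have := hεle (Sum.inr (Sum.inr j))
          rw [hvaldef] at this
          simp only [if_neg (by linarith : ¬ 0 < ∑ i, D i j), if_pos h] at this
          rw [le_div_iff₀ (by linarith : (0:ℝ) < -(∑ i, D i j))] at this
          nlinarith
        · nlinarith [(hAc j).2]
      · simp [h, hAc j]
      · constructor
        · nlinarith [(hAc j).1]
        · have := hεle (Sum.inr (Sum.inr j))
          rw [hvaldef] at this
          simp only [if_pos h] at this
          rw [le_div_iff₀ h] at this
          nlinarith
  -- monotone inclusion of fractional sets
  have hsub1 : {p : Fin n × Fin m | IsFrac (B p.1 p.2)} ⊆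
      {p : Fin n × Fin m | IsFrac (A p.1 p.2)} := by
    intro p hp
    by_contra hna
    have hD : D p.1 p.2 = 0 := by
      by_contra hd; exact hna (hsupp _ _ hd)
    have : B p.1 p.2 = A p.1 p.2 := by rw [hBij, hD]; ring
    rw [Set.mem_setOf_eq, this] at hp
    exact hna hp
  have hsub2 : {i : Fin n | IsFrac (∑ j, B i j)} ⊆ {i : Fin n | IsFrac (∑ j, A i j)} := by
    intro i hi
    by_contra hna
    have hD : (∑ j, D i j) = 0 := by
      by_contra hd; exact hna (hrow _ hd)
    have : (∑ j, B i j) = ∑ j, A i j := by rw [hBrow, hD]; ring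
    rw [Set.mem_setOf_eq, this] at hi
    exact hna hi
  have hsub3 : {j : Fin m | IsFrac (∑ i, B i j)} ⊆ {j : Fin m | IsFrac (∑ i, A i j)} := by
    intro j hj
    by_contra hna
    have hD : (∑ i, D i j) = 0 := by
      by_contra hd; exact hna (hcol _ hd)
    have : (∑ i, B i j) = ∑ i, A i j := by rw [hBcol, hD]; ring
    rw [Set.mem_setOf_eq, this] at hj
    exact hna hj
  -- a witness becoming integral
  have claim_entry : ∀ p : Fin n × Fin m, D p.1 p.2 ≠ 0 → val (Sum.inl p) = ε →
      IsFrac (A p.1 p.2) ∧ ¬ IsFrac (B p.1 p.2) := by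
    intro p hd hv
    refine ⟨hsupp _ _ hd, ?_⟩
    rcases lt_or_gt_of_ne hd with h | h
    · have : val (Sum.inl p) = A p.1 p.2 / (-(D p.1 p.2)) := by
        rw [hvaldef]; simp only [if_neg (by linarith : ¬ 0 < D p.1 p.2), if_pos h]
      rw [this] at hv
      have hB0 : B p.1 p.2 = 0 := by
        have hne0 : -(D p.1 p.2) ≠ 0 := neg_ne_zero.mpr hd
        rw [hBij, ← hv]
        field_simp
        ring
      rw [hB0]; exact not_isFrac_zero
    · have : val (Sum.inl p) = (1 - A p.1 p.2) / D p.1 p.2 := by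
        rw [hvaldef]; simp only [if_pos h]
      rw [this] at hv
      have hB1 : B p.1 p.2 = 1 := by
        rw [hBij, ← hv]
        field_simp
        ring
      rw [hB1]; exact not_isFrac_one
  have claim_row : ∀ i, (∑ j, D i j) ≠ 0 → val (Sum.inr (Sum.inl i)) = ε →
      IsFrac (∑ j, A i j) ∧ ¬ IsFrac (∑ j, B i j) := by
    intro i hd hv
    refine ⟨hrow _ hd, ?_⟩
    rcases lt_or_gt_of_ne hd with h | h
    · have : val (Sum.inr (Sum.inl i)) = ((∑ j, A i j) - (r i : ℝ)) / (-(∑ j, D i j)) := by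
        rw [hvaldef]; simp only [if_neg (by linarith : ¬ 0 < ∑ j, D i j), if_pos h]
      rw [this] at hv
      have hB0 : (∑ j, B i j) = (r i : ℝ) := by
        have hne0 : -(∑ j, D i j) ≠ 0 := neg_ne_zero.mpr hd
        rw [hBrow, ← hv]
        field_simp
        ring
      rw [hB0]; exact not_isFrac_nat _
    · have : val (Sum.inr (Sum.inl i)) = ((R i : ℝ) - ∑ j, A i j) / (∑ j, D i j) := by
        rw [hvaldef]; simp only [if_pos h]
      rw [this] at hv
      have hB1 : (∑ j, B i j) = (R i : ℝ) := by
        rw [hBrow, ← hv]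
        field_simp
        ring
      rw [hB1]; exact not_isFrac_nat _
  have claim_col : ∀ j, (∑ i, D i j) ≠ 0 → val (Sum.inr (Sum.inr j)) = ε →
      IsFrac (∑ i, A i j) ∧ ¬ IsFrac (∑ i, B i j) := by
    intro j hd hv
    refine ⟨hcol _ hd, ?_⟩
    rcases lt_or_gt_of_ne hd with h | h
    · have : val (Sum.inr (Sum.inr j)) = ((∑ i, A i j) - (c j : ℝ)) / (-(∑ i, D i j)) := by
        rw [hvaldef]; simp only [if_neg (by linarith : ¬ 0 < ∑ i, D i j), if_pos h]
      rw [this] at hv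
      have hB0 : (∑ i, B i j) = (c j : ℝ) := by
        have hne0 : -(∑ i, D i j) ≠ 0 := neg_ne_zero.mpr hd
        rw [hBcol, ← hv]
        field_simp
        ring
      rw [hB0]; exact not_isFrac_nat _
    · have : val (Sum.inr (Sum.inr j)) = ((C j : ℝ) - ∑ i, A i j) / (∑ i, D i j) := by
        rw [hvaldef]; simp only [if_pos h]
      rw [this] at hv
      have hB1 : (∑ i, B i j) = (C j : ℝ) := by
        rw [hBcol, ← hv]
        field_simp
        ring
      rw [hB1]; exact not_isFrac_nat _
  have hvalstar : val (Sum.inl ps) = base := by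
    rcases lt_or_gt_of_ne hps with h | h
    · rw [hvaldef, hbasedef]
      simp only [if_neg (by linarith : ¬ 0 < D ps.1 ps.2), if_pos h]
    · rw [hvaldef, hbasedef]
      simp only [if_pos h]
  have hGood : (∃ p : Fin n × Fin m, IsFrac (A p.1 p.2) ∧ ¬ IsFrac (B p.1 p.2)) ∨
      (∃ i, IsFrac (∑ j, A i j) ∧ ¬ IsFrac (∑ j, B i j)) ∨
      (∃ j, IsFrac (∑ i, A i j) ∧ ¬ IsFrac (∑ i, B i j)) := by
    have hεS : ε ∈ S := S.min'_mem hSne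
    rw [hS] at hεS
    obtain ⟨x, -, hx⟩ := mem_image.1 hεS
    have hbase_case : ε = base → (∃ p : Fin n × Fin m, IsFrac (A p.1 p.2) ∧
        ¬ IsFrac (B p.1 p.2)) := by
      intro hb
      exact ⟨ps, claim_entry ps hps (by rw [hvalstar, hb])⟩
    match x with
    | .inl p =>
      by_cases hd : D p.1 p.2 = 0
      · apply Or.inl
        apply hbase_case
        rw [← hx, hvaldef]
        simp [hd]
      · exact Or.inl ⟨p, claim_entry p hd hx⟩
    | .inr (.inl i) =>
      by_cases hd : (∑ j, D i j) = 0
      · apply Or.inl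
        apply hbase_case
        rw [← hx, hvaldef]
        simp [hd]
      · exact Or.inr (Or.inl ⟨i, claim_row i hd hx⟩)
    | .inr (.inr j) =>
      by_cases hd : (∑ i, D i j) = 0
      · apply Or.inl
        apply hbase_case
        rw [← hx, hvaldef]
        simp [hd]
      · exact Or.inr (Or.inr ⟨j, claim_col j hd hx⟩)
  refine ⟨ε, hεpos, hBmem, ?_⟩
  rw [show A + ε • D = B from hBdef.symm]
  have hle1 : {p : Fin n × Fin m | IsFrac (B p.1 p.2)}.ncard ≤
      {p : Fin n × Fin m | IsFrac (A p.1 p.2)}.ncard :=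
    Set.ncard_le_ncard hsub1 (Set.toFinite _)
  have hle2 : {i : Fin n | IsFrac (∑ j, B i j)}.ncard ≤
      {i : Fin n | IsFrac (∑ j, A i j)}.ncard :=
    Set.ncard_le_ncard hsub2 (Set.toFinite _)
  have hle3 : {j : Fin m | IsFrac (∑ i, B i j)}.ncard ≤
      {j : Fin m | IsFrac (∑ i, A i j)}.ncard :=
    Set.ncard_le_ncard hsub3 (Set.toFinite _)
  rcases hGood with ⟨p, hpA, hpB⟩ | ⟨i, hiA, hiB⟩ | ⟨j, hjA, hjB⟩
  · have hlt : {p : Fin n × Fin m | IsFrac (B p.1 p.2)}.ncard <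
        {p : Fin n × Fin m | IsFrac (A p.1 p.2)}.ncard := by
      apply Set.ncard_lt_ncard _ (Set.toFinite _)
      exact ⟨hsub1, fun hcon => hpB (hcon hpA)⟩
    unfold mu
    omega
  · have hlt : {i : Fin n | IsFrac (∑ j, B i j)}.ncard <
        {i : Fin n | IsFrac (∑ j, A i j)}.ncard := by
      apply Set.ncard_lt_ncard _ (Set.toFinite _)
      exact ⟨hsub2, fun hcon => hiB (hcon hiA)⟩
    unfold mu
    omega
  · have hlt : {j : Fin m | IsFrac (∑ i, B i j)}.ncard <
        {j : Fin m | IsFrac (∑ i, A i j)}.ncard := by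
      apply Set.ncard_lt_ncard _ (Set.toFinite _)
      exact ⟨hsub3, fun hcon => hjB (hcon hjA)⟩
    unfold mu
    omega

lemma convex_transportU (n m : ℕ) (r R : Fin n → ℕ) (c C : Fin m → ℕ) :
    Convex ℝ (transportU n m r R c C) := by
  intro x hx y hy a b ha hb hab
  obtain ⟨hxe, hxr, hxc⟩ := hx
  obtain ⟨hye, hyr, hyc⟩ := hy
  have hentry : ∀ i j, (a • x + b • y) i j = a * x i j + b * y i j := by
    intro i j; simp [Matrix.add_apply, Matrix.smul_apply, smul_eq_mul]
  refine ⟨fun i j => ?_, fun i => ?_, fun j => ?_⟩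
  · rw [hentry]
    constructor
    · have := (hxe i j).1; have := (hye i j).1; positivity
    · nlinarith [(hxe i j).2, (hye i j).2]
  · have hsum : ∑ j, (a • x + b • y) i j = a * (∑ j, x i j) + b * (∑ j, y i j) := by
      simp [hentry, Finset.sum_add_distrib, Finset.mul_sum]
    rw [hsum]
    constructor
    · nlinarith [(hxr i).1, (hyr i).1]
    · nlinarith [(hxr i).2, (hyr i).2]
  · have hsum : ∑ i, (a • x + b • y) i j = a * (∑ i, x i j) + b * (∑ i, y i j) := by
      simp [hentry, Finset.sum_add_distrib, Finset.mul_sum]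
    rw [hsum]
    constructor
    · nlinarith [(hxc j).1, (hyc j).1]
    · nlinarith [(hxc j).2, (hyc j).2]

theorem transportU_eq_convexHull (n m : ℕ) (hn : 0 < n) (hm : 0 < m)
    (r R : Fin n → ℕ) (c C : Fin m → ℕ)
    (hrR : ∀ i, r i ≤ R i) (hcC : ∀ j, c j ≤ C j) :
    transportU n m r R c C =
      convexHull ℝ {A ∈ transportU n m r R c C | ∀ i j, A i j = 0 ∨ A i j = 1} := by
  apply subset_antisymm
  · intro A hA
    suffices H : ∀ N (A : Matrix (Fin n) (Fin m) ℝ), mu A = N →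
        A ∈ transportU n m r R c C →
        A ∈ convexHull ℝ {A ∈ transportU n m r R c C | ∀ i j, A i j = 0 ∨ A i j = 1} from
      H (mu A) A rfl hA
    intro N
    induction N using Nat.strong_induction_on with
    | _ N ih =>
      intro A hmu hA
      by_cases hfrac : ∃ p : Fin n × Fin m, IsFrac (A p.1 p.2)
      · obtain ⟨D, hD0, hsupp, hrow, hcol⟩ := exists_direction A hfrac
        obtain ⟨t, ht, hBmem, hBmu⟩ := step r R c C A hA D hD0 hsupp hrow hcol
        obtain ⟨s, hs, hCmem, hCmu⟩ := step r R c C A hA (-D) (neg_ne_zero.mpr hD0)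
          (fun i j h => hsupp i j (by simpa using h))
          (fun i h => hrow i (by
            intro h0
            apply h
            simp only [Matrix.neg_apply]
            rw [Finset.sum_neg_distrib, h0, neg_zero]))
          (fun j h => hcol j (by
            intro h0
            apply h
            simp only [Matrix.neg_apply]
            rw [Finset.sum_neg_distrib, h0, neg_zero]))
        have hB := ih _ (hmu ▸ hBmu) _ rfl hBmem
        have hC := ih _ (hmu ▸ hCmu) _ rfl hCmem
        have hts : 0 < t + s := by linarith
        have hcomb : A = (s / (t + s)) • (A + t • D) + (t / (t + s)) • (A + s • (-D)) := by
          funext i j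
          simp only [Matrix.add_apply, Matrix.smul_apply, Matrix.neg_apply, smul_eq_mul]
          field_simp
          ring
        rw [hcomb]
        exact (convex_convexHull ℝ _) hB hC (by positivity) (by positivity)
          (by field_simp; ring)
      · push_neg at hfrac
        apply subset_convexHull
        refine ⟨hA, fun i j => ?_⟩
        have h01 := hA.1 i j
        have hnf := hfrac (i, j)
        simp only [IsFrac, not_forall, not_not] at hnf
        obtain ⟨z, hz⟩ := hnf
        have hz0 : (0 : ℤ) ≤ z := by
          have := h01.1
          rw [hz] at this
          exact_mod_cast this
        have hz1 : z ≤ 1 := by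
          have := h01.2
          rw [hz] at this
          exact_mod_cast this
        interval_cases z
        · left; simpa using hz
        · right; simpa using hz
  · exact convexHull_min (fun A hA => hA.1) (convex_transportU n m r R c C)
end

section
/- Every extreme point of U^k(R_min^max, C_min^max) is a 0-1 matrix. -/
open Finset

namespace TransportExtreme


lemma binary_sum_int {γ : Type*} (s : Finset γ) (f : γ → ℝ)
    (h : ∀ x ∈ s, f x = 0 ∨ f x = 1) : ∃ z : ℤ, ∑ x ∈ s, f x = (z : ℝ) := by
  refine ⟨∑ x ∈ s, if f x = 1 then 1 else 0, ?_⟩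
  push_cast
  refine Finset.sum_congr rfl fun x hx => ?_
  rcases h x hx with h0 | h1
  · rw [h0, if_neg (by norm_num)]
  · rw [h1, if_pos rfl]

lemma not_int_unit {x : ℝ} (h0 : 0 < x) (h1 : x < 1) : ¬ ∃ z : ℤ, x = (z : ℝ) := by
  rintro ⟨z, rfl⟩
  have hz0 : 0 < z := by exact_mod_cast h0
  have hz1 : z < 1 := by exact_mod_cast h1
  omega

lemma sum_pairs (f : ℕ → ℝ) (x : ℕ) (h : ∀ q, f (x + 2*q) + f (x + 2*q + 1) = 0) :
    ∀ p, ∑ a ∈ Finset.Ico x (x + 2*p), f a = 0 := by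
  intro p
  induction p with
  | zero => simp
  | succ p ih =>
      have h1 : x + 2*(p+1) = (x + 2*p + 1) + 1 := by ring
      rw [h1, Finset.sum_Ico_succ_top (by omega), Finset.sum_Ico_succ_top (by omega), ih]
      linarith [h p]

set_option linter.unusedSectionVars false

section Core

variable {α β : Type*} [Fintype α] [Fintype β] [DecidableEq α] [DecidableEq β]

lemma inner_row (p : Option α × Option β) (i : α) :
    ∑ j : β, (if p = (some i, some j) then (1:ℝ) else 0)
      = (if p.1 = some i then 1 else 0) - (if p = (some i, none) then 1 else 0) := by
  obtain ⟨x, y⟩ := p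
  cases x with
  | none => simp [Prod.ext_iff]
  | some i' =>
    cases y with
    | none => by_cases hii : i' = i <;> simp [Prod.ext_iff, hii]
    | some j' => by_cases hii : i' = i <;> simp [Prod.ext_iff, hii, Finset.sum_ite_eq]

lemma inner_col (p : Option α × Option β) (j : β) :
    ∑ i : α, (if p = (some i, some j) then (1:ℝ) else 0)
      = (if p.2 = some j then 1 else 0) - (if p = (none, some j) then 1 else 0) := by
  obtain ⟨x, y⟩ := p
  cases y with
  | none => simp [Prod.ext_iff]
  | some j' =>
    cases x with
    | none => by_cases hjj : j' = j <;> simp [Prod.ext_iff, hjj]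
    | some i' => by_cases hjj : j' = j <;> simp [Prod.ext_iff, hjj, Finset.sum_ite_eq]

lemma inner_one {γ : Type*} [Fintype γ] [DecidableEq γ] (x : Option γ) :
    ∑ i : γ, (if x = some i then (1:ℝ) else 0) = 1 - (if x = none then 1 else 0) := by
  cases x with
  | none => simp
  | some i' => simp [Finset.sum_ite_eq]

lemma core
    (adj : Option α → Option β → Prop)
    (hnone : ¬ adj none none)
    (e : ℕ → Option α × Option β)
    (hadj : ∀ k, adj (e k).1 (e k).2)
    (hE : ∀ k, Even k → (e (k+1)).2 = (e k).2 ∧ (e (k+1)).1 ≠ (e k).1)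
    (hO : ∀ k, ¬ Even k → (e (k+1)).1 = (e k).1 ∧ (e (k+1)).2 ≠ (e k).2)
    (s t : ℕ) (hst : s < t) (hs : Even s) (ht : Even t)
    (hclose : (e s).2 = (e t).2)
    (hinjE : ∀ a b, s ≤ a → a < b → b < t → Even a → Even b → (e a).2 ≠ (e b).2)
    (hinjO : ∀ a b, s ≤ a → a < b → b < t → ¬ Even a → ¬ Even b → (e a).1 ≠ (e b).1) :
    ∃ D : α → β → ℝ,
      (∀ i j, D i j ≠ 0 → adj (some i) (some j)) ∧
      (∃ i j, D i j ≠ 0) ∧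
      (∀ i, ¬ adj (some i) none → ∑ j, D i j = 0) ∧
      (∀ j, ¬ adj none (some j) → ∑ i, D i j = 0) ∧
      (∑ i, ∑ j, D i j = 0) := by
  obtain ⟨p, hp⟩ : ∃ p, t = s + 2 * p := by
    obtain ⟨u, hu⟩ := id hs; obtain ⟨v, hv⟩ := id ht
    exact ⟨v - u, by omega⟩
  have h4 : s + 4 ≤ t := by
    have hp0 : p ≠ 0 := by rintro rfl; omega
    have hp1 : p ≠ 1 := by
      rintro rfl
      have h1 := (hE s hs).1
      have h2 := (hO (s+1) (by simp [Nat.even_add_one, hs])).2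
      rw [show s + 1 + 1 = s + 2*1 by ring, ← hp] at h2
      exact h2 (by rw [← hclose, h1])
    omega
  have hC1 : ∀ v : Option α,
      ∑ a ∈ Finset.Ico (s+1) (t+1), ((-1:ℝ))^a * (if (e a).1 = v then 1 else 0) = 0 := by
    intro v
    rw [show t + 1 = (s+1) + 2 * p by omega]
    apply sum_pairs
    intro q
    have hodd : ¬ Even (s + 1 + 2*q) := by
      simp [Nat.even_add, Nat.even_add_one, hs, parity_simps]
    have h := (hO _ hodd).1
    rw [h, pow_succ]
    ring
  have hC2 : ∀ v : Option β,
      ∑ a ∈ Finset.Ico (s+1) (t+1), ((-1:ℝ))^a * (if (e a).2 = v then 1 else 0) = 0 := by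
    intro v
    have e1 : ∑ a ∈ Finset.Ico (s+1) (t+1), ((-1:ℝ))^a * (if (e a).2 = v then 1 else 0)
        = ∑ a ∈ Finset.Ico (s+1) t, ((-1:ℝ))^a * (if (e a).2 = v then 1 else 0)
          + ((-1:ℝ))^t * (if (e t).2 = v then 1 else 0) :=
      Finset.sum_Ico_succ_top (by omega) _
    have e2 : ∑ a ∈ Finset.Ico (s+1) t, ((-1:ℝ))^a * (if (e a).2 = v then 1 else 0)
        = ((-1:ℝ))^(s+1) * (if (e (s+1)).2 = v then 1 else 0)
          + ∑ a ∈ Finset.Ico (s+2) t, ((-1:ℝ))^a * (if (e a).2 = v then 1 else 0) :=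
      Finset.sum_eq_sum_Ico_succ_bot (by omega) _
    have e3 : ∑ a ∈ Finset.Ico (s+2) t, ((-1:ℝ))^a * (if (e a).2 = v then 1 else 0) = 0 := by
      rw [show t = (s+2) + 2 * (p-1) by omega]
      apply sum_pairs
      intro q
      have heven : Even (s + 2 + 2*q) := by
        simp [Nat.even_add, hs, parity_simps]
      have h := (hE _ heven).1
      rw [h, pow_succ]
      ring
    have hb : (e (s+1)).2 = (e t).2 := by rw [(hE s hs).1, hclose]
    have hsgn1 : ((-1:ℝ))^(s+1) = -1 := by
      rw [pow_succ, Even.neg_one_pow hs]; ring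
    have hsgnt : ((-1:ℝ))^t = 1 := Even.neg_one_pow ht
    rw [e1, e2, e3, hb, hsgn1, hsgnt]
    ring
  have hsum0 : ∑ a ∈ Finset.Ico (s+1) (t+1), ((-1:ℝ))^a = 0 := by
    rw [show t + 1 = (s+1) + 2 * p by omega]
    apply sum_pairs
    intro q
    rw [pow_succ]; ring
  -- basic parity facts
  obtain ⟨u, hu⟩ := id hs
  obtain ⟨v, hv⟩ := id ht
  have hOdd1 : ¬ Even (s+1) := by rintro ⟨w, hw⟩; omega
  have hEven2 : Even (s+2) := ⟨u+1, by omega⟩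
  have hE1 := hE s hs
  have hO1 := hO (s+1) hOdd1
  have hE2 := hE (s+2) hEven2
  have hO1fst : (e (s+2)).1 = (e (s+1)).1 := hO1.1
  have hO1snd : (e (s+2)).2 ≠ (e (s+1)).2 := hO1.2
  have hE2snd : (e (s+3)).2 = (e (s+2)).2 := hE2.1
  have hE2fst : (e (s+3)).1 ≠ (e (s+2)).1 := hE2.2
  -- uniqueness of occurrence of e (s+1), e (s+2), e (s+3) in the window
  have hU1 : ∀ b, s+1 ≤ b → b ≤ t → e b = e (s+1) → b = s+1 := by
    intro b hb1 hb2 heq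
    by_contra hne
    have h1 := congrArg Prod.fst heq
    have h2 := congrArg Prod.snd heq
    rcases Nat.even_or_odd b with hbe | hbo
    · by_cases hbt : b = t
      · have hoddt : ¬ Even (t-1) := by rintro ⟨w, hw⟩; omega
        have h5 : (e t).1 = (e (t-1)).1 := by
          have := (hO (t-1) hoddt).1
          rwa [show t - 1 + 1 = t by omega] at this
        rw [hbt] at h1
        exact hinjO (s+1) (t-1) (by omega) (by omega) (by omega) hOdd1 hoddt
          (by rw [← h1, h5])
      · obtain ⟨w, hw⟩ := hbe
        have : (e s).2 = (e b).2 := by rw [h2, hE1.1]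
        exact hinjE s b le_rfl (by omega) (by omega) hs ⟨w, hw⟩ this
    · obtain ⟨w, hw⟩ := hbo
      have hbo' : ¬ Even b := by rintro ⟨w2, hw2⟩; omega
      exact hinjO (s+1) b (by omega) (by omega) (by omega) hOdd1 hbo' h1.symm
  have hU2 : ∀ b, s+1 ≤ b → b ≤ t → e b = e (s+2) → b = s+2 := by
    intro b hb1 hb2 heq
    by_contra hne
    have h1 := congrArg Prod.fst heq
    have h2 := congrArg Prod.snd heq
    rcases Nat.even_or_odd b with hbe | hbo
    · obtain ⟨w, hw⟩ := hbe
      by_cases hbt : b = t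
      · subst hbt
        exact hinjE s (s+2) le_rfl (by omega) (by omega) hs hEven2 (by rw [hclose, h2])
      · rcases lt_or_gt_of_ne hne with hlt | hgt
        · omega
        · exact hinjE (s+2) b (by omega) hgt (by omega) hEven2 ⟨w, hw⟩ h2.symm
    · obtain ⟨w, hw⟩ := hbo
      have hbev : Even (b-1) := ⟨w, by omega⟩
      have h5 : (e b).2 = (e (b-1)).2 := by
        have := (hE (b-1) hbev).1
        rwa [show b - 1 + 1 = b by omega] at this
      by_cases hb3 : b = s + 3
      · exact hE2fst (by rw [← hb3, h1])
      · by_cases hbs1 : b = s + 1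
        · -- b-1 = s : (e s).2 = (e (s+2)).2
          refine hinjE s (s+2) le_rfl (by omega) (by omega) hs hEven2 ?_
          have e1 : b - 1 = s := by omega
          rw [← h2, h5, e1]
        · -- b-1 even, b-1 ≠ s+2 (since b ≠ s+3), b-1 ≥ s+2? b odd ≥ s+1, b ≠ s+1 so b ≥ s+3, b≠s+3 so b ≥ s+5
          have : (e (s+2)).2 ≠ (e (b-1)).2 :=
            hinjE (s+2) (b-1) (by omega) (by omega) (by omega) hEven2 hbev
          exact this (by rw [← h5, h2])
  have hU3 : ∀ b, s+1 ≤ b → b ≤ t → e b = e (s+3) → b = s+3 := by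
    intro b hb1 hb2 heq
    by_contra hne
    have h1 := congrArg Prod.fst heq
    have h2 := congrArg Prod.snd heq
    rcases Nat.even_or_odd b with hbe | hbo
    · obtain ⟨w, hw⟩ := hbe
      by_cases hbt : b = t
      · -- (e t).2 = (e s).2, and (e (s+3)).2 = (e (s+2)).2 ⇒ (e s).2 = (e (s+2)).2
        refine hinjE s (s+2) le_rfl (by omega) (by omega) hs hEven2 ?_
        rw [hclose, ← hbt, h2, hE2snd]
      · by_cases hb22 : b = s + 2
        · exact hE2fst (by rw [← heq, hb22])
        · -- b even, ≥ s+2, ≠ s+2 ⇒ b ≥ s+4 ; (e b).2 = (e (s+2)).2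
          refine hinjE (s+2) b (by omega) (by omega) (by omega) hEven2 ⟨w, hw⟩ ?_
          rw [h2, hE2snd]
    · obtain ⟨w, hw⟩ := hbo
      have hbo' : ¬ Even b := by rintro ⟨w2, hw2⟩; omega
      have hOdd3 : ¬ Even (s+3) := by rintro ⟨w2, hw2⟩; omega
      rcases lt_or_gt_of_ne hne with hlt | hgt
      · -- b odd, s+1 ≤ b < s+3 ⇒ b = s+1
        exact hinjO (s+1) (s+3) (by omega) (by omega) (by omega) hOdd1 hOdd3
          (by rw [← h1, show b = s+1 by omega])
      · have hblt : b < t := by omega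
        exact hinjO (s+3) b (by omega) hgt hblt hOdd3 hbo' h1.symm
  -- select a uniquely-occurring real edge in the window
  have hmain : ∃ a₀ i₀ j₀, (s+1 ≤ a₀ ∧ a₀ ≤ s+3) ∧ e a₀ = (some i₀, some j₀) ∧
      (∀ b, s+1 ≤ b → b ≤ t → e b = e a₀ → b = a₀) := by
    by_cases hb1 : (e (s+1)).2 = none
    · -- use s+2
      have hf1 : (e (s+1)).1 ≠ none := by
        intro h
        apply hnone
        have h7 := hadj (s+1)
        rwa [h, hb1] at h7
      have hf2 : (e (s+2)).1 ≠ none := by rw [hO1fst]; exact hf1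
      have hs2 : (e (s+2)).2 ≠ none := by rw [hb1] at hO1snd; exact hO1snd
      obtain ⟨i₀, hi₀⟩ := Option.ne_none_iff_exists'.mp hf2
      obtain ⟨j₀, hj₀⟩ := Option.ne_none_iff_exists'.mp hs2
      exact ⟨s+2, i₀, j₀, ⟨by omega, by omega⟩, by rw [Prod.ext_iff]; exact ⟨hi₀, hj₀⟩, hU2⟩
    · by_cases hb2 : (e (s+1)).1 = none
      · -- use s+3
        have hf2 : (e (s+2)).1 = none := by rw [hO1fst]; exact hb2
        have hs2 : (e (s+2)).2 ≠ none := by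
          intro h
          apply hnone
          have h7 := hadj (s+2)
          rwa [hf2, h] at h7
        have hf3 : (e (s+3)).1 ≠ none := by
          intro h
          exact hE2fst (by rw [h, hf2])
        have hs3 : (e (s+3)).2 ≠ none := by rw [hE2snd]; exact hs2
        obtain ⟨i₀, hi₀⟩ := Option.ne_none_iff_exists'.mp hf3
        obtain ⟨j₀, hj₀⟩ := Option.ne_none_iff_exists'.mp hs3
        exact ⟨s+3, i₀, j₀, ⟨by omega, by omega⟩, by rw [Prod.ext_iff]; exact ⟨hi₀, hj₀⟩, hU3⟩
      · -- use s+1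
        obtain ⟨i₀, hi₀⟩ := Option.ne_none_iff_exists'.mp hb2
        obtain ⟨j₀, hj₀⟩ := Option.ne_none_iff_exists'.mp hb1
        exact ⟨s+1, i₀, j₀, ⟨le_rfl, by omega⟩, by rw [Prod.ext_iff]; exact ⟨hi₀, hj₀⟩, hU1⟩
  obtain ⟨a₀, i₀, j₀, ha₀r, hea₀, huniq⟩ := hmain
  refine ⟨fun i j => ∑ a ∈ Finset.Ico (s+1) (t+1),
      ((-1:ℝ))^a * (if e a = (some i, some j) then 1 else 0), ?_, ?_, ?_, ?_, ?_⟩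
  · -- support
    intro i j hDij
    by_contra hnadj
    apply hDij
    apply Finset.sum_eq_zero
    intro a ha
    rw [if_neg, mul_zero]
    intro hea
    have h7 := hadj a
    rw [hea] at h7
    exact hnadj h7
  · -- nonzero
    refine ⟨i₀, j₀, ?_⟩
    beta_reduce
    have hmem : a₀ ∈ Finset.Ico (s+1) (t+1) := by
      rw [Finset.mem_Ico]; omega
    have hval : ∑ a ∈ Finset.Ico (s+1) (t+1),
        ((-1:ℝ))^a * (if e a = (some i₀, some j₀) then 1 else 0) = ((-1:ℝ))^a₀ := by
      rw [Finset.sum_eq_single_of_mem a₀ hmem]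
      · rw [if_pos hea₀, mul_one]
      · intro b hb hbne
        rw [Finset.mem_Ico] at hb
        rw [if_neg, mul_zero]
        intro h
        exact hbne (huniq b hb.1 (by omega) (h.trans hea₀.symm))
    rw [hval]
    exact pow_ne_zero _ (by norm_num)
  · -- row sums vanish at constrained rows
    intro i hi
    beta_reduce
    have h1 : ∑ j, ∑ a ∈ Finset.Ico (s+1) (t+1),
        ((-1:ℝ))^a * (if e a = (some i, some j) then 1 else 0)
        = ∑ a ∈ Finset.Ico (s+1) (t+1), ((-1:ℝ))^a *
            ((if (e a).1 = some i then 1 else 0) - (if e a = (some i, none) then 1 else 0)) := by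
      rw [Finset.sum_comm]
      refine Finset.sum_congr rfl fun a _ => ?_
      rw [← Finset.mul_sum, inner_row]
    rw [h1]
    have h2 : ∀ a ∈ Finset.Ico (s+1) (t+1), ((-1:ℝ))^a *
        ((if (e a).1 = some i then 1 else 0) - (if e a = (some i, none) then 1 else 0))
        = ((-1:ℝ))^a * (if (e a).1 = some i then 1 else 0) := by
      intro a _
      have : (if e a = (some i, none) then (1:ℝ) else 0) = 0 := by
        rw [if_neg]
        intro h
        apply hi
        have h7 := hadj a
        rwa [h] at h7
      rw [this, sub_zero]
    rw [Finset.sum_congr rfl h2]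
    exact hC1 (some i)
  · -- col sums vanish at constrained cols
    intro j hj
    beta_reduce
    have h1 : ∑ i, ∑ a ∈ Finset.Ico (s+1) (t+1),
        ((-1:ℝ))^a * (if e a = (some i, some j) then 1 else 0)
        = ∑ a ∈ Finset.Ico (s+1) (t+1), ((-1:ℝ))^a *
            ((if (e a).2 = some j then 1 else 0) - (if e a = (none, some j) then 1 else 0)) := by
      rw [Finset.sum_comm]
      refine Finset.sum_congr rfl fun a _ => ?_
      rw [← Finset.mul_sum, inner_col]
    rw [h1]
    have h2 : ∀ a ∈ Finset.Ico (s+1) (t+1), ((-1:ℝ))^a *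
        ((if (e a).2 = some j then 1 else 0) - (if e a = (none, some j) then 1 else 0))
        = ((-1:ℝ))^a * (if (e a).2 = some j then 1 else 0) := by
      intro a _
      have : (if e a = (none, some j) then (1:ℝ) else 0) = 0 := by
        rw [if_neg]
        intro h
        apply hj
        have h7 := hadj a
        rwa [h] at h7
      rw [this, sub_zero]
    rw [Finset.sum_congr rfl h2]
    exact hC2 (some j)
  · -- total sum vanishes
    beta_reduce
    have h1 : ∀ i : α, ∑ j, ∑ a ∈ Finset.Ico (s+1) (t+1),
        ((-1:ℝ))^a * (if e a = (some i, some j) then 1 else 0)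
        = ∑ a ∈ Finset.Ico (s+1) (t+1), ((-1:ℝ))^a *
            ((if (e a).1 = some i then 1 else 0) - (if e a = (some i, none) then 1 else 0)) := by
      intro i
      rw [Finset.sum_comm]
      refine Finset.sum_congr rfl fun a _ => ?_
      rw [← Finset.mul_sum, inner_row]
    have h2 : ∑ i : α, ∑ a ∈ Finset.Ico (s+1) (t+1), ((-1:ℝ))^a *
        ((if (e a).1 = some i then 1 else 0) - (if e a = (some i, none) then 1 else 0))
        = ∑ a ∈ Finset.Ico (s+1) (t+1), ((-1:ℝ))^a *
            ((1 - (if (e a).1 = none then 1 else 0)) - (if (e a).2 = none then 1 else 0)) := by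
      rw [Finset.sum_comm]
      refine Finset.sum_congr rfl fun a _ => ?_
      rw [← Finset.mul_sum]
      congr 1
      rw [Finset.sum_sub_distrib, inner_one]
      congr 1
      -- ∑ i, (if e a = (some i, none) then 1 else 0) = if (e a).2 = none then 1 else 0
      by_cases hsn : (e a).2 = none
      · rw [if_pos hsn]
        have hf : (e a).1 ≠ none := by
          intro h
          apply hnone
          have h7 := hadj a
          rwa [h, hsn] at h7
        obtain ⟨i', hi'⟩ := Option.ne_none_iff_exists'.mp hf
        have hpe : e a = (some i', none) := by rw [Prod.ext_iff]; exact ⟨hi', hsn⟩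
        rw [Finset.sum_eq_single_of_mem i' (Finset.mem_univ i')]
        · rw [if_pos hpe]
        · intro b _ hbne
          rw [if_neg]
          intro h
          rw [hpe] at h
          exact hbne (by
            have := congrArg Prod.fst h
            simpa using this.symm)
      · rw [if_neg hsn]
        apply Finset.sum_eq_zero
        intro i _
        rw [if_neg]
        intro h
        exact hsn (by rw [h])
    rw [Finset.sum_congr rfl (fun i _ => h1 i), h2]
    have h3 : ∀ a ∈ Finset.Ico (s+1) (t+1), ((-1:ℝ))^a *
        ((1 - (if (e a).1 = none then 1 else 0)) - (if (e a).2 = none then 1 else 0))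
        = ((-1:ℝ))^a - ((-1:ℝ))^a * (if (e a).1 = none then 1 else 0)
          - ((-1:ℝ))^a * (if (e a).2 = none then 1 else 0) := by
      intro a _
      ring
    rw [Finset.sum_congr rfl h3]
    rw [Finset.sum_sub_distrib, Finset.sum_sub_distrib, hsum0, hC1 none, hC2 none]
    ring

noncomputable def walk {α β : Type*} (adj : Option α → Option β → Prop)
    (hcol : ∀ a b, adj a b → ∃ a', a' ≠ a ∧ adj a' b)
    (hrow : ∀ a b, adj a b → ∃ b', b' ≠ b ∧ adj a b')
    (p₀ : Option α × Option β) (h₀ : adj p₀.1 p₀.2) :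
    ℕ → {p : Option α × Option β // adj p.1 p.2}
  | 0 => ⟨p₀, h₀⟩
  | (k+1) =>
    let q := walk adj hcol hrow p₀ h₀ k
    if Even k then
      ⟨((hcol q.1.1 q.1.2 q.2).choose, q.1.2), (hcol q.1.1 q.1.2 q.2).choose_spec.2⟩
    else
      ⟨(q.1.1, (hrow q.1.1 q.1.2 q.2).choose), (hrow q.1.1 q.1.2 q.2).choose_spec.2⟩

lemma walk_succ_even {α β : Type*} (adj : Option α → Option β → Prop)
    (hcol : ∀ a b, adj a b → ∃ a', a' ≠ a ∧ adj a' b)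
    (hrow : ∀ a b, adj a b → ∃ b', b' ≠ b ∧ adj a b')
    (p₀ : Option α × Option β) (h₀ : adj p₀.1 p₀.2) (k : ℕ) (hk : Even k) :
    ((walk adj hcol hrow p₀ h₀ (k+1)).1.2 = (walk adj hcol hrow p₀ h₀ k).1.2)
      ∧ (walk adj hcol hrow p₀ h₀ (k+1)).1.1 ≠ (walk adj hcol hrow p₀ h₀ k).1.1 := by
  constructor
  · rw [walk]
    simp only [hk, if_true]
  · rw [walk]
    simp only [hk, if_true]
    exact (hcol _ _ (walk adj hcol hrow p₀ h₀ k).2).choose_spec.1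

lemma walk_succ_odd {α β : Type*} (adj : Option α → Option β → Prop)
    (hcol : ∀ a b, adj a b → ∃ a', a' ≠ a ∧ adj a' b)
    (hrow : ∀ a b, adj a b → ∃ b', b' ≠ b ∧ adj a b')
    (p₀ : Option α × Option β) (h₀ : adj p₀.1 p₀.2) (k : ℕ) (hk : ¬ Even k) :
    ((walk adj hcol hrow p₀ h₀ (k+1)).1.1 = (walk adj hcol hrow p₀ h₀ k).1.1)
      ∧ (walk adj hcol hrow p₀ h₀ (k+1)).1.2 ≠ (walk adj hcol hrow p₀ h₀ k).1.2 := by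
  constructor
  · rw [walk]
    simp only [hk, if_false]
  · rw [walk]
    simp only [hk, if_false]
    exact (hrow _ _ (walk adj hcol hrow p₀ h₀ k).2).choose_spec.1

lemma exists_perturb {α β : Type*} [Fintype α] [Fintype β] [DecidableEq α] [DecidableEq β]
    (adj : Option α → Option β → Prop)
    (hnone : ¬ adj none none)
    (hcol : ∀ a b, adj a b → ∃ a', a' ≠ a ∧ adj a' b)
    (hrow : ∀ a b, adj a b → ∃ b', b' ≠ b ∧ adj a b')
    (a₀ : α) (b₀ : β) (h₀ : adj (some a₀) (some b₀)) :
    ∃ D : α → β → ℝ,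
      (∀ i j, D i j ≠ 0 → adj (some i) (some j)) ∧
      (∃ i j, D i j ≠ 0) ∧
      (∀ i, ¬ adj (some i) none → ∑ j, D i j = 0) ∧
      (∀ j, ¬ adj none (some j) → ∑ i, D i j = 0) ∧
      (∑ i, ∑ j, D i j = 0) := by
  classical
  set e : ℕ → Option α × Option β :=
    fun k => (walk adj hcol hrow (some a₀, some b₀) h₀ k).1 with he
  have hadj : ∀ k, adj (e k).1 (e k).2 := fun k => (walk adj hcol hrow (some a₀, some b₀) h₀ k).2
  have hEs : ∀ k, Even k → (e (k+1)).2 = (e k).2 ∧ (e (k+1)).1 ≠ (e k).1 :=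
    fun k hk => walk_succ_even adj hcol hrow _ h₀ k hk
  have hOs : ∀ k, ¬ Even k → (e (k+1)).1 = (e k).1 ∧ (e (k+1)).2 ≠ (e k).2 :=
    fun k hk => walk_succ_odd adj hcol hrow _ h₀ k hk
  set w : ℕ → Option α ⊕ Option β :=
    fun k => if Even k then Sum.inr (e k).2 else Sum.inl (e k).1 with hw
  -- decode equalities of w
  have hcomp : ∀ a b, w a = w b →
      ((Even a ∧ Even b ∧ (e a).2 = (e b).2) ∨ (¬Even a ∧ ¬Even b ∧ (e a).1 = (e b).1)) := by
    intro a b h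
    simp only [hw] at h
    by_cases h1 : Even a <;> by_cases h2 : Even b
    · exact Or.inl ⟨h1, h2, by rw [if_pos h1, if_pos h2] at h; exact Sum.inr.inj h⟩
    · rw [if_pos h1, if_neg h2] at h; exact absurd h (by simp)
    · rw [if_neg h1, if_pos h2] at h; exact absurd h (by simp)
    · exact Or.inr ⟨h1, h2, by rw [if_neg h1, if_neg h2] at h; exact Sum.inl.inj h⟩
  have hcompE : ∀ a b, Even a → Even b → (e a).2 = (e b).2 → w a = w b := by
    intro a b h1 h2 h
    simp only [hw]
    rw [if_pos h1, if_pos h2, h]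
  have hcompO : ∀ a b, ¬Even a → ¬Even b → (e a).1 = (e b).1 → w a = w b := by
    intro a b h1 h2 h
    simp only [hw]
    rw [if_neg h1, if_neg h2, h]
  -- pigeonhole
  have hrep : ∃ b, ∃ a, a < b ∧ w a = w b := by
    obtain ⟨x, y, hxy, hmap⟩ := Finite.exists_ne_map_eq_of_infinite w
    rcases lt_or_gt_of_ne hxy with h | h
    · exact ⟨y, x, h, hmap⟩
    · exact ⟨x, y, h, hmap.symm⟩
  have hP : ∃ b, ∃ a, a < b ∧ w a = w b := hrep
  obtain ⟨s, hst, hws⟩ := Nat.find_spec hP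
  have hmin0 : ∀ b, b < Nat.find hP → ¬ ∃ a, a < b ∧ w a = w b := fun b h => Nat.find_min hP h
  set t := Nat.find hP with htdef
  have hminw : ∀ a b, a < b → b < t → w a ≠ w b := by
    intro a b hab hbt h
    exact hmin0 b hbt ⟨a, hab, h⟩
  by_cases hse : Even s
  · -- s, t even : apply core directly
    rcases hcomp s t hws with ⟨_, hte, hclose⟩ | ⟨hso, _, _⟩
    swap
    · exact absurd hse hso
    have hinjE : ∀ a b, s ≤ a → a < b → b < t → Even a → Even b → (e a).2 ≠ (e b).2 := by
      intro a b _ hab hbt hae hbe hcon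
      exact hminw a b hab hbt (hcompE a b hae hbe hcon)
    have hinjO : ∀ a b, s ≤ a → a < b → b < t → ¬ Even a → ¬ Even b → (e a).1 ≠ (e b).1 := by
      intro a b _ hab hbt hae hbe hcon
      exact hminw a b hab hbt (hcompO a b hae hbe hcon)
    exact core adj hnone e hadj hEs hOs s t hst hse hte hclose hinjE hinjO
  · -- s, t odd : apply core to the mirrored walk
    rcases hcomp s t hws with ⟨hse2, _, _⟩ | ⟨_, hto, hclose0⟩
    · exact absurd hse2 hse
    have hs1 : 1 ≤ s := by
      rcases Nat.eq_zero_or_pos s with h | h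
      · exact absurd (h ▸ (Even.zero : Even 0)) hse
      · exact h
    have ht1 : 1 ≤ t := by omega
    set e' : ℕ → Option β × Option α := fun k => ((e (k+1)).2, (e (k+1)).1) with he'
    have he'fst : ∀ k, (e' k).1 = (e (k+1)).2 := fun k => rfl
    have he'snd : ∀ k, (e' k).2 = (e (k+1)).1 := fun k => rfl
    have hadj2 : ∀ k, (fun (b : Option β) (a : Option α) => adj a b) (e' k).1 (e' k).2 :=
      fun k => hadj (k+1)
    have hE2 : ∀ k, Even k → (e' (k+1)).2 = (e' k).2 ∧ (e' (k+1)).1 ≠ (e' k).1 := by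
      intro k hk
      have hk1 : ¬ Even (k+1) := by simp [Nat.even_add_one, hk]
      have h := hOs (k+1) hk1
      rw [he'snd, he'snd, he'fst, he'fst]
      exact ⟨h.1, h.2⟩
    have hO2 : ∀ k, ¬ Even k → (e' (k+1)).1 = (e' k).1 ∧ (e' (k+1)).2 ≠ (e' k).2 := by
      intro k hk
      have hk1 : Even (k+1) := by
        rcases Nat.even_or_odd k with h | h
        · exact absurd h hk
        · obtain ⟨w2, hw2⟩ := h; exact ⟨w2+1, by omega⟩
      have h := hEs (k+1) hk1
      rw [he'snd, he'snd, he'fst, he'fst]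
      exact ⟨h.1, h.2⟩
    have hse' : Even (s-1) := by
      rcases Nat.even_or_odd (s-1) with h | h
      · exact h
      · exfalso; apply hse; obtain ⟨w2, hw2⟩ := h; exact ⟨w2+1, by omega⟩
    have hte' : Even (t-1) := by
      rcases Nat.even_or_odd (t-1) with h | h
      · exact h
      · exfalso; apply hto; obtain ⟨w2, hw2⟩ := h; exact ⟨w2+1, by omega⟩
    have hst' : s - 1 < t - 1 := by omega
    have hclose' : (e' (s-1)).2 = (e' (t-1)).2 := by
      rw [he'snd, he'snd, show s - 1 + 1 = s by omega, show t - 1 + 1 = t by omega]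
      exact hclose0
    have hinjE' : ∀ a b, s - 1 ≤ a → a < b → b < t - 1 → Even a → Even b →
        (e' a).2 ≠ (e' b).2 := by
      intro a b _ hab hbt hae hbe hcon
      rw [he'snd, he'snd] at hcon
      have hae1 : ¬ Even (a+1) := by simp [Nat.even_add_one, hae]
      have hbe1 : ¬ Even (b+1) := by simp [Nat.even_add_one, hbe]
      exact hminw (a+1) (b+1) (by omega) (by omega) (hcompO (a+1) (b+1) hae1 hbe1 hcon)
    have hinjO' : ∀ a b, s - 1 ≤ a → a < b → b < t - 1 → ¬ Even a → ¬ Even b →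
        (e' a).1 ≠ (e' b).1 := by
      intro a b _ hab hbt hae hbe hcon
      rw [he'fst, he'fst] at hcon
      have hae1 : Even (a+1) := by
        rcases Nat.even_or_odd a with h | h
        · exact absurd h hae
        · obtain ⟨w2, hw2⟩ := h; exact ⟨w2+1, by omega⟩
      have hbe1 : Even (b+1) := by
        rcases Nat.even_or_odd b with h | h
        · exact absurd h hbe
        · obtain ⟨w2, hw2⟩ := h; exact ⟨w2+1, by omega⟩
      exact hminw (a+1) (b+1) (by omega) (by omega) (hcompE (a+1) (b+1) hae1 hbe1 hcon)
    obtain ⟨D', hsup, ⟨j₁, i₁, hne⟩, hrowD, hcolD, htotD⟩ :=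
      core (fun (b : Option β) (a : Option α) => adj a b) hnone e' hadj2 hE2 hO2
        (s-1) (t-1) hst' hse' hte' hclose' hinjE' hinjO'
    refine ⟨fun i j => D' j i, ?_, ⟨i₁, j₁, hne⟩, ?_, ?_, ?_⟩
    · intro i j h
      exact hsup j i h
    · intro i hi
      exact hcolD i hi
    · intro j hj
      exact hrowD j hj
    · rw [Finset.sum_comm]
      exact htotD

end Core

end TransportExtreme

theorem extremePoint_transportUk_zeroOne (n m k : ℕ) (hn : 0 < n) (hm : 0 < m) (hk : 0 < k)
    (r R : Fin n → ℕ) (c C : Fin m → ℕ)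
    (hrR : ∀ i, r i ≤ R i) (hcC : ∀ j, c j ≤ C j)
    (A : Matrix (Fin n) (Fin m) ℝ)
    (hA : A ∈ Set.extremePoints ℝ
      {B ∈ transportU n m r R c C | ∑ i, ∑ j, B i j = (k : ℝ)}) :
    ∀ i j, A i j = 0 ∨ A i j = 1 := by
  classical
  obtain ⟨hAS, hAext⟩ := hA
  obtain ⟨hAU, htot⟩ := hAS
  simp only [transportU, Set.mem_setOf_eq] at hAU
  obtain ⟨hbox, hrows, hcols⟩ := hAU
  intro i0 j0
  by_contra h01
  push_neg at h01
  obtain ⟨h0, h1⟩ := h01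
  -- fractional entries are strictly between 0 and 1
  have hfrac : ∀ i j, A i j ≠ 0 → A i j ≠ 1 → 0 < A i j ∧ A i j < 1 := fun i j hne0 hne1 =>
    ⟨lt_of_le_of_ne (hbox i j).1 (Ne.symm hne0), lt_of_le_of_ne (hbox i j).2 hne1⟩
  set RowZ : Fin n → Prop := fun i => ∃ z : ℤ, ∑ j, A i j = (z:ℝ) with hRowZdef
  set ColZ : Fin m → Prop := fun j => ∃ z : ℤ, ∑ i, A i j = (z:ℝ) with hColZdef
  have hrow_strict : ∀ i, ¬ RowZ i → (r i : ℝ) < ∑ j, A i j ∧ ∑ j, A i j < (R i : ℝ) := by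
    intro i hi
    constructor
    · rcases eq_or_lt_of_le (hrows i).1 with h | h
      · exact absurd ⟨(r i : ℤ), by rw [← h]; push_cast; ring⟩ hi
      · exact h
    · rcases eq_or_lt_of_le (hrows i).2 with h | h
      · exact absurd ⟨(R i : ℤ), by rw [h]; push_cast; ring⟩ hi
      · exact h
  have hcol_strict : ∀ j, ¬ ColZ j → (c j : ℝ) < ∑ i, A i j ∧ ∑ i, A i j < (C j : ℝ) := by
    intro j hj
    constructor
    · rcases eq_or_lt_of_le (hcols j).1 with h | h
      · exact absurd ⟨(c j : ℤ), by rw [← h]; push_cast; ring⟩ hj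
      · exact h
    · rcases eq_or_lt_of_le (hcols j).2 with h | h
      · exact absurd ⟨(C j : ℤ), by rw [h]; push_cast; ring⟩ hj
      · exact h
  set adj : Option (Fin n) → Option (Fin m) → Prop := fun a b =>
    match a, b with
    | some i, some j => A i j ≠ 0 ∧ A i j ≠ 1
    | some i, none => ¬ RowZ i
    | none, some j => ¬ ColZ j
    | none, none => False
    with hadjdef
  have hnone : ¬ adj none none := fun h => h
  have htot' : ∑ j, ∑ i, A i j = (k:ℝ) := by rw [Finset.sum_comm]; exact htot
  -- two-neighbour property on the column side
  have hcol2 : ∀ a b, adj a b → ∃ a', a' ≠ a ∧ adj a' b := by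
    intro a b hab
    cases b with
    | none =>
      cases a with
      | none => exact absurd hab hnone
      | some i =>
        have hab' : ¬ RowZ i := hab
        by_contra hno
        push_neg at hno
        have hall : ∀ i' : Fin n, i' ≠ i → RowZ i' := by
          intro i' hi'
          by_contra hri
          exact hno (some i') (by simpa using hi') hri
        apply hab'
        set g : Fin n → ℤ := fun i' => if h : i' = i then 0 else (hall i' h).choose with hg
        have hgs : ∀ i' ∈ Finset.univ.erase i, ∑ j, A i' j = ((g i' : ℤ) : ℝ) := by
          intro i' hi'
          have hne := (Finset.mem_erase.mp hi').1
          simp only [hg, dif_neg hne]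
          exact (hall i' hne).choose_spec
        refine ⟨(k : ℤ) - ∑ i' ∈ Finset.univ.erase i, g i', ?_⟩
        have hsplit : ∑ j, A i j + ∑ i' ∈ Finset.univ.erase i, ∑ j, A i' j = (k:ℝ) := by
          rw [Finset.add_sum_erase Finset.univ (fun i' => ∑ j, A i' j) (Finset.mem_univ i)]
          exact htot
        have h2 : ∑ i' ∈ Finset.univ.erase i, ∑ j, A i' j
            = ∑ i' ∈ Finset.univ.erase i, ((g i' : ℤ) : ℝ) := Finset.sum_congr rfl hgs
        push_cast
        push_cast at h2
        linarith
    | some j =>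
      by_cases hc : ColZ j
      · cases a with
        | none => exact absurd hc hab
        | some i =>
          have hfr : A i j ≠ 0 ∧ A i j ≠ 1 := hab
          by_contra hno
          push_neg at hno
          have hall : ∀ i' : Fin n, i' ≠ i → A i' j = 0 ∨ A i' j = 1 := by
            intro i' hi'
            by_contra hri
            push_neg at hri
            exact hno (some i') (by simpa using hi') hri
          obtain ⟨z, hz⟩ := hc
          obtain ⟨z2, hz2⟩ := TransportExtreme.binary_sum_int (Finset.univ.erase i) (fun i' => A i' j)
            (fun x hx => hall x (Finset.mem_erase.mp hx).1)
          have hsplit : A i j + ∑ i' ∈ Finset.univ.erase i, A i' j = ∑ i', A i' j :=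
            Finset.add_sum_erase Finset.univ (fun i' => A i' j) (Finset.mem_univ i)
          obtain ⟨hlt0, hlt1⟩ := hfrac i j hfr.1 hfr.2
          refine TransportExtreme.not_int_unit hlt0 hlt1 ⟨z - z2, ?_⟩
          push_cast
          rw [hz] at hsplit
          linarith
      · cases a with
        | some i => exact ⟨none, by simp, hc⟩
        | none =>
          have hex : ∃ i, A i j ≠ 0 ∧ A i j ≠ 1 := by
            by_contra hno2
            push_neg at hno2
            apply hc
            exact TransportExtreme.binary_sum_int Finset.univ (fun i => A i j) (fun x _ => by
              rcases eq_or_ne (A x j) 0 with h | h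
              · exact Or.inl h
              · exact Or.inr (hno2 x h))
          obtain ⟨i, hfr⟩ := hex
          exact ⟨some i, by simp, hfr⟩
  -- two-neighbour property on the row side
  have hrow2 : ∀ a b, adj a b → ∃ b', b' ≠ b ∧ adj a b' := by
    intro a b hab
    cases a with
    | none =>
      cases b with
      | none => exact absurd hab hnone
      | some j =>
        have hab' : ¬ ColZ j := hab
        by_contra hno
        push_neg at hno
        have hall : ∀ j' : Fin m, j' ≠ j → ColZ j' := by
          intro j' hj'
          by_contra hcj
          exact hno (some j') (by simpa using hj') hcj
        apply hab'
        set g : Fin m → ℤ := fun j' => if h : j' = j then 0 else (hall j' h).choose with hg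
        have hgs : ∀ j' ∈ Finset.univ.erase j, ∑ i, A i j' = ((g j' : ℤ) : ℝ) := by
          intro j' hj'
          have hne := (Finset.mem_erase.mp hj').1
          simp only [hg, dif_neg hne]
          exact (hall j' hne).choose_spec
        refine ⟨(k : ℤ) - ∑ j' ∈ Finset.univ.erase j, g j', ?_⟩
        have hsplit : ∑ i, A i j + ∑ j' ∈ Finset.univ.erase j, ∑ i, A i j' = (k:ℝ) := by
          rw [Finset.add_sum_erase Finset.univ (fun j' => ∑ i, A i j') (Finset.mem_univ j)]
          exact htot'
        have h2 : ∑ j' ∈ Finset.univ.erase j, ∑ i, A i j'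
            = ∑ j' ∈ Finset.univ.erase j, ((g j' : ℤ) : ℝ) := Finset.sum_congr rfl hgs
        push_cast
        push_cast at h2
        linarith
    | some i =>
      by_cases hri : RowZ i
      · cases b with
        | none => exact absurd hri hab
        | some j =>
          have hfr : A i j ≠ 0 ∧ A i j ≠ 1 := hab
          by_contra hno
          push_neg at hno
          have hall : ∀ j' : Fin m, j' ≠ j → A i j' = 0 ∨ A i j' = 1 := by
            intro j' hj'
            by_contra hrj
            push_neg at hrj
            exact hno (some j') (by simpa using hj') hrj
          obtain ⟨z, hz⟩ := hri
          obtain ⟨z2, hz2⟩ := TransportExtreme.binary_sum_int (Finset.univ.erase j) (fun j' => A i j')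
            (fun x hx => hall x (Finset.mem_erase.mp hx).1)
          have hsplit : A i j + ∑ j' ∈ Finset.univ.erase j, A i j' = ∑ j', A i j' :=
            Finset.add_sum_erase Finset.univ (fun j' => A i j') (Finset.mem_univ j)
          obtain ⟨hlt0, hlt1⟩ := hfrac i j hfr.1 hfr.2
          refine TransportExtreme.not_int_unit hlt0 hlt1 ⟨z - z2, ?_⟩
          push_cast
          rw [hz] at hsplit
          linarith
      · cases b with
        | some j => exact ⟨none, by simp, hri⟩
        | none =>
          have hex : ∃ j, A i j ≠ 0 ∧ A i j ≠ 1 := by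
            by_contra hno2
            push_neg at hno2
            apply hri
            exact TransportExtreme.binary_sum_int Finset.univ (fun j => A i j) (fun x _ => by
              rcases eq_or_ne (A i x) 0 with h | h
              · exact Or.inl h
              · exact Or.inr (hno2 x h))
          obtain ⟨j, hfr⟩ := hex
          exact ⟨some j, by simp, hfr⟩
  have h₀ : adj (some i0) (some j0) := ⟨h0, h1⟩
  obtain ⟨D, hsup, ⟨i1, j1, hD1⟩, hrowD0, hcolD0, htotD⟩ :=
    TransportExtreme.exists_perturb adj hnone hcol2 hrow2 i0 j0 h₀
  have hrowD : ∀ i, RowZ i → ∑ j, D i j = 0 := fun i hi => hrowD0 i (fun hni => hni hi)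
  have hcolD : ∀ j, ColZ j → ∑ i, D i j = 0 := fun j hj => hcolD0 j (fun hnj => hnj hj)
  have hsup' : ∀ i j, D i j ≠ 0 → A i j ≠ 0 ∧ A i j ≠ 1 := fun i j h => hsup i j h
  -- bound on D
  set Cb : ℝ := 1 + ∑ i, ∑ j, |D i j| with hCbdef
  have habs_nonneg : ∀ i : Fin n, (0:ℝ) ≤ ∑ j, |D i j| :=
    fun i => Finset.sum_nonneg fun j _ => abs_nonneg _
  have hCb0 : 0 < Cb := by
    have : (0:ℝ) ≤ ∑ i, ∑ j, |D i j| := Finset.sum_nonneg fun i _ => habs_nonneg i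
    rw [hCbdef]; linarith
  have hrow_abs : ∀ i, |∑ j, D i j| ≤ Cb := by
    intro i
    have h1 : |∑ j, D i j| ≤ ∑ j, |D i j| := Finset.abs_sum_le_sum_abs _ _
    have h2 : ∑ j, |D i j| ≤ ∑ i', ∑ j, |D i' j| :=
      Finset.single_le_sum (fun i' _ => habs_nonneg i') (Finset.mem_univ i)
    rw [hCbdef]; linarith
  have hcol_abs : ∀ j, |∑ i, D i j| ≤ Cb := by
    intro j
    have h1 : |∑ i, D i j| ≤ ∑ i, |D i j| := Finset.abs_sum_le_sum_abs _ _
    have h2 : ∀ i, |D i j| ≤ ∑ j', |D i j'| := fun i =>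
      Finset.single_le_sum (fun j' _ => abs_nonneg (D i j')) (Finset.mem_univ j)
    have h3 : ∑ i, |D i j| ≤ ∑ i, ∑ j', |D i j'| :=
      Finset.sum_le_sum (fun i _ => h2 i)
    rw [hCbdef]; linarith
  have hent_abs : ∀ i j, |D i j| ≤ Cb := by
    intro i j
    have h2 : |D i j| ≤ ∑ j', |D i j'| :=
      Finset.single_le_sum (fun j' _ => abs_nonneg (D i j')) (Finset.mem_univ j)
    have h3 : ∑ j', |D i j'| ≤ ∑ i', ∑ j', |D i' j'| :=
      Finset.single_le_sum (fun i' _ => habs_nonneg i') (Finset.mem_univ i)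
    rw [hCbdef]; linarith
  -- the three slack infima
  have hne1 : (Finset.univ : Finset (Fin n × Fin m)).Nonempty := ⟨(i0, j0), Finset.mem_univ _⟩
  have hne2 : (Finset.univ : Finset (Fin n)).Nonempty := ⟨i0, Finset.mem_univ _⟩
  have hne3 : (Finset.univ : Finset (Fin m)).Nonempty := ⟨j0, Finset.mem_univ _⟩
  set f1 : Fin n × Fin m → ℝ := fun p =>
    if D p.1 p.2 = 0 then 1 else min (A p.1 p.2) (1 - A p.1 p.2) with hf1
  set f2 : Fin n → ℝ := fun i =>
    if (∑ j, D i j) = 0 then 1 else min (∑ j, A i j - (r i:ℝ)) ((R i:ℝ) - ∑ j, A i j) with hf2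
  set f3 : Fin m → ℝ := fun j =>
    if (∑ i, D i j) = 0 then 1 else min (∑ i, A i j - (c j:ℝ)) ((C j:ℝ) - ∑ i, A i j) with hf3
  set δ : ℝ := min 1 (min (Finset.inf' _ hne1 f1) (min (Finset.inf' _ hne2 f2)
    (Finset.inf' _ hne3 f3))) with hδ
  have hδ1pos : 0 < Finset.inf' _ hne1 f1 := by
    rw [Finset.lt_inf'_iff]
    intro p _
    rw [hf1]
    by_cases hDp : D p.1 p.2 = 0
    · simp [hDp]
    · obtain ⟨ha, hb⟩ := hfrac p.1 p.2 (hsup' p.1 p.2 hDp).1 (hsup' p.1 p.2 hDp).2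
      simp only [hDp, if_false]
      exact lt_min ha (by linarith)
  have hδ2pos : 0 < Finset.inf' _ hne2 f2 := by
    rw [Finset.lt_inf'_iff]
    intro i _
    rw [hf2]
    by_cases hDi : (∑ j, D i j) = 0
    · simp [hDi]
    · have hfree : ¬ RowZ i := fun h => hDi (hrowD i h)
      obtain ⟨ha, hb⟩ := hrow_strict i hfree
      simp only [hDi, if_false]
      exact lt_min (by linarith) (by linarith)
  have hδ3pos : 0 < Finset.inf' _ hne3 f3 := by
    rw [Finset.lt_inf'_iff]
    intro j _
    rw [hf3]
    by_cases hDj : (∑ i, D i j) = 0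
    · simp [hDj]
    · have hfree : ¬ ColZ j := fun h => hDj (hcolD j h)
      obtain ⟨ha, hb⟩ := hcol_strict j hfree
      simp only [hDj, if_false]
      exact lt_min (by linarith) (by linarith)
  have hδpos : 0 < δ := by
    rw [hδ]
    exact lt_min one_pos (lt_min hδ1pos (lt_min hδ2pos hδ3pos))
  set ε : ℝ := δ / Cb with hε
  have hεpos : 0 < ε := div_pos hδpos hCb0
  have hεmul : ∀ x : ℝ, |x| ≤ Cb → |ε * x| ≤ δ := by
    intro x hx
    rw [abs_mul, abs_of_pos hεpos, hε]
    calc δ / Cb * |x| ≤ δ / Cb * Cb := by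
          apply mul_le_mul_of_nonneg_left hx (le_of_lt (div_pos hδpos hCb0))
      _ = δ := div_mul_cancel₀ _ (ne_of_gt hCb0)
  -- the two perturbed matrices
  set B1 : Matrix (Fin n) (Fin m) ℝ := Matrix.of (fun i j => A i j - ε * D i j) with hB1def
  set B2 : Matrix (Fin n) (Fin m) ℝ := Matrix.of (fun i j => A i j + ε * D i j) with hB2def
  have hB1app : ∀ i j, B1 i j = A i j - ε * D i j := fun i j => rfl
  have hB2app : ∀ i j, B2 i j = A i j + ε * D i j := fun i j => rfl
  -- entrywise bounds
  have hkey_ent : ∀ i j, |ε * D i j| ≤ min (A i j) (1 - A i j) ∨ D i j = 0 := by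
    intro i j
    by_cases hDp : D i j = 0
    · exact Or.inr hDp
    · left
      have hle : Finset.inf' _ hne1 f1 ≤ f1 (i, j) := Finset.inf'_le _ (Finset.mem_univ _)
      have hval : f1 (i, j) = min (A i j) (1 - A i j) := by rw [hf1]; simp [hDp]
      have h5 : |ε * D i j| ≤ δ := hεmul _ (hent_abs i j)
      rw [hδ] at h5
      have : min 1 (min (Finset.inf' _ hne1 f1) (min (Finset.inf' _ hne2 f2)
          (Finset.inf' _ hne3 f3))) ≤ f1 (i, j) := le_trans (le_trans (min_le_right _ _) (min_le_left _ _)) hle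
      rw [hval] at this
      linarith
  have hent1 : ∀ i j, 0 ≤ B1 i j ∧ B1 i j ≤ 1 := by
    intro i j
    rw [hB1app]
    rcases hkey_ent i j with h | h
    · have h1 := abs_le.mp h
      have h2 : min (A i j) (1 - A i j) ≤ A i j := min_le_left _ _
      have h3 : min (A i j) (1 - A i j) ≤ 1 - A i j := min_le_right _ _
      exact ⟨by linarith [h1.1, h1.2], by linarith [h1.1, h1.2]⟩
    · rw [h]; simp [hbox i j]
  have hent2 : ∀ i j, 0 ≤ B2 i j ∧ B2 i j ≤ 1 := by
    intro i j
    rw [hB2app]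
    rcases hkey_ent i j with h | h
    · have h1 := abs_le.mp h
      have h2 : min (A i j) (1 - A i j) ≤ A i j := min_le_left _ _
      have h3 : min (A i j) (1 - A i j) ≤ 1 - A i j := min_le_right _ _
      exact ⟨by linarith [h1.1, h1.2], by linarith [h1.1, h1.2]⟩
    · rw [h]; simp [hbox i j]
  -- row bounds
  have hkey_row : ∀ i, |ε * ∑ j, D i j| ≤ min (∑ j, A i j - (r i:ℝ)) ((R i:ℝ) - ∑ j, A i j)
      ∨ (∑ j, D i j) = 0 := by
    intro i
    by_cases hDi : (∑ j, D i j) = 0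
    · exact Or.inr hDi
    · left
      have hle : Finset.inf' _ hne2 f2 ≤ f2 i := Finset.inf'_le _ (Finset.mem_univ _)
      have hval : f2 i = min (∑ j, A i j - (r i:ℝ)) ((R i:ℝ) - ∑ j, A i j) := by
        rw [hf2]; simp [hDi]
      have h5 : |ε * ∑ j, D i j| ≤ δ := hεmul _ (hrow_abs i)
      rw [hδ] at h5
      have : min 1 (min (Finset.inf' _ hne1 f1) (min (Finset.inf' _ hne2 f2)
          (Finset.inf' _ hne3 f3))) ≤ f2 i :=
        le_trans (le_trans (min_le_right _ _) (le_trans (min_le_right _ _) (min_le_left _ _))) hle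
      rw [hval] at this
      linarith
  have hkey_col : ∀ j, |ε * ∑ i, D i j| ≤ min (∑ i, A i j - (c j:ℝ)) ((C j:ℝ) - ∑ i, A i j)
      ∨ (∑ i, D i j) = 0 := by
    intro j
    by_cases hDj : (∑ i, D i j) = 0
    · exact Or.inr hDj
    · left
      have hle : Finset.inf' _ hne3 f3 ≤ f3 j := Finset.inf'_le _ (Finset.mem_univ _)
      have hval : f3 j = min (∑ i, A i j - (c j:ℝ)) ((C j:ℝ) - ∑ i, A i j) := by
        rw [hf3]; simp [hDj]
      have h5 : |ε * ∑ i, D i j| ≤ δ := hεmul _ (hcol_abs j)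
      rw [hδ] at h5
      have : min 1 (min (Finset.inf' _ hne1 f1) (min (Finset.inf' _ hne2 f2)
          (Finset.inf' _ hne3 f3))) ≤ f3 j :=
        le_trans (le_trans (min_le_right _ _) (le_trans (min_le_right _ _) (min_le_right _ _))) hle
      rw [hval] at this
      linarith
  have hrowsum1 : ∀ i, ∑ j, B1 i j = ∑ j, A i j - ε * ∑ j, D i j := by
    intro i
    rw [Finset.mul_sum, ← Finset.sum_sub_distrib]
    exact Finset.sum_congr rfl fun x _ => hB1app i x
  have hrowsum2 : ∀ i, ∑ j, B2 i j = ∑ j, A i j + ε * ∑ j, D i j := by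
    intro i
    rw [Finset.mul_sum, ← Finset.sum_add_distrib]
    exact Finset.sum_congr rfl fun x _ => hB2app i x
  have hcolsum1 : ∀ j, ∑ i, B1 i j = ∑ i, A i j - ε * ∑ i, D i j := by
    intro j
    rw [Finset.mul_sum, ← Finset.sum_sub_distrib]
    exact Finset.sum_congr rfl fun x _ => hB1app x j
  have hcolsum2 : ∀ j, ∑ i, B2 i j = ∑ i, A i j + ε * ∑ i, D i j := by
    intro j
    rw [Finset.mul_sum, ← Finset.sum_add_distrib]
    exact Finset.sum_congr rfl fun x _ => hB2app x j
  have hrow1 : ∀ i, (r i : ℝ) ≤ ∑ j, B1 i j ∧ ∑ j, B1 i j ≤ (R i : ℝ) := by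
    intro i
    rw [hrowsum1 i]
    rcases hkey_row i with h | h
    · have h1 := abs_le.mp h
      have h2 := min_le_left (∑ j, A i j - (r i:ℝ)) ((R i:ℝ) - ∑ j, A i j)
      have h3 := min_le_right (∑ j, A i j - (r i:ℝ)) ((R i:ℝ) - ∑ j, A i j)
      exact ⟨by linarith [h1.1, h1.2], by linarith [h1.1, h1.2]⟩
    · rw [h, mul_zero, sub_zero]; exact hrows i
  have hrow2' : ∀ i, (r i : ℝ) ≤ ∑ j, B2 i j ∧ ∑ j, B2 i j ≤ (R i : ℝ) := by
    intro i
    rw [hrowsum2 i]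
    rcases hkey_row i with h | h
    · have h1 := abs_le.mp h
      have h2 := min_le_left (∑ j, A i j - (r i:ℝ)) ((R i:ℝ) - ∑ j, A i j)
      have h3 := min_le_right (∑ j, A i j - (r i:ℝ)) ((R i:ℝ) - ∑ j, A i j)
      exact ⟨by linarith [h1.1, h1.2], by linarith [h1.1, h1.2]⟩
    · rw [h, mul_zero, add_zero]; exact hrows i
  have hcol1 : ∀ j, (c j : ℝ) ≤ ∑ i, B1 i j ∧ ∑ i, B1 i j ≤ (C j : ℝ) := by
    intro j
    rw [hcolsum1 j]
    rcases hkey_col j with h | h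
    · have h1 := abs_le.mp h
      have h2 := min_le_left (∑ i, A i j - (c j:ℝ)) ((C j:ℝ) - ∑ i, A i j)
      have h3 := min_le_right (∑ i, A i j - (c j:ℝ)) ((C j:ℝ) - ∑ i, A i j)
      exact ⟨by linarith [h1.1, h1.2], by linarith [h1.1, h1.2]⟩
    · rw [h, mul_zero, sub_zero]; exact hcols j
  have hcol2' : ∀ j, (c j : ℝ) ≤ ∑ i, B2 i j ∧ ∑ i, B2 i j ≤ (C j : ℝ) := by
    intro j
    rw [hcolsum2 j]
    rcases hkey_col j with h | h
    · have h1 := abs_le.mp h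
      have h2 := min_le_left (∑ i, A i j - (c j:ℝ)) ((C j:ℝ) - ∑ i, A i j)
      have h3 := min_le_right (∑ i, A i j - (c j:ℝ)) ((C j:ℝ) - ∑ i, A i j)
      exact ⟨by linarith [h1.1, h1.2], by linarith [h1.1, h1.2]⟩
    · rw [h, mul_zero, add_zero]; exact hcols j
  have htotB1 : ∑ i, ∑ j, B1 i j = (k : ℝ) := by
    have : ∑ i, ∑ j, B1 i j = ∑ i, (∑ j, A i j - ε * ∑ j, D i j) :=
      Finset.sum_congr rfl fun i _ => hrowsum1 i
    rw [this, Finset.sum_sub_distrib, ← Finset.mul_sum, htotD, mul_zero, sub_zero, htot]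
  have htotB2 : ∑ i, ∑ j, B2 i j = (k : ℝ) := by
    have : ∑ i, ∑ j, B2 i j = ∑ i, (∑ j, A i j + ε * ∑ j, D i j) :=
      Finset.sum_congr rfl fun i _ => hrowsum2 i
    rw [this, Finset.sum_add_distrib, ← Finset.mul_sum, htotD, mul_zero, add_zero, htot]
  have hmem1 : B1 ∈ {B ∈ transportU n m r R c C | ∑ i, ∑ j, B i j = (k : ℝ)} := by
    refine ⟨?_, htotB1⟩
    simp only [transportU, Set.mem_setOf_eq]
    exact ⟨hent1, hrow1, hcol1⟩
  have hmem2 : B2 ∈ {B ∈ transportU n m r R c C | ∑ i, ∑ j, B i j = (k : ℝ)} := by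
    refine ⟨?_, htotB2⟩
    simp only [transportU, Set.mem_setOf_eq]
    exact ⟨hent2, hrow2', hcol2'⟩
  have hseg : A ∈ openSegment ℝ B1 B2 := by
    refine ⟨1/2, 1/2, by norm_num, by norm_num, by norm_num, ?_⟩
    funext i j
    have e1 : (((1:ℝ)/2) • B1 + ((1:ℝ)/2) • B2) i j = (1/2) * B1 i j + (1/2) * B2 i j := rfl
    rw [e1, hB1app, hB2app]
    ring
  have hB1eq := hAext hmem1 hmem2 hseg
  have : B1 i1 j1 = A i1 j1 := by rw [hB1eq]
  rw [hB1app] at this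
  have hmul : ε * D i1 j1 = 0 := by linarith
  exact hD1 (by
    rcases mul_eq_zero.mp hmul with h | h
    · exact absurd h (ne_of_gt hεpos)
    · exact h)
end

section
/- U^k(R_min^max, C_min^max) is the convex hull of P^k(R_min^max, C_min^max), the set of its 0-1 matrices with total sum k. -/
set_option linter.unusedSectionVars false
set_option linter.unusedVariables false
set_option linter.unreachableTactic false
set_option linter.unusedTactic false
set_option maxHeartbeats 1600000

open Finset


section Comb2

variable {ε : Type} [DecidableEq ε]

variable {ε : Type} [DecidableEq ε]

private lemma sub_sum {F : Finset ε} (x : ↥F → ℝ) (p : ε → Prop) [DecidablePred p] :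
    ∑ e : ↥F, (if p e.1 then 1 else 0) * x e
      = ∑ e ∈ F.filter p, (if h : e ∈ F then x ⟨e, h⟩ else 0) := by
  rw [Finset.sum_filter,
    ← Finset.sum_coe_sort F (fun e => if p e then (if h : e ∈ F then x ⟨e, h⟩ else 0) else 0)]
  apply Finset.sum_congr rfl
  intro e _
  by_cases hp : p e.1
  · simp [hp, e.2]
  · simp [hp]

private lemma case_d {VL VR : Type} [Fintype VL] [Fintype VR] [DecidableEq VL] [DecidableEq VR]
    (F : Finset ε) (hne : F.Nonempty)
    (vL : ε → Option VL) (vR : ε → Option VR)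
    (hsomeL : ∀ e ∈ F, ∃ v, vL e = some v) (hsomeR : ∀ e ∈ F, ∃ w, vR e = some w)
    (hdL : ∀ v : VL, (F.filter (fun e => vL e = some v)).card ≠ 1)
    (hdR : ∀ w : VR, (F.filter (fun e => vR e = some w)).card ≠ 1) :
    ∃ D : ε → ℝ, (∃ e ∈ F, D e ≠ 0) ∧ (∀ e, e ∉ F → D e = 0) ∧
      (∀ v : VL, ∑ e ∈ F.filter (fun e => vL e = some v), D e = 0) ∧
      (∀ w : VR, ∑ e ∈ F.filter (fun e => vR e = some w), D e = 0) := by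
  classical
  set touches : VL ⊕ VR → ε → Prop :=
    fun w e => Sum.elim (fun v => vL e = some v) (fun u => vR e = some u) w with htouches
  set W : Finset (VL ⊕ VR) := Finset.univ.filter (fun w => ∃ e ∈ F, touches w e) with hW
  -- the two endpoints of each edge
  have hWpair : ∀ e ∈ F, ∃ v u, vL e = some v ∧ vR e = some u ∧
      W.filter (fun w => touches w e) = {Sum.inl v, Sum.inr u} := by
    intro e he
    obtain ⟨v, hv⟩ := hsomeL e he
    obtain ⟨u, hu⟩ := hsomeR e he
    refine ⟨v, u, hv, hu, ?_⟩
    ext w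
    simp only [Finset.mem_filter, Finset.mem_insert, Finset.mem_singleton, hW,
      Finset.mem_univ, true_and]
    constructor
    · rintro ⟨-, ht⟩
      cases w with
      | inl v' =>
          left
          simp only [htouches, Sum.elim_inl] at ht
          rw [hv] at ht
          exact congrArg Sum.inl (Option.some.inj ht).symm
      | inr u' =>
          right
          simp only [htouches, Sum.elim_inr] at ht
          rw [hu] at ht
          exact congrArg Sum.inr (Option.some.inj ht).symm
    · rintro (rfl | rfl)
      · exact ⟨⟨e, he, by simpa [htouches] using hv⟩, by simpa [htouches] using hv⟩
      · exact ⟨⟨e, he, by simpa [htouches] using hu⟩, by simpa [htouches] using hu⟩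
  have hW2 : ∀ e ∈ F, (W.filter (fun w => touches w e)).card = 2 := by
    intro e he
    obtain ⟨v, u, -, -, hpair⟩ := hWpair e he
    rw [hpair, Finset.card_insert_of_notMem (by simp), Finset.card_singleton]
  have hdeg : ∀ w ∈ W, 2 ≤ (F.filter (fun e => touches w e)).card := by
    intro w hw
    have h1 : 1 ≤ (F.filter (fun e => touches w e)).card := by
      rw [Nat.one_le_iff_ne_zero, Ne, Finset.card_eq_zero]
      simp only [hW, Finset.mem_filter, Finset.mem_univ, true_and] at hw
      obtain ⟨e, he, ht⟩ := hw
      intro hcon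
      have : e ∈ F.filter (fun e => touches w e) := Finset.mem_filter.2 ⟨he, ht⟩
      rw [hcon] at this
      simp at this
    have hne1 : (F.filter (fun e => touches w e)).card ≠ 1 := by
      cases w with
      | inl v =>
          have : F.filter (fun e => touches (Sum.inl v) e)
              = F.filter (fun e => vL e = some v) := by
            apply Finset.filter_congr
            intro e _
            simp [htouches]
          rw [this]; exact hdL v
      | inr u =>
          have : F.filter (fun e => touches (Sum.inr u) e)
              = F.filter (fun e => vR e = some u) := by
            apply Finset.filter_congr
            intro e _
            simp [htouches]
          rw [this]; exact hdR u
    omega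
  have hWF : W.card ≤ F.card := by
    have hdouble : ∑ w ∈ W, (F.filter (fun e => touches w e)).card
        = ∑ e ∈ F, (W.filter (fun w => touches w e)).card := by
      simp_rw [Finset.card_filter]
      exact Finset.sum_comm
    have h1 : 2 * W.card ≤ ∑ w ∈ W, (F.filter (fun e => touches w e)).card := by
      calc 2 * W.card = ∑ _w ∈ W, 2 := by rw [Finset.sum_const, smul_eq_mul]; ring
      _ ≤ _ := Finset.sum_le_sum hdeg
    have h2 : ∑ e ∈ F, (W.filter (fun w => touches w e)).card = 2 * F.card := by
      rw [Finset.sum_congr rfl hW2, Finset.sum_const, smul_eq_mul]; ring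
    omega
  obtain ⟨ι⟩ : Nonempty (↥W ↪ ↥F) := by
    apply Function.Embedding.nonempty_of_card_le
    simpa [Fintype.card_coe] using hWF
  -- a fixed element of W
  obtain ⟨e1, he1⟩ := hne
  obtain ⟨v1, hv1⟩ := hsomeL e1 he1
  have hv1W : Sum.inl v1 ∈ W := by
    simp only [hW, Finset.mem_filter, Finset.mem_univ, true_and]
    exact ⟨e1, he1, by simpa [htouches] using hv1⟩
  set w0 : ↥W := ⟨Sum.inl v1, hv1W⟩ with hw0
  set ψ : ↥F → ↥W := fun f => if h : ∃ w, ι w = f then h.choose else w0 with hψdef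
  have hψ : ∀ w, ψ (ι w) = w := by
    intro w
    have hex : ∃ w', ι w' = ι w := ⟨w, rfl⟩
    simp only [hψdef, dif_pos hex]
    exact ι.injective hex.choose_spec
  set M : Matrix ↥F ↥F ℝ := fun f e => if touches (ψ f).1 e.1 then 1 else 0 with hM
  set y : ↥F → ℝ := fun f => if ∃ w, ι w = f then Sum.elim (fun _ => (1:ℝ)) (fun _ => -1) (ψ f).1
    else 0 with hy
  have hy1 : ∀ w : ↥W, y (ι w) = Sum.elim (fun _ => (1:ℝ)) (fun _ => -1) w.1 := by
    intro w
    rw [hy]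
    show (if ∃ w', ι w' = ι w then Sum.elim (fun _ => (1:ℝ)) (fun _ => -1) (ψ (ι w)).1 else 0) = _
    rw [if_pos (⟨w, rfl⟩ : ∃ w', ι w' = ι w), hψ]
  have hyne : y ≠ 0 := by
    intro hcon
    have := hy1 w0
    rw [hcon] at this
    simp [hw0] at this
  have hyM : Matrix.vecMul y M = 0 := by
    funext e
    show ∑ f, y f * M f e = 0
    have h1 : ∑ f, y f * M f e = ∑ w : ↥W, y (ι w) * M (ι w) e := by
      rw [← Finset.sum_map Finset.univ ι (fun f => y f * M f e)]
      apply (Finset.sum_subset (Finset.subset_univ _) _).symm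
      intro f _ hf
      have hnex : ¬∃ w, ι w = f := fun ⟨w, hw⟩ =>
        hf (Finset.mem_map.2 ⟨w, Finset.mem_univ _, hw⟩)
      show y f * M f e = 0
      rw [hy]
      show (if ∃ w, ι w = f then Sum.elim (fun _ => (1:ℝ)) (fun _ => -1) (ψ f).1 else 0)
          * M f e = 0
      rw [if_neg hnex, zero_mul]
    rw [h1]
    calc ∑ w : ↥W, y (ι w) * M (ι w) e
        = ∑ w : ↥W, (fun w' : VL ⊕ VR => Sum.elim (fun _ => (1:ℝ)) (fun _ => -1) w'
            * (if touches w' e.1 then 1 else 0)) w.1 := by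
          apply Finset.sum_congr rfl
          intro w _
          rw [hy1 w]
          show _ * M (ι w) e = _
          rw [hM]
          show _ * (if touches (ψ (ι w)).1 e.1 then (1:ℝ) else 0) = _
          rw [hψ]
      _ = ∑ w ∈ W, Sum.elim (fun _ => (1:ℝ)) (fun _ => -1) w
            * (if touches w e.1 then 1 else 0) :=
          Finset.sum_coe_sort W (fun w' => Sum.elim (fun _ => (1:ℝ)) (fun _ => -1) w'
            * (if touches w' e.1 then 1 else 0))
      _ = ∑ w ∈ W.filter (fun w => touches w e.1),
            Sum.elim (fun _ => (1:ℝ)) (fun _ => -1) w := by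
          rw [Finset.sum_filter (fun w => touches w e.1)
            (fun w => Sum.elim (fun _ => (1:ℝ)) (fun _ => -1) w)]
          exact Finset.sum_congr rfl (fun w _ => by split_ifs <;> simp)
      _ = 0 := by
          obtain ⟨v, u, -, -, hpair⟩ := hWpair e.1 e.2
          rw [hpair, Finset.sum_insert (by simp), Finset.sum_singleton]
          simp
  have hdet : M.det = 0 := Matrix.exists_vecMul_eq_zero_iff.mp ⟨y, hyne, hyM⟩
  obtain ⟨x, hx, hxM⟩ := Matrix.exists_mulVec_eq_zero_iff.mpr hdet
  have hvert : ∀ w : VL ⊕ VR, w ∈ W →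
      ∑ e ∈ F.filter (fun e => touches w e), (if h : e ∈ F then x ⟨e, h⟩ else 0) = 0 := by
    intro w hw
    have hrow := congrFun hxM (ι ⟨w, hw⟩)
    have hMrow : ∀ e : ↥F, M (ι ⟨w, hw⟩) e = if touches w e.1 then 1 else 0 := by
      intro e
      rw [hM]
      show (if touches (ψ (ι ⟨w, hw⟩)).1 e.1 then (1:ℝ) else 0) = _
      rw [hψ]
    simp only [Matrix.mulVec, dotProduct, Pi.zero_apply] at hrow
    rw [Finset.sum_congr rfl (fun e _ => by rw [hMrow e])] at hrow
    rw [← sub_sum x (fun e => touches w e)]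
    exact hrow
  refine ⟨fun e => if h : e ∈ F then x ⟨e, h⟩ else 0, ?_, ?_, ?_, ?_⟩
  · obtain ⟨f, hf⟩ := Function.ne_iff.mp hx
    exact ⟨f.1, f.2, by simpa [Subtype.eta] using hf⟩
  · intro e he
    simp [he]
  · intro v
    by_cases hvW : Sum.inl v ∈ W
    · have h0 := hvert (Sum.inl v) hvW
      have hfe : F.filter (fun e => touches (Sum.inl v) e)
          = F.filter (fun e => vL e = some v) := by
        apply Finset.filter_congr
        intro e _
        simp [htouches]
      rw [hfe] at h0
      exact h0
    · have hfe : F.filter (fun e => vL e = some v) = ∅ := by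
        rw [Finset.filter_eq_empty_iff]
        intro e he hcond
        exact hvW (by
          simp only [hW, Finset.mem_filter, Finset.mem_univ, true_and]
          exact ⟨e, he, by simpa [htouches] using hcond⟩)
      rw [hfe]
      simp
  · intro u
    by_cases hvW : Sum.inr u ∈ W
    · have h0 := hvert (Sum.inr u) hvW
      have hfe : F.filter (fun e => touches (Sum.inr u) e)
          = F.filter (fun e => vR e = some u) := by
        apply Finset.filter_congr
        intro e _
        simp [htouches]
      rw [hfe] at h0
      exact h0
    · have hfe : F.filter (fun e => vR e = some u) = ∅ := by
        rw [Finset.filter_eq_empty_iff]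
        intro e he hcond
        exact hvW (by
          simp only [hW, Finset.mem_filter, Finset.mem_univ, true_and]
          exact ⟨e, he, by simpa [htouches] using hcond⟩)
      rw [hfe]
      simp


private lemma int_sum {s : Finset ε} {f : ε → ℝ} (h : ∀ e ∈ s, ∃ z : ℤ, f e = (z : ℝ)) :
    ∃ z : ℤ, ∑ e ∈ s, f e = (z : ℝ) := by
  classical
  induction s using Finset.induction_on with
  | empty => exact ⟨0, by simp⟩
  | @insert x s hx ih =>
      obtain ⟨z1, hz1⟩ := h _ (Finset.mem_insert_self _ _)
      obtain ⟨z2, hz2⟩ := ih fun e he => h e (Finset.mem_insert_of_mem he)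
      exact ⟨z1 + z2, by rw [Finset.sum_insert hx, hz1, hz2]; push_cast; ring⟩

private def Concl {VL VR : Type} [DecidableEq VL] [DecidableEq VR]
    (F : Finset ε) (vL : ε → Option VL) (vR : ε → Option VR) (a : ε → ℝ) : Prop :=
  (∃ D : ε → ℝ, (∃ e ∈ F, D e ≠ 0) ∧ (∀ e, e ∉ F → D e = 0) ∧
      (∀ v : VL, ∑ e ∈ F.filter (fun e => vL e = some v), D e = 0) ∧
      (∀ v : VR, ∑ e ∈ F.filter (fun e => vR e = some v), D e = 0)) ∨
    (∀ e ∈ F, ∃ z : ℤ, a e = (z : ℝ))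

private lemma concl_swap {VL VR : Type} [DecidableEq VL] [DecidableEq VR]
    {F : Finset ε} {vL : ε → Option VL} {vR : ε → Option VR} {a : ε → ℝ}
    (h : Concl F vR vL a) : Concl F vL vR a := by
  rcases h with ⟨D, h1, h2, h3, h4⟩ | h
  · exact Or.inl ⟨D, h1, h2, h4, h3⟩
  · exact Or.inr h

/-- Case: an edge `e0` whose right endpoint is unconstrained but left endpoint is `v0`.
Remove `e0` and deactivate `v0`. -/
private lemma case_b {VL VR : Type} [Fintype VL] [Fintype VR] [DecidableEq VL] [DecidableEq VR]
    {N : ℕ}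
    (IH : ∀ (VL' VR' : Type) [Fintype VL'] [Fintype VR'] [DecidableEq VL'] [DecidableEq VR'],
      ∀ (F : Finset ε), F.card ≤ N → ∀ (vL : ε → Option VL') (vR : ε → Option VR') (a : ε → ℝ),
      (∀ v, ∃ z : ℤ, ∑ e ∈ F.filter (fun e => vL e = some v), a e = (z : ℝ)) →
      (∀ v, ∃ z : ℤ, ∑ e ∈ F.filter (fun e => vR e = some v), a e = (z : ℝ)) →
      Concl F vL vR a)
    (F : Finset ε) (hcard : F.card ≤ N + 1)
    (vL : ε → Option VL) (vR : ε → Option VR) (a : ε → ℝ)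
    (hL : ∀ v, ∃ z : ℤ, ∑ e ∈ F.filter (fun e => vL e = some v), a e = (z : ℝ))
    (hR : ∀ v, ∃ z : ℤ, ∑ e ∈ F.filter (fun e => vR e = some v), a e = (z : ℝ))
    (e0 : ε) (he0 : e0 ∈ F) (v0 : VL) (hv0 : vL e0 = some v0) (hvR0 : vR e0 = none) :
    Concl F vL vR a := by
  classical
  set F' : Finset ε := F.erase e0 with hF'
  set vL' : ε → Option VL := fun e => if vL e = some v0 then none else vL e with hvL'
  have fact1 : ∀ v : VL, v ≠ v0 →
      F'.filter (fun e => vL' e = some v) = F.filter (fun e => vL e = some v) := by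
    intro v hv
    ext e
    simp only [Finset.mem_filter, Finset.mem_erase, hF', hvL']
    constructor
    · rintro ⟨⟨hne0, heF⟩, hcond⟩
      refine ⟨heF, ?_⟩
      by_cases h : vL e = some v0
      · rw [if_pos h] at hcond; exact absurd hcond (by simp)
      · rwa [if_neg h] at hcond
    · rintro ⟨heF, hcond⟩
      have hne0 : e ≠ e0 := by
        rintro rfl
        rw [hv0] at hcond
        exact hv (Option.some.inj hcond).symm
      refine ⟨⟨hne0, heF⟩, ?_⟩
      rw [if_neg, hcond]
      rw [hcond]
      simp [hv]
  have fact2 : F'.filter (fun e => vL' e = some v0) = ∅ := by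
    rw [Finset.filter_eq_empty_iff]
    intro e _
    simp only [hvL']
    split_ifs with h
    · simp
    · exact h
  have fact3 : ∀ w : VR,
      F'.filter (fun e => vR e = some w) = F.filter (fun e => vR e = some w) := by
    intro w
    ext e
    simp only [Finset.mem_filter, Finset.mem_erase, hF']
    constructor
    · rintro ⟨⟨-, heF⟩, hcond⟩; exact ⟨heF, hcond⟩
    · rintro ⟨heF, hcond⟩
      refine ⟨⟨?_, heF⟩, hcond⟩
      rintro rfl
      rw [hvR0] at hcond
      cases hcond
  have hins : F.filter (fun e => vL e = some v0)
      = insert e0 (F'.filter (fun e => vL e = some v0)) := by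
    conv_lhs => rw [← Finset.insert_erase he0]
    rw [Finset.filter_insert, if_pos hv0]
  have he0nF' : e0 ∉ F'.filter (fun e => vL e = some v0) :=
    fun h => Finset.notMem_erase e0 F (Finset.mem_filter.1 h).1
  have hcard' : F'.card ≤ N := by
    have h1 : F'.card = F.card - 1 := by rw [hF']; exact Finset.card_erase_of_mem he0
    have hpos : 1 ≤ F.card := Finset.card_pos.2 ⟨e0, he0⟩
    omega
  have hL' : ∀ v, ∃ z : ℤ, ∑ e ∈ F'.filter (fun e => vL' e = some v), a e = (z : ℝ) := by
    intro v
    by_cases hv : v = v0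
    · subst hv; rw [fact2]; exact ⟨0, by simp⟩
    · rw [fact1 v hv]; exact hL v
  have hR' : ∀ w, ∃ z : ℤ, ∑ e ∈ F'.filter (fun e => vR e = some w), a e = (z : ℝ) := by
    intro w; rw [fact3 w]; exact hR w
  rcases IH VL VR F' hcard' vL' vR a hL' hR' with ⟨D', hD'ne, hD'supp, hD'L, hD'R⟩ | hint
  · left
    set c : ℝ := ∑ e ∈ F'.filter (fun e => vL e = some v0), D' e with hc
    refine ⟨fun e => if e = e0 then -c else D' e, ?_, ?_, ?_, ?_⟩
    · obtain ⟨e', he'F', hne'⟩ := hD'ne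
      have he'ne0 : e' ≠ e0 := by
        intro h; subst h; exact Finset.notMem_erase e' F he'F'
      refine ⟨e', Finset.mem_of_mem_erase he'F', ?_⟩
      show (if e' = e0 then -c else D' e') ≠ 0
      rw [if_neg he'ne0]; exact hne'
    · intro e he
      have hne0 : e ≠ e0 := by intro h; subst h; exact he he0
      show (if e = e0 then -c else D' e) = 0
      rw [if_neg hne0]
      exact hD'supp e (fun h => he (Finset.mem_of_mem_erase h))
    · intro v
      by_cases hv : v = v0
      · subst hv
        rw [hins, Finset.sum_insert he0nF']
        have h1 : (if e0 = e0 then -c else D' e0) = -c := if_pos rfl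
        have h2 : ∑ e ∈ F'.filter (fun e => vL e = some v),
            (if e = e0 then -c else D' e) = c := by
          rw [hc]
          apply Finset.sum_congr rfl
          intro e he
          have hne : e ≠ e0 := by
            intro h; subst h
            exact Finset.notMem_erase e F (Finset.mem_filter.1 he).1
          show (if e = e0 then -c else D' e) = D' e
          rw [if_neg hne]
        rw [h1, h2]
        ring
      · rw [← fact1 v hv]
        have : ∑ e ∈ F'.filter (fun e => vL' e = some v),
            (if e = e0 then -c else D' e)
            = ∑ e ∈ F'.filter (fun e => vL' e = some v), D' e := by
          apply Finset.sum_congr rfl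
          intro e he
          have hne : e ≠ e0 := by
            intro h; subst h
            exact Finset.notMem_erase e F (Finset.mem_filter.1 he).1
          show (if e = e0 then -c else D' e) = D' e
          rw [if_neg hne]
        rw [this]
        exact hD'L v
    · intro w
      rw [← fact3 w]
      have : ∑ e ∈ F'.filter (fun e => vR e = some w),
          (if e = e0 then -c else D' e)
          = ∑ e ∈ F'.filter (fun e => vR e = some w), D' e := by
        apply Finset.sum_congr rfl
        intro e he
        have hne : e ≠ e0 := by
          intro h; subst h
          exact Finset.notMem_erase e F (Finset.mem_filter.1 he).1
        show (if e = e0 then -c else D' e) = D' e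
        rw [if_neg hne]
      rw [this]
      exact hD'R w
  · right
    have he0int : ∃ z : ℤ, a e0 = (z : ℝ) := by
      obtain ⟨z, hz⟩ := hL v0
      rw [hins, Finset.sum_insert he0nF'] at hz
      obtain ⟨z2, hz2⟩ := int_sum (s := F'.filter (fun e => vL e = some v0)) (f := a)
        (fun e he => hint e (Finset.filter_subset _ _ he))
      exact ⟨z - z2, by rw [hz2] at hz; push_cast; linarith⟩
    intro e he
    by_cases h : e = e0
    · subst h; exact he0int
    · exact hint e (Finset.mem_erase.2 ⟨h, he⟩)

/-- Case: a left vertex `v0` of degree one, with unique edge `e0`; both used and removed. -/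
private lemma case_c {VL VR : Type} [Fintype VL] [Fintype VR] [DecidableEq VL] [DecidableEq VR]
    {N : ℕ}
    (IH : ∀ (VL' VR' : Type) [Fintype VL'] [Fintype VR'] [DecidableEq VL'] [DecidableEq VR'],
      ∀ (F : Finset ε), F.card ≤ N → ∀ (vL : ε → Option VL') (vR : ε → Option VR') (a : ε → ℝ),
      (∀ v, ∃ z : ℤ, ∑ e ∈ F.filter (fun e => vL e = some v), a e = (z : ℝ)) →
      (∀ v, ∃ z : ℤ, ∑ e ∈ F.filter (fun e => vR e = some v), a e = (z : ℝ)) →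
      Concl F vL vR a)
    (F : Finset ε) (hcard : F.card ≤ N + 1)
    (vL : ε → Option VL) (vR : ε → Option VR) (a : ε → ℝ)
    (hL : ∀ v, ∃ z : ℤ, ∑ e ∈ F.filter (fun e => vL e = some v), a e = (z : ℝ))
    (hR : ∀ v, ∃ z : ℤ, ∑ e ∈ F.filter (fun e => vR e = some v), a e = (z : ℝ))
    (e0 : ε) (v0 : VL) (hfilt : F.filter (fun e => vL e = some v0) = {e0}) :
    Concl F vL vR a := by
  classical
  have he0 : e0 ∈ F := by
    have : e0 ∈ F.filter (fun e => vL e = some v0) := by rw [hfilt]; exact Finset.mem_singleton_self e0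
    exact (Finset.mem_filter.1 this).1
  have he0int : ∃ z : ℤ, a e0 = (z : ℝ) := by
    obtain ⟨z, hz⟩ := hL v0
    rw [hfilt, Finset.sum_singleton] at hz
    exact ⟨z, hz⟩
  set F' : Finset ε := F.erase e0 with hF'
  have hcard' : F'.card ≤ N := by
    have h1 : F'.card = F.card - 1 := by rw [hF']; exact Finset.card_erase_of_mem he0
    have hpos : 1 ≤ F.card := Finset.card_pos.2 ⟨e0, he0⟩
    omega
  -- removing the edge e0 (whose value is an integer) keeps all sums integral
  have hkeep : ∀ (p : ε → Prop) [DecidablePred p],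
      (∃ z : ℤ, ∑ e ∈ F.filter p, a e = (z : ℝ)) →
      ∃ z : ℤ, ∑ e ∈ F'.filter p, a e = (z : ℝ) := by
    intro p _ ⟨z, hz⟩
    rw [hF', Finset.filter_erase]
    by_cases h : e0 ∈ F.filter p
    · obtain ⟨z0, hz0⟩ := he0int
      refine ⟨z - z0, ?_⟩
      rw [Finset.sum_erase_eq_sub h, hz, hz0]
      push_cast; ring
    · rw [Finset.erase_eq_of_notMem h]
      exact ⟨z, hz⟩
  rcases IH VL VR F' hcard' vL vR a
      (fun v => hkeep _ (hL v)) (fun w => hkeep _ (hR w)) with ⟨D', h1, h2, h3, h4⟩ | hint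
  · left
    have hD'e0 : D' e0 = 0 := h2 e0 (Finset.notMem_erase e0 F)
    have hlift : ∀ (p : ε → Prop) [DecidablePred p],
        (∑ e ∈ F'.filter p, D' e = 0) → ∑ e ∈ F.filter p, D' e = 0 := by
      intro p _ h
      rw [hF', Finset.filter_erase] at h
      by_cases hmem : e0 ∈ F.filter p
      · rw [Finset.sum_erase_eq_sub hmem, hD'e0, sub_zero] at h
        exact h
      · rwa [Finset.erase_eq_of_notMem hmem] at h
    refine ⟨D', ?_, ?_, fun v => hlift _ (h3 v), fun w => hlift _ (h4 w)⟩
    · obtain ⟨e', he', hne⟩ := h1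
      exact ⟨e', Finset.mem_of_mem_erase he', hne⟩
    · intro e he
      exact h2 e (fun h => he (Finset.mem_of_mem_erase h))
  · right
    intro e he
    by_cases h : e = e0
    · subst h; exact he0int
    · exact hint e (Finset.mem_erase.2 ⟨h, he⟩)

end Comb2

section Comb3

variable {ε : Type} [DecidableEq ε]

private theorem comb_key : ∀ (N : ℕ) (VL VR : Type) [Fintype VL] [Fintype VR]
    [DecidableEq VL] [DecidableEq VR]
    (F : Finset ε) (_ : F.card ≤ N)
    (vL : ε → Option VL) (vR : ε → Option VR) (a : ε → ℝ),
    (∀ v : VL, ∃ z : ℤ, ∑ e ∈ F.filter (fun e => vL e = some v), a e = (z : ℝ)) →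
    (∀ v : VR, ∃ z : ℤ, ∑ e ∈ F.filter (fun e => vR e = some v), a e = (z : ℝ)) →
    Concl F vL vR a := by
  intro N
  induction N with
  | zero =>
      intro VL VR _ _ _ _ F hcard vL vR a _ _
      have : F = ∅ := Finset.card_eq_zero.1 (Nat.le_zero.1 hcard)
      subst this
      exact Or.inr (by simp)
  | succ N IH =>
      intro VL VR iL iR dL dR F hcard vL vR a hL hR
      classical
      by_cases hF : F = ∅
      · subst hF; exact Or.inr (by simp)
      by_cases hnone : ∃ e0 ∈ F, vL e0 = none ∨ vR e0 = none
      · obtain ⟨e0, he0, hor⟩ := hnone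
        cases hL0 : vL e0 with
        | none =>
          cases hR0 : vR e0 with
          | none =>
              -- both endpoints unconstrained: indicator perturbation
              left
              refine ⟨fun e => if e = e0 then 1 else 0, ⟨e0, he0, by simp⟩, ?_, ?_, ?_⟩
              · intro e he
                have : e ≠ e0 := by intro hh; subst hh; exact he he0
                simp [this]
              · intro v
                apply Finset.sum_eq_zero
                intro e he
                simp only [Finset.mem_filter] at he
                have : e ≠ e0 := by
                  intro hh; subst hh
                  rw [hL0] at he
                  simp at he
                simp [this]
              · intro w
                apply Finset.sum_eq_zero
                intro e he
                simp only [Finset.mem_filter] at he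
                have : e ≠ e0 := by
                  intro hh; subst hh
                  rw [hR0] at he
                  simp at he
                simp [this]
          | some w0 =>
              apply concl_swap
              exact case_b (fun VL' VR' _ _ _ _ => IH VL' VR') F hcard vR vL a hR hL
                e0 he0 w0 hR0 hL0
        | some v0 =>
          cases hR0 : vR e0 with
          | none =>
              exact case_b (fun VL' VR' _ _ _ _ => IH VL' VR') F hcard vL vR a hL hR
                e0 he0 v0 hL0 hR0
          | some w0 =>
              rw [hL0, hR0] at hor
              simp at hor
      · push_neg at hnone
        by_cases hcL : ∃ v0 : VL, (F.filter (fun e => vL e = some v0)).card = 1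
        · obtain ⟨v0, hv0⟩ := hcL
          obtain ⟨e0, he0⟩ := Finset.card_eq_one.1 hv0
          exact case_c (fun VL' VR' _ _ _ _ => IH VL' VR') F hcard vL vR a hL hR e0 v0 he0
        by_cases hcR : ∃ w0 : VR, (F.filter (fun e => vR e = some w0)).card = 1
        · obtain ⟨w0, hw0⟩ := hcR
          obtain ⟨e0, he0⟩ := Finset.card_eq_one.1 hw0
          exact concl_swap
            (case_c (fun VL' VR' _ _ _ _ => IH VL' VR') F hcard vR vL a hR hL e0 w0 he0)
        · push_neg at hcL hcR
          left
          apply case_d F (Finset.nonempty_iff_ne_empty.2 hF) vL vR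
          · intro e he
            rcases hL0 : vL e with _ | v
            · exact absurd hL0 (hnone e he).1
            · exact ⟨v, rfl⟩
          · intro e he
            rcases hR0 : vR e with _ | w
            · exact absurd hR0 (hnone e he).2
            · exact ⟨w, rfl⟩
          · exact hcL
          · exact hcR

end Comb3

section Bridge

variable {ε : Type} [DecidableEq ε]

private theorem comb_key' : ∀ (N : ℕ) (VL VR : Type) [Fintype VL] [Fintype VR]
    [DecidableEq VL] [DecidableEq VR]
    (F : Finset ε) (_ : F.card ≤ N)
    (vL : ε → Option VL) (vR : ε → Option VR) (a : ε → ℝ),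
    (∀ v : VL, ∃ z : ℤ, ∑ e ∈ F.filter (fun e => vL e = some v), a e = (z : ℝ)) →
    (∀ v : VR, ∃ z : ℤ, ∑ e ∈ F.filter (fun e => vR e = some v), a e = (z : ℝ)) →
    ((∃ D : ε → ℝ, (∃ e ∈ F, D e ≠ 0) ∧ (∀ e, e ∉ F → D e = 0) ∧
      (∀ v : VL, ∑ e ∈ F.filter (fun e => vL e = some v), D e = 0) ∧
      (∀ v : VR, ∑ e ∈ F.filter (fun e => vR e = some v), D e = 0)) ∨
    (∀ e ∈ F, ∃ z : ℤ, a e = (z : ℝ))) := by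
  intro N VL VR _ _ _ _ F hF vL vR a hL hR
  exact comb_key N VL VR F hF vL vR a hL hR

end Bridge


section MainProof

attribute [local instance] Matrix.normedAddCommGroup Matrix.normedSpace

theorem transportUk_eq_convexHull (n m k : ℕ) (hn : 0 < n) (hm : 0 < m) (hk : 0 < k)
    (r R : Fin n → ℕ) (c C : Fin m → ℕ)
    (hrR : ∀ i, r i ≤ R i) (hcC : ∀ j, c j ≤ C j) :
    {A ∈ transportU n m r R c C | ∑ i, ∑ j, A i j = (k : ℝ)} =
      convexHull ℝ {A ∈ transportU n m r R c C |
        (∑ i, ∑ j, A i j = (k : ℝ)) ∧ ∀ i j, A i j = 0 ∨ A i j = 1} := by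
  classical
  set S : Set (Matrix (Fin n) (Fin m) ℝ) :=
    {A ∈ transportU n m r R c C | ∑ i, ∑ j, A i j = (k : ℝ)} with hSdef
  set P : Set (Matrix (Fin n) (Fin m) ℝ) :=
    {A ∈ transportU n m r R c C |
      (∑ i, ∑ j, A i j = (k : ℝ)) ∧ ∀ i j, A i j = 0 ∨ A i j = 1} with hPdef
  show S = convexHull ℝ P
  have hPS : P ⊆ S := fun A hA => ⟨hA.1, hA.2.1⟩
  -- Convexity of S
  have hconv : Convex ℝ S := by
    intro A hA B hB s t hs ht hst
    obtain ⟨⟨hAbd, hArow, hAcol⟩, hAtot⟩ := hA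
    obtain ⟨⟨hBbd, hBrow, hBcol⟩, hBtot⟩ := hB
    have hentry : ∀ i j, (s • A + t • B) i j = s * A i j + t * B i j := by
      intro i j
      simp [Matrix.add_apply, Matrix.smul_apply, smul_eq_mul]
    have hrowsum : ∀ i, ∑ j, (s • A + t • B) i j
        = s * (∑ j, A i j) + t * (∑ j, B i j) := by
      intro i
      simp only [hentry]
      rw [Finset.sum_add_distrib, Finset.mul_sum, Finset.mul_sum]
    have hcolsum : ∀ j, ∑ i, (s • A + t • B) i j
        = s * (∑ i, A i j) + t * (∑ i, B i j) := by
      intro j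
      simp only [hentry]
      rw [Finset.sum_add_distrib, Finset.mul_sum, Finset.mul_sum]
    refine ⟨⟨fun i j => ?_, fun i => ?_, fun j => ?_⟩, ?_⟩
    · rw [hentry]
      constructor
      · nlinarith [(hAbd i j).1, (hBbd i j).1]
      · nlinarith [(hAbd i j).2, (hBbd i j).2]
    · rw [hrowsum i]
      constructor
      · nlinarith [(hArow i).1, (hBrow i).1]
      · nlinarith [(hArow i).2, (hBrow i).2]
    · rw [hcolsum j]
      constructor
      · nlinarith [(hAcol j).1, (hBcol j).1]
      · nlinarith [(hAcol j).2, (hBcol j).2]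
    · have : ∑ i, ∑ j, (s • A + t • B) i j
          = s * (∑ i, ∑ j, A i j) + t * (∑ i, ∑ j, B i j) := by
        rw [Finset.sum_congr rfl (fun i _ => hrowsum i), Finset.sum_add_distrib,
          Finset.mul_sum, Finset.mul_sum]
      rw [this, hAtot, hBtot]
      nlinarith
  -- Continuity of the relevant linear functionals
  have hcont_entry : ∀ i j, Continuous (fun A : Matrix (Fin n) (Fin m) ℝ => A i j) := by
    intro i j
    exact LinearMap.continuous_of_finiteDimensional
      ({ toFun := fun A : Matrix (Fin n) (Fin m) ℝ => A i j,
         map_add' := fun _ _ => rfl, map_smul' := fun _ _ => rfl } : _ →ₗ[ℝ] ℝ)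
  have hcont_row : ∀ i, Continuous (fun A : Matrix (Fin n) (Fin m) ℝ => ∑ j, A i j) :=
    fun i => continuous_finset_sum _ (fun j _ => hcont_entry i j)
  have hcont_col : ∀ j, Continuous (fun A : Matrix (Fin n) (Fin m) ℝ => ∑ i, A i j) :=
    fun j => continuous_finset_sum _ (fun i _ => hcont_entry i j)
  have hcont_tot : Continuous (fun A : Matrix (Fin n) (Fin m) ℝ => ∑ i, ∑ j, A i j) :=
    continuous_finset_sum _ (fun i _ => hcont_row i)
  -- S is closed
  have hSclosed : IsClosed S := by
    have h1 : S = (⋂ (i : Fin n) (j : Fin m),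
          (fun A : Matrix (Fin n) (Fin m) ℝ => A i j) ⁻¹' (Set.Icc 0 1)) ∩
        ((⋂ i : Fin n, (fun A : Matrix (Fin n) (Fin m) ℝ => ∑ j, A i j) ⁻¹'
            (Set.Icc (r i : ℝ) (R i : ℝ))) ∩
          ((⋂ j : Fin m, (fun A : Matrix (Fin n) (Fin m) ℝ => ∑ i, A i j) ⁻¹'
              (Set.Icc (c j : ℝ) (C j : ℝ))) ∩
            ((fun A : Matrix (Fin n) (Fin m) ℝ => ∑ i, ∑ j, A i j) ⁻¹' {(k : ℝ)}))) := by
      ext A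
      simp only [Set.mem_inter_iff, Set.mem_iInter, Set.mem_preimage, Set.mem_Icc,
        Set.mem_singleton_iff]
      constructor
      · rintro ⟨⟨h1, h2, h3⟩, h4⟩
        exact ⟨fun i j => h1 i j, h2, h3, h4⟩
      · rintro ⟨h1, h2, h3, h4⟩
        exact ⟨⟨fun i j => h1 i j, h2, h3⟩, h4⟩
    rw [h1]
    refine IsClosed.inter (isClosed_iInter (fun i => isClosed_iInter (fun j =>
        isClosed_Icc.preimage (hcont_entry i j)))) (IsClosed.inter
      (isClosed_iInter (fun i => isClosed_Icc.preimage (hcont_row i)))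
      (IsClosed.inter (isClosed_iInter (fun j => isClosed_Icc.preimage (hcont_col j)))
        (isClosed_singleton.preimage hcont_tot)))
  -- S is compact
  have hScompact : IsCompact S := by
    set G : ((Fin n × Fin m) → ℝ) → Matrix (Fin n) (Fin m) ℝ :=
      fun x => Matrix.of (fun i j => x (i, j)) with hG
    have hGlin : Continuous G := by
      exact LinearMap.continuous_of_finiteDimensional
        ({ toFun := G, map_add' := fun _ _ => rfl, map_smul' := fun _ _ => rfl } :
          ((Fin n × Fin m) → ℝ) →ₗ[ℝ] Matrix (Fin n) (Fin m) ℝ)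
    have hK : IsCompact (Set.univ.pi (fun _ : Fin n × Fin m => Set.Icc (0:ℝ) 1)) :=
      isCompact_univ_pi (fun _ => isCompact_Icc)
    apply (hK.image hGlin).of_isClosed_subset hSclosed
    intro A hA
    refine ⟨fun e => A e.1 e.2, ?_, ?_⟩
    · intro e _
      exact (hA.1.1 e.1 e.2)
    · ext i j
      simp [hG]
  -- P is finite
  have hPfin : P.Finite := by
    apply Set.Finite.subset (Set.finite_range
      (fun b : Fin n → Fin m → Bool => (Matrix.of (fun i j => if b i j then (1:ℝ) else 0))))
    rintro A ⟨-, -, h01⟩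
    refine ⟨fun i j => if A i j = 1 then true else false, ?_⟩
    ext i j
    rcases h01 i j with h | h <;> simp [h]
  -- extreme points of S are 0-1 matrices
  have hext : S.extremePoints ℝ ⊆ P := by
    intro A hAex
    have hAS : A ∈ S := hAex.1
    obtain ⟨⟨hbd, hrow, hcol⟩, htot⟩ := hAS
    refine ⟨hAex.1.1, hAex.1.2, ?_⟩
    by_contra hcon
    push_neg at hcon
    obtain ⟨i0, j0, h00, h01⟩ := hcon
    -- fractional entries
    set F : Finset (Fin n × Fin m) :=
      Finset.univ.filter (fun e => A e.1 e.2 ≠ 0 ∧ A e.1 e.2 ≠ 1) with hFdef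
    set TR : Fin n → Prop :=
      fun i => (∑ j, A i j = (r i : ℝ)) ∨ (∑ j, A i j = (R i : ℝ)) with hTRdef
    set TC : Fin m → Prop :=
      fun j => (∑ i, A i j = (c j : ℝ)) ∨ (∑ i, A i j = (C j : ℝ)) with hTCdef
    set vL : Fin n × Fin m → Option (Fin n ⊕ Unit) :=
      fun e => if TR e.1 then some (Sum.inl e.1) else some (Sum.inr ()) with hvLdef
    set vR : Fin n × Fin m → Option (Fin m) :=
      fun e => if TC e.2 then some e.2 else none with hvRdef
    set a : Fin n × Fin m → ℝ := fun e => A e.1 e.2 with hadef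
    have hmemF : ∀ e : Fin n × Fin m, e ∈ F ↔ (A e.1 e.2 ≠ 0 ∧ A e.1 e.2 ≠ 1) := by
      intro e
      simp [hFdef]
    -- summation helpers
    have hUrow : ∀ (B : Fin n × Fin m → ℝ) (i : Fin n),
        ∑ e ∈ Finset.univ.filter (fun e : Fin n × Fin m => e.1 = i), B e = ∑ j, B (i, j) := by
      intro B i
      rw [Finset.sum_filter, Fintype.sum_prod_type, Finset.sum_comm]
      apply Finset.sum_congr rfl
      intro j _
      rw [Finset.sum_ite_eq' Finset.univ i (fun i' => B (i', j))]
      simp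
    have hUcol : ∀ (B : Fin n × Fin m → ℝ) (j : Fin m),
        ∑ e ∈ Finset.univ.filter (fun e : Fin n × Fin m => e.2 = j), B e = ∑ i, B (i, j) := by
      intro B j
      rw [Finset.sum_filter, Fintype.sum_prod_type]
      apply Finset.sum_congr rfl
      intro i _
      rw [Finset.sum_ite_eq' Finset.univ j (fun j' => B (i, j'))]
      simp
    have hsplit_row : ∀ (B : Fin n × Fin m → ℝ) (i : Fin n),
        ∑ j, B (i, j) = (∑ e ∈ F.filter (fun e => e.1 = i), B e)
          + ∑ e ∈ Finset.univ.filter (fun e : Fin n × Fin m => e.1 = i ∧ e ∉ F), B e := by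
      intro B i
      rw [← hUrow B i,
        ← Finset.sum_filter_add_sum_filter_not
          (Finset.univ.filter (fun e : Fin n × Fin m => e.1 = i)) (fun e => e ∈ F) B]
      congr 1
      · apply Finset.sum_congr _ (fun _ _ => rfl)
        ext e
        simp only [Finset.mem_filter, Finset.mem_univ, true_and]
        all_goals tauto
      · apply Finset.sum_congr _ (fun _ _ => rfl)
        ext e
        simp only [Finset.mem_filter, Finset.mem_univ, true_and]
        all_goals tauto
    have hsplit_col : ∀ (B : Fin n × Fin m → ℝ) (j : Fin m),
        ∑ i, B (i, j) = (∑ e ∈ F.filter (fun e => e.2 = j), B e)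
          + ∑ e ∈ Finset.univ.filter (fun e : Fin n × Fin m => e.2 = j ∧ e ∉ F), B e := by
      intro B j
      rw [← hUcol B j,
        ← Finset.sum_filter_add_sum_filter_not
          (Finset.univ.filter (fun e : Fin n × Fin m => e.2 = j)) (fun e => e ∈ F) B]
      congr 1
      · apply Finset.sum_congr _ (fun _ _ => rfl)
        ext e
        simp only [Finset.mem_filter, Finset.mem_univ, true_and]
        all_goals tauto
      · apply Finset.sum_congr _ (fun _ _ => rfl)
        ext e
        simp only [Finset.mem_filter, Finset.mem_univ, true_and]
        all_goals tauto
    -- integrality of entries outside F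
    have hnotF : ∀ e : Fin n × Fin m, e ∉ F → ∃ z : ℤ, a e = (z : ℝ) := by
      intro e he
      rcases eq_or_ne (A e.1 e.2) 0 with h | h
      · exact ⟨0, by simp [hadef, h]⟩
      · refine ⟨1, ?_⟩
        by_contra h1
        exact he ((hmemF e).2 ⟨h, by simpa [hadef] using h1⟩)
    -- integrality of tight row sums restricted to F
    have hrowInt : ∀ i : Fin n, TR i →
        ∃ z : ℤ, ∑ e ∈ F.filter (fun e => e.1 = i), a e = (z : ℝ) := by
      intro i hTRi
      obtain ⟨zrow, hzrow⟩ : ∃ z : ℤ, ∑ j, A i j = (z : ℝ) := by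
        rcases hTRi with h | h
        · exact ⟨(r i : ℤ), by rw [h]; push_cast; ring⟩
        · exact ⟨(R i : ℤ), by rw [h]; push_cast; ring⟩
      obtain ⟨z2, hz2⟩ := int_sum
        (s := Finset.univ.filter (fun e : Fin n × Fin m => e.1 = i ∧ e ∉ F)) (f := a)
        (fun e he => hnotF e (Finset.mem_filter.1 he).2.2)
      refine ⟨zrow - z2, ?_⟩
      have hs := hsplit_row a i
      have ha' : (∑ j, a (i, j)) = ∑ j, A i j := rfl
      rw [ha', hzrow, hz2] at hs
      push_cast
      linarith
    have hcolInt : ∀ j : Fin m, TC j →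
        ∃ z : ℤ, ∑ e ∈ F.filter (fun e => e.2 = j), a e = (z : ℝ) := by
      intro j hTCj
      obtain ⟨zcol, hzcol⟩ : ∃ z : ℤ, ∑ i, A i j = (z : ℝ) := by
        rcases hTCj with h | h
        · exact ⟨(c j : ℤ), by rw [h]; push_cast; ring⟩
        · exact ⟨(C j : ℤ), by rw [h]; push_cast; ring⟩
      obtain ⟨z2, hz2⟩ := int_sum
        (s := Finset.univ.filter (fun e : Fin n × Fin m => e.2 = j ∧ e ∉ F)) (f := a)
        (fun e he => hnotF e (Finset.mem_filter.1 he).2.2)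
      refine ⟨zcol - z2, ?_⟩
      have hs := hsplit_col a j
      have ha' : (∑ i, a (i, j)) = ∑ i, A i j := rfl
      rw [ha', hzcol, hz2] at hs
      push_cast
      linarith
    -- total over F is an integer
    have hFtotal : ∃ z : ℤ, ∑ e ∈ F, a e = (z : ℝ) := by
      have h1 : ∑ e : Fin n × Fin m, a e = (k : ℝ) := by
        rw [Fintype.sum_prod_type]
        exact htot
      have h2 := Finset.sum_filter_add_sum_filter_not
        (Finset.univ : Finset (Fin n × Fin m)) (fun e => e ∈ F) a
      have h3 : Finset.univ.filter (fun e : Fin n × Fin m => e ∈ F) = F := by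
        ext e; simp
      rw [h3, h1] at h2
      obtain ⟨z2, hz2⟩ := int_sum
        (s := Finset.univ.filter (fun e : Fin n × Fin m => e ∉ F)) (f := a)
        (fun e he => hnotF e (Finset.mem_filter.1 he).2)
      refine ⟨k - z2, ?_⟩
      rw [hz2] at h2
      push_cast
      linarith
    -- filter identities for vL, vR
    have hfiltL : ∀ i : Fin n, TR i →
        F.filter (fun e => vL e = some (Sum.inl i)) = F.filter (fun e => e.1 = i) := by
      intro i hTRi
      ext e
      simp only [Finset.mem_filter]
      constructor
      · rintro ⟨he, hcond⟩
        refine ⟨he, ?_⟩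
        simp only [hvLdef] at hcond
        split_ifs at hcond with h
        all_goals simp_all
      · rintro ⟨he, hcond⟩
        refine ⟨he, ?_⟩
        simp only [hvLdef]
        rw [hcond, if_pos hTRi]
    have hfiltLe : ∀ i : Fin n, ¬ TR i →
        F.filter (fun e => vL e = some (Sum.inl i)) = ∅ := by
      intro i hTRi
      rw [Finset.filter_eq_empty_iff]
      intro e _
      simp only [hvLdef]
      split_ifs with h
      · intro hcond
        simp only [Option.some.injEq, Sum.inl.injEq] at hcond
        exact hTRi (hcond ▸ h)
      · simp
    have hfiltStar : F.filter (fun e => vL e = some (Sum.inr ()))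
        = F.filter (fun e => ¬ TR e.1) := by
      ext e
      simp only [Finset.mem_filter]
      constructor
      · rintro ⟨he, hcond⟩
        refine ⟨he, ?_⟩
        simp only [hvLdef] at hcond
        split_ifs at hcond with h
        · simp at hcond
        · exact h
      · rintro ⟨he, hcond⟩
        refine ⟨he, ?_⟩
        simp only [hvLdef]
        rw [if_neg hcond]
    have hfiltR : ∀ j : Fin m, TC j →
        F.filter (fun e => vR e = some j) = F.filter (fun e => e.2 = j) := by
      intro j hTCj
      ext e
      simp only [Finset.mem_filter]
      constructor
      · rintro ⟨he, hcond⟩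
        refine ⟨he, ?_⟩
        simp only [hvRdef] at hcond
        split_ifs at hcond with h
        all_goals simp_all
      · rintro ⟨he, hcond⟩
        refine ⟨he, ?_⟩
        simp only [hvRdef]
        rw [hcond, if_pos hTCj]
    have hfiltRe : ∀ j : Fin m, ¬ TC j →
        F.filter (fun e => vR e = some j) = ∅ := by
      intro j hTCj
      rw [Finset.filter_eq_empty_iff]
      intro e _
      simp only [hvRdef]
      split_ifs with h
      · intro hcond
        simp only [Option.some.injEq] at hcond
        exact hTCj (hcond ▸ h)
      · simp
    -- the sum over tight rows part of F
    have hTRfib : ∀ (B : Fin n × Fin m → ℝ),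
        ∑ e ∈ F.filter (fun e => TR e.1), B e
          = ∑ i ∈ Finset.univ.filter TR, ∑ e ∈ F.filter (fun e => e.1 = i), B e := by
      intro B
      rw [← Finset.sum_fiberwise_of_maps_to (g := Prod.fst)
        (t := Finset.univ.filter TR) (f := B)
        (fun e he => by simp [Finset.mem_filter, (Finset.mem_filter.1 he).2])]
      apply Finset.sum_congr rfl
      intro i hi
      apply Finset.sum_congr _ (fun _ _ => rfl)
      ext e
      simp only [Finset.mem_filter, Finset.mem_univ, true_and] at hi ⊢
      constructor
      · rintro ⟨⟨he, -⟩, h2⟩; exact ⟨he, h2⟩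
      · rintro ⟨he, h2⟩; exact ⟨⟨he, h2 ▸ hi⟩, h2⟩
    -- hypotheses of the combinatorial lemma
    have hL : ∀ v : Fin n ⊕ Unit,
        ∃ z : ℤ, ∑ e ∈ F.filter (fun e => vL e = some v), a e = (z : ℝ) := by
      rintro (i | u)
      · by_cases hTRi : TR i
        · rw [hfiltL i hTRi]
          exact hrowInt i hTRi
        · rw [hfiltLe i hTRi]
          exact ⟨0, by simp⟩
      · cases u
        rw [hfiltStar]
        obtain ⟨z1, hz1⟩ := hFtotal
        have h2 := Finset.sum_filter_add_sum_filter_not F (fun e => TR e.1) a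
        obtain ⟨z2, hz2⟩ : ∃ z : ℤ, ∑ e ∈ F.filter (fun e => TR e.1), a e = (z : ℝ) := by
          rw [hTRfib a]
          exact int_sum (fun i hi => hrowInt i (Finset.mem_filter.1 hi).2)
        refine ⟨z1 - z2, ?_⟩
        rw [hz2, hz1] at h2
        push_cast
        linarith
    have hR : ∀ w : Fin m,
        ∃ z : ℤ, ∑ e ∈ F.filter (fun e => vR e = some w), a e = (z : ℝ) := by
      intro j
      by_cases hTCj : TC j
      · rw [hfiltR j hTCj]
        exact hcolInt j hTCj
      · rw [hfiltRe j hTCj]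
        exact ⟨0, by simp⟩
    -- apply the combinatorial lemma
    rcases comb_key' F.card (Fin n ⊕ Unit) (Fin m) F le_rfl vL vR a hL hR with
      ⟨D, hDne, hDsupp, hDL, hDR⟩ | hint
    · -- a nonzero admissible perturbation: contradiction with extremality
      set Dmat : Matrix (Fin n) (Fin m) ℝ := Matrix.of (fun i j => D (i, j)) with hDmat
      have hDentry : ∀ e : Fin n × Fin m, Dmat e.1 e.2 = D e := by
        intro e
        simp [hDmat]
      have hrowD : ∀ i, ∑ j, Dmat i j = ∑ e ∈ F.filter (fun e => e.1 = i), D e := by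
        intro i
        have hs := hsplit_row D i
        have hz : ∑ e ∈ Finset.univ.filter (fun e : Fin n × Fin m => e.1 = i ∧ e ∉ F),
            D e = 0 :=
          Finset.sum_eq_zero (fun e he => hDsupp e (Finset.mem_filter.1 he).2.2)
        rw [hz, add_zero] at hs
        exact hs
      have hcolD : ∀ j, ∑ i, Dmat i j = ∑ e ∈ F.filter (fun e => e.2 = j), D e := by
        intro j
        have hs := hsplit_col D j
        have hz : ∑ e ∈ Finset.univ.filter (fun e : Fin n × Fin m => e.2 = j ∧ e ∉ F),
            D e = 0 :=
          Finset.sum_eq_zero (fun e he => hDsupp e (Finset.mem_filter.1 he).2.2)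
        rw [hz, add_zero] at hs
        exact hs
      have hrowD0 : ∀ i, TR i → ∑ j, Dmat i j = 0 := by
        intro i hTRi
        rw [hrowD i, ← hfiltL i hTRi]
        exact hDL (Sum.inl i)
      have hcolD0 : ∀ j, TC j → ∑ i, Dmat i j = 0 := by
        intro j hTCj
        rw [hcolD j, ← hfiltR j hTCj]
        exact hDR j
      have htotD : ∑ i, ∑ j, Dmat i j = 0 := by
        have h1 : ∑ e ∈ F, D e = 0 := by
          rw [← Finset.sum_filter_add_sum_filter_not F (fun e => TR e.1) D]
          have hA1 : ∑ e ∈ F.filter (fun e => TR e.1), D e = 0 := by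
            rw [hTRfib D]
            apply Finset.sum_eq_zero
            intro i hi
            rw [← hfiltL i (Finset.mem_filter.1 hi).2]
            exact hDL (Sum.inl i)
          have hA2 : ∑ e ∈ F.filter (fun e => ¬ TR e.1), D e = 0 := by
            rw [← hfiltStar]
            exact hDL (Sum.inr ())
          rw [hA1, hA2, add_zero]
        have h2 : ∑ i, ∑ j, Dmat i j = ∑ e : Fin n × Fin m, D e := by
          rw [Fintype.sum_prod_type]
          rfl
        have h3 := Finset.sum_filter_add_sum_filter_not
          (Finset.univ : Finset (Fin n × Fin m)) (fun e => e ∈ F) D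
        have h4 : Finset.univ.filter (fun e : Fin n × Fin m => e ∈ F) = F := by
          ext e; simp
        have h5 : ∑ e ∈ Finset.univ.filter (fun e : Fin n × Fin m => e ∉ F), D e = 0 :=
          Finset.sum_eq_zero (fun e he => hDsupp e (Finset.mem_filter.1 he).2)
        rw [h4, h1, h5] at h3
        rw [h2, ← h3, add_zero]
      have hfrac : ∀ e ∈ F, 0 < A e.1 e.2 ∧ A e.1 e.2 < 1 := by
        intro e he
        obtain ⟨hne0, hne1⟩ := (hmemF e).1 he
        exact ⟨((hbd e.1 e.2).1).lt_of_ne (Ne.symm hne0), ((hbd e.1 e.2).2).lt_of_ne hne1⟩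
      have hrowfree : ∀ i, ¬ TR i → (r i : ℝ) < ∑ j, A i j ∧ ∑ j, A i j < (R i : ℝ) := by
        intro i hi
        simp only [hTRdef, not_or] at hi
        exact ⟨((hrow i).1).lt_of_ne (Ne.symm hi.1), ((hrow i).2).lt_of_ne hi.2⟩
      have hcolfree : ∀ j, ¬ TC j → (c j : ℝ) < ∑ i, A i j ∧ ∑ i, A i j < (C j : ℝ) := by
        intro j hj
        simp only [hTCdef, not_or] at hj
        exact ⟨((hcol j).1).lt_of_ne (Ne.symm hj.1), ((hcol j).2).lt_of_ne hj.2⟩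
      -- the perturbed matrices stay in S for small t
      have hev : ∀ᶠ t in nhds (0 : ℝ), A + t • Dmat ∈ S := by
        have hval : ∀ (t : ℝ) (i : Fin n) (j : Fin m),
            (A + t • Dmat) i j = A i j + t * Dmat i j := by
          intro t i j
          simp [Matrix.add_apply, Matrix.smul_apply, smul_eq_mul]
        have hvalrow : ∀ (t : ℝ) (i : Fin n),
            ∑ j, (A + t • Dmat) i j = (∑ j, A i j) + t * ∑ j, Dmat i j := by
          intro t i
          simp only [hval]
          rw [Finset.sum_add_distrib, Finset.mul_sum]
        have hvalcol : ∀ (t : ℝ) (j : Fin m),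
            ∑ i, (A + t • Dmat) i j = (∑ i, A i j) + t * ∑ i, Dmat i j := by
          intro t j
          simp only [hval]
          rw [Finset.sum_add_distrib, Finset.mul_sum]
        have hent : ∀ e : Fin n × Fin m, ∀ᶠ t in nhds (0 : ℝ),
            0 ≤ (A + t • Dmat) e.1 e.2 ∧ (A + t • Dmat) e.1 e.2 ≤ 1 := by
          intro e
          by_cases he : e ∈ F
          · have hcontf : Continuous (fun t : ℝ => A e.1 e.2 + t * Dmat e.1 e.2) :=
              continuous_const.add (continuous_id.mul continuous_const)
            have h0 : (A e.1 e.2 + (0:ℝ) * Dmat e.1 e.2) ∈ Set.Ioo (0:ℝ) 1 := by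
              simpa using hfrac e he
            have := (hcontf.continuousAt (x := 0)).eventually_mem
              (isOpen_Ioo.mem_nhds h0)
            filter_upwards [this] with t ht
            rw [hval t e.1 e.2]
            exact ⟨le_of_lt ht.1, le_of_lt ht.2⟩
          · apply Filter.Eventually.of_forall
            intro t
            rw [hval t e.1 e.2, hDentry e, hDsupp e he, mul_zero, add_zero]
            exact hbd e.1 e.2
        have hrowsev : ∀ i : Fin n, ∀ᶠ t in nhds (0 : ℝ),
            (r i : ℝ) ≤ ∑ j, (A + t • Dmat) i j ∧ ∑ j, (A + t • Dmat) i j ≤ (R i : ℝ) := by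
          intro i
          by_cases hTRi : TR i
          · apply Filter.Eventually.of_forall
            intro t
            rw [hvalrow t i, hrowD0 i hTRi, mul_zero, add_zero]
            exact hrow i
          · have hcontf : Continuous (fun t : ℝ => (∑ j, A i j) + t * ∑ j, Dmat i j) :=
              continuous_const.add (continuous_id.mul continuous_const)
            have h0 : ((∑ j, A i j) + (0:ℝ) * ∑ j, Dmat i j)
                ∈ Set.Ioo (r i : ℝ) (R i : ℝ) := by
              simpa using hrowfree i hTRi
            have := (hcontf.continuousAt (x := 0)).eventually_mem
              (isOpen_Ioo.mem_nhds h0)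
            filter_upwards [this] with t ht
            rw [hvalrow t i]
            exact ⟨le_of_lt ht.1, le_of_lt ht.2⟩
        have hcolsev : ∀ j : Fin m, ∀ᶠ t in nhds (0 : ℝ),
            (c j : ℝ) ≤ ∑ i, (A + t • Dmat) i j ∧ ∑ i, (A + t • Dmat) i j ≤ (C j : ℝ) := by
          intro j
          by_cases hTCj : TC j
          · apply Filter.Eventually.of_forall
            intro t
            rw [hvalcol t j, hcolD0 j hTCj, mul_zero, add_zero]
            exact hcol j
          · have hcontf : Continuous (fun t : ℝ => (∑ i, A i j) + t * ∑ i, Dmat i j) :=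
              continuous_const.add (continuous_id.mul continuous_const)
            have h0 : ((∑ i, A i j) + (0:ℝ) * ∑ i, Dmat i j)
                ∈ Set.Ioo (c j : ℝ) (C j : ℝ) := by
              simpa using hcolfree j hTCj
            have := (hcontf.continuousAt (x := 0)).eventually_mem
              (isOpen_Ioo.mem_nhds h0)
            filter_upwards [this] with t ht
            rw [hvalcol t j]
            exact ⟨le_of_lt ht.1, le_of_lt ht.2⟩
        have htotev : ∀ t : ℝ, ∑ i, ∑ j, (A + t • Dmat) i j = (k : ℝ) := by
          intro t
          have : ∑ i, ∑ j, (A + t • Dmat) i j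
              = (∑ i, ∑ j, A i j) + t * ∑ i, ∑ j, Dmat i j := by
            rw [Finset.sum_congr rfl (fun i (_ : i ∈ Finset.univ) => hvalrow t i),
              Finset.sum_add_distrib, Finset.mul_sum]
          rw [this, htotD, mul_zero, add_zero, htot]
        have hall1 := Filter.eventually_all.2 hent
        have hall2 := Filter.eventually_all.2 hrowsev
        have hall3 := Filter.eventually_all.2 hcolsev
        filter_upwards [hall1, hall2, hall3] with t h1 h2 h3
        exact ⟨⟨fun i j => h1 (i, j), h2, h3⟩, htotev t⟩
      rw [Metric.eventually_nhds_iff] at hev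
      obtain ⟨δ, hδ, hball⟩ := hev
      have hd1 : dist (δ/2) (0:ℝ) < δ := by
        rw [Real.dist_eq, sub_zero, abs_of_pos (by linarith)]
        linarith
      have hd2 : dist (-(δ/2)) (0:ℝ) < δ := by
        rw [Real.dist_eq, sub_zero, abs_neg, abs_of_pos (by linarith)]
        linarith
      have hmem1 : A + (δ/2) • Dmat ∈ S := hball hd1
      have hmem2 : A + (-(δ/2)) • Dmat ∈ S := hball hd2
      have hseg : A ∈ openSegment ℝ (A + (δ/2) • Dmat) (A + (-(δ/2)) • Dmat) := by
        refine ⟨1/2, 1/2, by norm_num, by norm_num, by norm_num, ?_⟩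
        module
      have hconeq := hAex.2 hmem1 hmem2 hseg
      have hzero : Dmat = 0 := by
        have h2 : (δ/2) • Dmat = 0 := by
          have := hconeq
          rwa [add_eq_left] at this
        rcases smul_eq_zero.1 h2 with h | h
        · exact absurd h (by positivity)
        · exact h
      obtain ⟨e0, he0F, he0ne⟩ := hDne
      apply he0ne
      rw [← hDentry e0, hzero]
      rfl
    · -- all entries of F are integers: contradicts fractionality of (i0, j0)
      have h00F : (i0, j0) ∈ F := (hmemF (i0, j0)).2 ⟨h00, h01⟩
      obtain ⟨z, hz⟩ := hint _ h00F
      have hz' : A i0 j0 = (z : ℝ) := hz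
      have hzge : (0 : ℤ) ≤ z := by
        have := (hbd i0 j0).1
        rw [hz'] at this
        exact_mod_cast this
      have hzle : z ≤ 1 := by
        have := (hbd i0 j0).2
        rw [hz'] at this
        exact_mod_cast this
      interval_cases z
      · exact h00 (by rw [hz']; simp)
      · exact h01 (by rw [hz']; simp)
  -- assemble
  have hKM : closure (convexHull ℝ (S.extremePoints ℝ)) = S :=
    by haveI : LocallyConvexSpace ℝ (Matrix (Fin n) (Fin m) ℝ) := NormedSpace.toLocallyConvexSpace; exact closure_convexHull_extremePoints hScompact hconv
  apply Set.Subset.antisymm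
  · calc S = closure (convexHull ℝ (S.extremePoints ℝ)) := hKM.symm
    _ ⊆ closure (convexHull ℝ P) := closure_mono (convexHull_mono hext)
    _ = convexHull ℝ P := (hPfin.isClosed_convexHull ℝ).closure_eq
  · exact convexHull_min hPS hconv

end MainProof
end

section
/- Every extreme point of the set of n×n doubly stochastic matrices is a permutation matrix. -/
theorem extremePoint_doublyStochastic_isPermMatrix (n : ℕ)
    (A : Matrix (Fin n) (Fin n) ℝ)
    (hA : A ∈ Set.extremePoints ℝ
      {B : Matrix (Fin n) (Fin n) ℝ |
        (∀ i j, 0 ≤ B i j) ∧ (∀ i, ∑ j, B i j = 1) ∧ (∀ j, ∑ i, B i j = 1)}) :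
    ∃ σ : Equiv.Perm (Fin n), ∀ i j, A i j = if σ i = j then 1 else 0 := by
  have hset : {B : Matrix (Fin n) (Fin n) ℝ |
        (∀ i j, 0 ≤ B i j) ∧ (∀ i, ∑ j, B i j = 1) ∧ (∀ j, ∑ i, B i j = 1)}
      = (doublyStochastic ℝ (Fin n) : Set (Matrix (Fin n) (Fin n) ℝ)) := by
    ext B
    simp [mem_doublyStochastic_iff_sum]
  rw [hset, doublyStochastic_eq_convexHull_permMatrix] at hA
  obtain ⟨σ, hσ⟩ := extremePoints_convexHull_subset hA
  refine ⟨σ, fun i j => ?_⟩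
  rw [← hσ]
  simp [Equiv.Perm.permMatrix, PEquiv.toMatrix, Equiv.toPEquiv, eq_comm]
end
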